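/- arXiv:1002.4510 — 5 statements merged into one kernel-verified Lean document; each statement's English description precedes it below -/
import Mathlib

section
/- Let C be a nontrivial linear [n,k,d]_q code whose nonzero codewords take exactly two distinct Hamming weights w_1 and w_2 = d, with w_1 = n. Then C is monomially equivalent to a code spanned by the all-one vector of 𝔽_q^n together with the set {(v|0) : v ∈ E}, where E ⊆ 𝔽_q^{n−1} is an equidistant linear [n−1, k−1, d]_q code with the property that for every nonzero codeword v ∈ E and every symbol α ∈ 𝔽_q, the number of coordinates of the vector (v|0) ∈ 𝔽_q^n equal to α is either exactly n − d or zero. -/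
open Finset

variable {F : Type*} [Field F] [Fintype F] [DecidableEq F]

/-- The Hamming distance from a vector to a code. -/
noncomputable def distToCode {ι : Type*} [Fintype ι] (C : Set (ι → F)) (x : ι → F) : ℕ :=
  sInf {d : ℕ | ∃ c ∈ C, hammingDist x c = d}

/-- The covering radius of a code: the maximal distance of a vector to the code. -/
noncomputable def coveringRadius {ι : Type*} [Fintype ι] (C : Set (ι → F)) : ℕ :=
  sSup {d : ℕ | ∃ x : ι → F, distToCode C x = d}

/-- `C` has intersection numbers `b l` (number of neighbours one step further from the code)
and `c l` (number of neighbours one step closer to the code), for every `x` at distance `l`. -/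
def HasIntersectionNumbers {ι : Type*} [Fintype ι] (C : Set (ι → F)) (b c : ℕ → ℕ) : Prop :=
  ∀ l : ℕ, ∀ x : ι → F, distToCode C x = l →
    Nat.card {y : ι → F | hammingDist x y = 1 ∧ distToCode C y = l + 1} = b l ∧
    Nat.card {y : ι → F | hammingDist x y = 1 ∧ distToCode C y + 1 = l} = c l

/-- A code is completely regular if it admits intersection numbers. -/
def IsCompletelyRegular {ι : Type*} [Fintype ι] (C : Set (ι → F)) : Prop :=
  ∃ b c : ℕ → ℕ, HasIntersectionNumbers C b c

/-- The minimum distance of a code. -/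
noncomputable def minDist {ι : Type*} [Fintype ι] (C : Set (ι → F)) : ℕ :=
  sInf {d : ℕ | ∃ x ∈ C, ∃ y ∈ C, x ≠ y ∧ hammingDist x y = d}

/-- A code is equidistant if any two distinct codewords are at the same Hamming distance. -/
def IsEquidistant {ι : Type*} [Fintype ι] (C : Set (ι → F)) : Prop :=
  ∃ d : ℕ, ∀ x ∈ C, ∀ y ∈ C, x ≠ y → hammingDist x y = d

/-- The dual of a code, with respect to the standard bilinear form. -/
def dualSet {ι : Type*} [Fintype ι] (C : Set (ι → F)) : Set (ι → F) :=
  {y | ∀ x ∈ C, ∑ i, x i * y i = 0}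

/-- A code of length `n` is antipodal if it contains a word of Hamming weight `n`. -/
def IsAntipodal {ι : Type*} [Fintype ι] (C : Set (ι → F)) : Prop :=
  ∃ v ∈ C, hammingNorm v = Fintype.card ι

/-- A monomial transformation: a coordinate permutation composed with multiplication of
each coordinate by a nonzero scalar. -/
def IsMonomialMap {ι : Type*} (φ : (ι → F) → (ι → F)) : Prop :=
  ∃ (π : Equiv.Perm ι) (s : ι → Fˣ), ∀ x i, φ x i = (s i : F) * x (π i)

/-- Two codes are monomially equivalent if one is the image of the other under a bijection of
coordinates together with multiplication of each coordinate by a nonzero scalar. -/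
def MonomiallyEquivalent {ι κ : Type*} (C : Set (ι → F)) (D : Set (κ → F)) : Prop :=
  ∃ (e : ι ≃ κ) (s : ι → Fˣ),
    (fun (x : ι → F) (j : κ) => (s (e.symm j) : F) * x (e.symm j)) '' C = D

/-- The orbit, under the action of `Aut C` on the cosets of `C`, of the coset of `v`
(realised as the union of all cosets in the orbit). -/
def cosetOrbit {ι : Type*} (C : Submodule F (ι → F)) (v : ι → F) : Set (ι → F) :=
  {w | ∃ φ : (ι → F) → (ι → F), IsMonomialMap φ ∧
    φ '' (C : Set (ι → F)) = (C : Set (ι → F)) ∧ φ v - w ∈ C}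

/-- The number of orbits of the action of `Aut C` on the cosets of `C`. -/
noncomputable def numCosetOrbits {ι : Type*} (C : Submodule F (ι → F)) : ℕ :=
  Nat.card (Set.range (cosetOrbit C))

/-- `H` is a `q`-ary Hamming code with parameter `m ≥ 2`: a perfect
`[(q^m-1)/(q-1), (q^m-1)/(q-1) - m, 3]_q` code with covering radius 1. -/
def IsHammingCode (m : ℕ) {nm : ℕ} (H : Submodule F (Fin nm → F)) : Prop :=
  2 ≤ m ∧ nm = (Fintype.card F ^ m - 1) / (Fintype.card F - 1) ∧
  Module.finrank F H = nm - m ∧ minDist (H : Set (Fin nm → F)) = 3 ∧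
  coveringRadius (H : Set (Fin nm → F)) = 1

/-- The extended code: append an overall parity-check coordinate. -/
def extendedCode {m : ℕ} (D : Set (Fin m → F)) : Set (Fin (m + 1) → F) :=
  {z | (fun i : Fin m => z i.castSucc) ∈ D ∧ ∑ i, z i = 0}

/-- Construction I(u): append `u` free coordinates to every codeword. -/
def appendCode (u : ℕ) {n : ℕ} (C : Set (Fin n → F)) : Set (Fin (n + u) → F) :=
  {z | ∃ c ∈ C, ∃ y : Fin u → F, z = Fin.append c y}

/-- Construction II(ℓ): codewords are `ℓ`-tuples of blocks whose `λ`-weighted sum lies in `C`. -/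
def repeatCode {n ℓ : ℕ} (lam : Fin ℓ → Fˣ) (C : Set (Fin n → F)) :
    Set (Fin ℓ × Fin n → F) :=
  {z | (fun j : Fin n => ∑ i : Fin ℓ, (lam i : F) * z (i, j)) ∈ C}

/-- The code `{(x₁|⋯|x_ℓ|y) : x₁+⋯+x_ℓ ∈ H, y free}` built from a code `H`. -/
def hammingRepeatCode {nm : ℕ} (ℓ u : ℕ) (H : Set (Fin nm → F)) :
    Set ((Fin ℓ × Fin nm) ⊕ Fin u → F) :=
  {z | (fun j : Fin nm => ∑ i : Fin ℓ, z (Sum.inl (i, j))) ∈ H}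

section AuxTwoWeight

variable {F : Type*} [Field F] [DecidableEq F]

/-- Appending a zero coordinate, as a linear map. -/
def snocLM (m : ℕ) : (Fin m → F) →ₗ[F] (Fin (m + 1) → F) where
  toFun v := Fin.snoc v 0
  map_add' v w := by
    funext i
    refine Fin.lastCases ?_ (fun i => ?_) i <;>
      simp [Fin.snoc_last, Fin.snoc_castSucc]
  map_smul' a v := by
    funext i
    refine Fin.lastCases ?_ (fun i => ?_) i <;>
      simp [Fin.snoc_last, Fin.snoc_castSucc]

/-- Scaling each coordinate by a scalar and reindexing, as a linear map. -/
def scaleReindexLM {n p : ℕ} (e : Fin p ≃ Fin n) (c : Fin n → F) :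
    (Fin n → F) →ₗ[F] (Fin p → F) where
  toFun x := fun j => c (e j) * x (e j)
  map_add' x y := by funext j; simp [mul_add]
  map_smul' a x := by funext j; simp [smul_eq_mul]; ring

lemma hammingNorm_scaleReindexLM {n p : ℕ} (e : Fin p ≃ Fin n) (c : Fin n → F)
    (hc : ∀ i, c i ≠ 0) (x : Fin n → F) :
    hammingNorm (scaleReindexLM e c x) = hammingNorm x := by
  unfold hammingNorm
  refine Finset.card_equiv e (fun j => ?_)
  simp only [Finset.mem_filter, Finset.mem_univ, true_and, scaleReindexLM,
    LinearMap.coe_mk, AddHom.coe_mk]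
  constructor
  · intro h hx; exact (Finset.mem_filter.mp h).2 (by rw [hx, mul_zero])
  · intro h; exact Finset.mem_filter.mpr ⟨Finset.mem_univ _, fun hx => h (by simpa [hc (e j)] using mul_eq_zero.mp hx)⟩

lemma scaleReindexLM_injective {n p : ℕ} (e : Fin p ≃ Fin n) (c : Fin n → F)
    (hc : ∀ i, c i ≠ 0) : Function.Injective (scaleReindexLM (F := F) e c) := by
  intro x y h
  funext i
  have := congrFun h (e.symm i)
  simp only [scaleReindexLM, LinearMap.coe_mk, AddHom.coe_mk, Equiv.apply_symm_apply] at this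
  exact mul_left_cancel₀ (hc i) this

lemma hammingNorm_snoc_zero {m : ℕ} (v : Fin m → F) :
    hammingNorm (Fin.snoc v (0 : F) : Fin (m + 1) → F) = hammingNorm v := by
  show (Finset.univ.filter fun i : Fin (m+1) =>
        (Fin.snoc v (0:F) : Fin (m+1) → F) i ≠ 0).card
      = (Finset.univ.filter fun i => v i ≠ 0).card
  rw [Finset.card_filter, Finset.card_filter, Fin.sum_univ_castSucc]
  simp [Fin.snoc_last, Fin.snoc_castSucc]

lemma snoc_of_last_zero {m : ℕ} (w : Fin (m + 1) → F) (h : w (Fin.last m) = 0) :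
    Fin.snoc (fun i : Fin m => w i.castSucc) (0 : F) = w := by
  funext i
  refine Fin.lastCases ?_ (fun i => ?_) i
  · rw [Fin.snoc_last, h]
  · rw [Fin.snoc_castSucc]

end AuxTwoWeight

set_option maxHeartbeats 1000000 in
set_option synthInstance.maxHeartbeats 400000 in
/-- a nontrivial two-weight linear code with weights `w₁ = n` and `w₂ = d` is
monomially equivalent to the span of the all-one vector together with `{(v|0) : v ∈ E}` for an
equidistant `[n-1, k-1, d]` code `E` in which every symbol occurring in `(v|0)` occurs exactly
`n - d` times. -/
theorem two_weight_antipodal_structure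
    {F : Type*} [Field F] [Fintype F] [DecidableEq F] {n k d : ℕ}
    (C : Submodule F (Fin n → F))
    (hk : Module.finrank F C = k)
    (hk2 : 2 ≤ k) (hkn : k + 2 ≤ n)
    (hd : minDist (C : Set (Fin n → F)) = d)
    (hdn : d ≠ n)
    (hw : ∀ v ∈ C, v ≠ (0 : Fin n → F) → hammingNorm v = n ∨ hammingNorm v = d)
    (hw1 : ∃ v ∈ C, hammingNorm v = n)
    (hw2 : ∃ v ∈ C, hammingNorm v = d) :
    ∃ E : Submodule F (Fin (n - 1) → F),
      Module.finrank F E = k - 1 ∧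
      IsEquidistant (E : Set (Fin (n - 1) → F)) ∧
      minDist (E : Set (Fin (n - 1) → F)) = d ∧
      (∀ v ∈ E, v ≠ (0 : Fin (n - 1) → F) → ∀ α : F,
        (Finset.univ.filter fun i : Fin (n - 1 + 1) => (Fin.snoc v (0 : F) : Fin (n - 1 + 1) → F) i = α).card = n - d ∨
        (Finset.univ.filter fun i : Fin (n - 1 + 1) => (Fin.snoc v (0 : F) : Fin (n - 1 + 1) → F) i = α).card = 0) ∧
      MonomiallyEquivalent (C : Set (Fin n → F))
        ((Submodule.span F
            ({fun _ => (1 : F)} ∪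
              (fun v : Fin (n - 1) → F => Fin.snoc v (0 : F)) '' (E : Set (Fin (n - 1) → F))) :
          Submodule F (Fin (n - 1 + 1) → F)) : Set (Fin (n - 1 + 1) → F)) := by
  have hn : n = n - 1 + 1 := by omega
  obtain ⟨u, huC, hun⟩ := hw1
  -- every coordinate of `u` is nonzero
  have hu : ∀ i, u i ≠ 0 := by
    have hfu : (Finset.univ.filter fun i => u i ≠ 0) = Finset.univ := by
      apply Finset.eq_univ_of_card
      simpa [Fintype.card_fin, hammingNorm] using hun
    intro i
    have : i ∈ (Finset.univ.filter fun i => u i ≠ 0) := by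
      rw [hfu]; exact Finset.mem_univ i
    exact (Finset.mem_filter.mp this).2
  set e : Fin n ≃ Fin (n - 1 + 1) := finCongr hn with he
  set ψ : (Fin n → F) →ₗ[F] (Fin (n - 1 + 1) → F) :=
    scaleReindexLM e.symm (fun i => (u i)⁻¹) with hψ
  have hcnz : ∀ i, (u i)⁻¹ ≠ 0 := fun i => inv_ne_zero (hu i)
  set D : Submodule F (Fin (n - 1 + 1) → F) := Submodule.map ψ C with hD
  have hψnorm : ∀ x : Fin n → F, hammingNorm (ψ x) = hammingNorm x := fun x =>
    hammingNorm_scaleReindexLM e.symm _ hcnz x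
  have hψinj : Function.Injective ψ := scaleReindexLM_injective e.symm _ hcnz
  -- the all-one vector lies in D
  have h1D : (fun _ => (1 : F)) ∈ D := by
    refine ⟨u, huC, ?_⟩
    funext j
    simp only [hψ, scaleReindexLM, LinearMap.coe_mk, AddHom.coe_mk]
    exact inv_mul_cancel₀ (hu _)
  -- weights in D
  have hDw : ∀ w ∈ D, w ≠ 0 → hammingNorm w = n ∨ hammingNorm w = d := by
    rintro w ⟨x, hx, rfl⟩ hwne
    have hxne : x ≠ 0 := by rintro rfl; exact hwne (map_zero ψ)
    rw [hψnorm]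
    exact hw x hx hxne
  -- words of D vanishing at the last coordinate have weight d
  have hkey : ∀ w ∈ D, w (Fin.last (n - 1)) = 0 → w ≠ 0 → hammingNorm w = d := by
    intro w hwD hlast hwne
    rcases hDw w hwD hwne with h | h
    · exfalso
      have hfu : (Finset.univ.filter fun i => w i ≠ 0) = Finset.univ := by
        apply Finset.eq_univ_of_card
        have : hammingNorm w = n := h
        simpa [hammingNorm, Fintype.card_fin] using this.trans hn
      have : Fin.last (n - 1) ∈ (Finset.univ.filter fun i => w i ≠ 0) := by
        rw [hfu]; exact Finset.mem_univ _
      exact (Finset.mem_filter.mp this).2 hlast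
    · exact h
  set E : Submodule F (Fin (n - 1) → F) := Submodule.comap (snocLM (n - 1)) D with hE
  have hmemE : ∀ v : Fin (n - 1) → F,
      v ∈ E ↔ (Fin.snoc v 0 : Fin (n - 1 + 1) → F) ∈ D := fun v => Iff.rfl
  have hsnoc_ne : ∀ v : Fin (n - 1) → F, v ≠ 0 →
      (Fin.snoc v 0 : Fin (n - 1 + 1) → F) ≠ 0 := by
    intro v hv h0
    apply hv
    funext i
    have := congrFun h0 i.castSucc
    simpa [Fin.snoc_castSucc] using this
  -- nonzero words of E have weight d
  have hnormE : ∀ v ∈ E, v ≠ 0 → hammingNorm v = d := by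
    intro v hv hvne
    have := hkey _ ((hmemE v).mp hv) (by simp [Fin.snoc_last]) (hsnoc_ne v hvne)
    rwa [hammingNorm_snoc_zero] at this
  -- finrank D = k
  have hDrank : Module.finrank F D = k := by
    rw [← hk]
    exact (LinearEquiv.finrank_eq (Submodule.equivMapOfInjective ψ hψinj C)).symm
  -- evaluation at the last coordinate on D
  set g : D →ₗ[F] F :=
    (LinearMap.proj (Fin.last (n - 1))).comp D.subtype with hg
  have hgsurj : Function.Surjective g := by
    intro a
    refine ⟨a • ⟨(fun _ => (1 : F)), h1D⟩, ?_⟩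
    simp [hg]
  have hgrange : LinearMap.range g = ⊤ := LinearMap.range_eq_top.mpr hgsurj
  -- E is linearly equivalent to ker g
  have eqE : E ≃ₗ[F] LinearMap.ker g :=
    { toFun := fun v => ⟨⟨(Fin.snoc v.1 0 : Fin (n - 1 + 1) → F), (hmemE v.1).mp v.2⟩,
        by simp [hg, LinearMap.mem_ker, Fin.snoc_last]⟩
      invFun := fun w => ⟨fun i => w.1.1 i.castSucc, by
        have hl : w.1.1 (Fin.last (n - 1)) = 0 := w.2
        rw [hmemE, snoc_of_last_zero _ hl]
        exact w.1.2⟩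
      map_add' := fun x y => by
        apply Subtype.ext; apply Subtype.ext
        funext i
        refine Fin.lastCases ?_ (fun i => ?_) i <;>
          simp [Fin.snoc_last, Fin.snoc_castSucc]
      map_smul' := fun a x => by
        apply Subtype.ext; apply Subtype.ext
        funext i
        refine Fin.lastCases ?_ (fun i => ?_) i <;>
          simp [Fin.snoc_last, Fin.snoc_castSucc]
      left_inv := fun v => by
        apply Subtype.ext
        funext i
        simp [Fin.snoc_castSucc]
      right_inv := fun w => by
        apply Subtype.ext; apply Subtype.ext
        exact snoc_of_last_zero _ w.2 }
  have hErank : Module.finrank F E = k - 1 := by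
    have hrn := LinearMap.finrank_range_add_finrank_ker g
    rw [hgrange, finrank_top, Module.finrank_self, hDrank] at hrn
    have hEk : Module.finrank F E = Module.finrank F (LinearMap.ker g) :=
      LinearEquiv.finrank_eq eqE
    omega
  -- E is nontrivial
  obtain ⟨v₀, hv₀E, hv₀ne⟩ : ∃ v ∈ E, v ≠ 0 := by
    rw [← Submodule.ne_bot_iff]
    intro hbot
    rw [hbot, finrank_bot] at hErank
    omega
  -- equidistance
  have hequi : IsEquidistant (E : Set (Fin (n - 1) → F)) := by
    refine ⟨d, fun x hx y hy hxy => ?_⟩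
    rw [hammingDist_eq_hammingNorm]
    exact hnormE _ (by rw [neg_add_eq_sub]; exact sub_mem hy hx) (by rw [neg_add_eq_sub]; exact sub_ne_zero.mpr hxy.symm)
  -- minimum distance of E
  have hminE : minDist (E : Set (Fin (n - 1) → F)) = d := by
    have hset : {d' : ℕ | ∃ x ∈ (E : Set (Fin (n - 1) → F)), ∃ y ∈ (E : Set (Fin (n-1) → F)),
        x ≠ y ∧ hammingDist x y = d'} = {d} := by
      apply Set.eq_singleton_iff_unique_mem.mpr
      constructor
      · exact ⟨v₀, hv₀E, 0, Submodule.zero_mem E, hv₀ne, by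
          rw [hammingDist_zero_right]; exact hnormE _ hv₀E hv₀ne⟩
      · rintro d' ⟨x, hx, y, hy, hxy, rfl⟩
        rw [hammingDist_eq_hammingNorm]
        exact hnormE _ (by rw [neg_add_eq_sub]; exact sub_mem hy hx) (by rw [neg_add_eq_sub]; exact sub_ne_zero.mpr hxy.symm)
    rw [minDist, hset]
    exact csInf_singleton d
  -- symbol counts
  have hcount : ∀ v ∈ E, v ≠ (0 : Fin (n - 1) → F) → ∀ α : F,
      (Finset.univ.filter fun i : Fin (n - 1 + 1) =>
        (Fin.snoc v (0 : F) : Fin (n - 1 + 1) → F) i = α).card = n - d ∨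
      (Finset.univ.filter fun i : Fin (n - 1 + 1) =>
        (Fin.snoc v (0 : F) : Fin (n - 1 + 1) → F) i = α).card = 0 := by
    intro v hv hvne α
    set w : Fin (n - 1 + 1) → F := Fin.snoc v 0 with hwdef
    have hwD : w ∈ D := (hmemE v).mp hv
    have hwne : w ≠ 0 := hsnoc_ne v hvne
    have hwlast : w (Fin.last (n - 1)) = 0 := by simp [hwdef, Fin.snoc_last]
    by_cases ht : (Finset.univ.filter fun i : Fin (n - 1 + 1) => w i = α).card = 0
    · exact Or.inr ht
    left
    have hsum : (Finset.univ.filter fun i : Fin (n - 1 + 1) => w i = α).card +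
        (Finset.univ.filter fun i : Fin (n - 1 + 1) => ¬ (w i = α)).card
        = n - 1 + 1 := by
      rw [Finset.card_filter_add_card_filter_not]
      simp [Fintype.card_fin]
    set z : Fin (n - 1 + 1) → F := w - α • (fun _ => (1 : F)) with hzdef
    have hmem2 : z ∈ D := sub_mem hwD (Submodule.smul_mem D α h1D)
    have hne2 : z ≠ 0 := by
      intro h0
      have hall : ∀ i, w i = α := by
        intro i
        have := congrFun h0 i
        simp only [hzdef, Pi.sub_apply, Pi.smul_apply, smul_eq_mul, mul_one,
          Pi.zero_apply] at this
        exact sub_eq_zero.mp this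
      have hα : α = 0 := by rw [← hall (Fin.last (n - 1)), hwlast]
      apply hwne
      funext i
      rw [hall i, hα]; rfl
    have hnm : hammingNorm z =
        (Finset.univ.filter fun i : Fin (n - 1 + 1) => ¬ (w i = α)).card := by
      show (Finset.univ.filter fun i : Fin (n - 1 + 1) => z i ≠ 0).card = _
      congr 1
      apply Finset.filter_congr
      intro i _
      simp only [hzdef, Pi.sub_apply, Pi.smul_apply, smul_eq_mul, mul_one]
      exact sub_ne_zero
    rcases hDw _ hmem2 hne2 with h | h
    · rw [hnm] at h; omega
    · rw [hnm] at h; omega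
  refine ⟨E, hErank, hequi, hminE, hcount, ?_⟩
  -- D is the span of the all-one vector and the snoc-image of E
  have hspan : D = Submodule.span F
      ({fun _ => (1 : F)} ∪ (fun v : Fin (n - 1) → F => Fin.snoc v (0 : F)) ''
        (E : Set (Fin (n - 1) → F))) := by
    apply le_antisymm
    · intro w hwD
      set v : Fin (n - 1) → F := fun i => w i.castSucc - w (Fin.last (n - 1)) with hvdef
      have hsv : (Fin.snoc v 0 : Fin (n - 1 + 1) → F)
          = w - w (Fin.last (n - 1)) • ((fun _ => (1 : F)) : Fin (n - 1 + 1) → F) := by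
        funext i
        refine Fin.lastCases ?_ (fun i => ?_) i
        · simp [Fin.snoc_last]
        · simp [Fin.snoc_castSucc, hvdef]
      have hvE : v ∈ E := by
        rw [hmemE, hsv]
        exact sub_mem hwD (Submodule.smul_mem D _ h1D)
      have hdecomp : w = w (Fin.last (n - 1)) • (fun _ => (1 : F)) +
          (Fin.snoc v 0 : Fin (n - 1 + 1) → F) := by
        rw [hsv]; ring_nf
      rw [hdecomp]
      refine add_mem (Submodule.smul_mem _ _ (Submodule.subset_span (Or.inl rfl)))
        (Submodule.subset_span (Or.inr ⟨v, hvE, rfl⟩))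
    · rw [Submodule.span_le]
      rintro w (rfl | ⟨v, hvE, rfl⟩)
      · exact h1D
      · exact (hmemE v).mp hvE
  refine ⟨e, fun i => Units.mk0 (u i)⁻¹ (hcnz i), ?_⟩
  have hfun : (fun (x : Fin n → F) (j : Fin (n - 1 + 1)) =>
      ((Units.mk0 (u (e.symm j))⁻¹ (hcnz (e.symm j)) : Fˣ) : F) * x (e.symm j)) = ⇑ψ := by
    funext x j
    simp [hψ, scaleReindexLM]
  rw [hfun]
  show ⇑ψ '' (C : Set (Fin n → F)) = _
  rw [← Submodule.map_coe, ← hD, hspan]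
end

section
/- Let q ≥ 3 be a prime power, m ≥ 1, n = q^m, and let C be the difference-matrix code of length n over 𝔽_q, namely C = {x ∈ 𝔽_q^{𝔽_q^m} : Σ_{v ∈ 𝔽_q^m} x_v = 0 and Σ_{v ∈ 𝔽_q^m} x_v·v = 0 ∈ 𝔽_q^m}, with coordinates indexed by the vectors v ∈ 𝔽_q^m. Then C is a linear [n, n−m−1, 3]_q code, it is completely regular with covering radius 2, its dual C⊥ is antipodal, and its intersection array is (n(q−1), n−1; 1, n(q−1)). -/
set_option linter.unusedSectionVars false
set_option maxHeartbeats 1000000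


open Finset

variable {F : Type*} [Field F] [Fintype F] [DecidableEq F]

namespace DMC

variable {F : Type*} [Field F] [Fintype F] [DecidableEq F] {m : ℕ}

/-- The syndrome map. -/
def synd (x : (Fin m → F) → F) : F × (Fin m → F) :=
  (∑ v, x v, fun j => ∑ v, x v * v j)

lemma synd_add (x y : (Fin m → F) → F) : synd (x + y) = synd x + synd y := by
  simp only [synd, Pi.add_apply, add_mul, Finset.sum_add_distrib, Prod.mk_add_mk,
    Prod.mk.injEq]
  exact ⟨trivial, rfl⟩

lemma synd_sub (x y : (Fin m → F) → F) : synd (x - y) = synd x - synd y := by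
  simp only [synd, Pi.sub_apply, sub_mul, Finset.sum_sub_distrib, Prod.mk_sub_mk,
    Prod.mk.injEq]
  exact ⟨trivial, rfl⟩

lemma synd_zero : synd (0 : (Fin m → F) → F) = 0 := by
  simp [synd]
  rfl

lemma synd_smul (c : F) (x : (Fin m → F) → F) : synd (c • x) = c • synd x := by
  simp only [synd, Pi.smul_apply, smul_eq_mul, Prod.smul_mk, Prod.mk.injEq, mul_assoc]
  constructor
  · rw [Finset.mul_sum]
  · funext j
    simp [Finset.mul_sum]

lemma synd_single (v : Fin m → F) (a : F) : synd (Pi.single v a) = (a, a • v) := by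
  simp only [synd, Prod.mk.injEq]
  constructor
  · rw [Finset.sum_pi_single' v a Finset.univ]; simp
  · funext j
    simp only [Pi.single_apply, ite_mul, zero_mul, Finset.sum_ite_eq', Finset.mem_univ,
      if_true, Pi.smul_apply, smul_eq_mul]

lemma norm_single {v : Fin m → F} {a : F} (ha : a ≠ 0) : hammingNorm ((Pi.single v a : (Fin m → F) → F)) = 1 := by
  unfold hammingNorm
  rw [Finset.card_eq_one]
  refine ⟨v, ?_⟩
  ext w
  simp [Pi.single_apply, ha]


/-- Weight of a syndrome class. -/
def wS (p : F × (Fin m → F)) : ℕ := if p.1 = 0 then (if p.2 = 0 then 0 else 2) else 1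

lemma wS_le_two (p : F × (Fin m → F)) : wS p ≤ 2 := by
  unfold wS; split <;> [skip; omega]; split <;> omega

lemma wS_zero : wS (0 : F × (Fin m → F)) = 0 := by simp [wS]

lemma wS_eq_zero_iff (p : F × (Fin m → F)) : wS p = 0 ↔ p = 0 := by
  unfold wS
  constructor
  · intro h
    split at h
    · split at h
      · exact Prod.ext ‹_› ‹_›
      · omega
    · omega
  · rintro rfl; simp

lemma eq_zero_of_norm_le_one {y : (Fin m → F) → F} (h1 : hammingNorm y ≤ 1)
    (h2 : ∑ v, y v = 0) : y = 0 := by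
  by_contra hy
  obtain ⟨v, hv⟩ : ∃ v, y v ≠ 0 := by
    by_contra h
    push_neg at h
    exact hy (funext h)
  have hfil : ({i | y i ≠ 0} : Finset (Fin m → F)) = {v} := by
    apply Finset.eq_singleton_iff_unique_mem.mpr
    refine ⟨by simpa using hv, fun w hw => ?_⟩
    by_contra hwv
    have : 2 ≤ hammingNorm y := by
      have : ({w, v} : Finset (Fin m → F)) ⊆ Finset.univ.filter (fun i => y i ≠ 0) := by
        intro u hu
        simp only [Finset.mem_insert, Finset.mem_singleton] at hu
        rcases hu with rfl | rfl
        · simpa using hw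
        · simpa using hv
      calc 2 = ({w, v} : Finset (Fin m → F)).card := (Finset.card_pair hwv).symm
        _ ≤ _ := Finset.card_le_card this
    omega
  have : ∑ u, y u = y v := by
    rw [← Finset.sum_filter_ne_zero]
    rw [show (Finset.univ.filter fun i => y i ≠ 0) = {v} from hfil]
    exact Finset.sum_singleton _ _
  rw [this] at h2
  exact hv h2

lemma eq_zero_of_norm_le_two {y : (Fin m → F) → F} (h1 : hammingNorm y ≤ 2)
    (h2 : synd y = 0) : y = 0 := by
  have hsum : ∑ v, y v = 0 := congrArg Prod.fst h2
  have hmom : ∀ j, ∑ v, y v * v j = 0 := fun j => congrFun (congrArg Prod.snd h2) j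
  by_contra hy
  obtain ⟨v, hv⟩ : ∃ v, y v ≠ 0 := by
    by_contra h; push_neg at h; exact hy (funext h)
  rcases le_or_gt (hammingNorm y) 1 with h | h
  · exact hy (eq_zero_of_norm_le_one h hsum)
  -- hammingNorm y = 2
  have hfil : ∃ w, w ≠ v ∧ ({i | y i ≠ 0} : Finset (Fin m → F)) = {v, w} := by
    have hcard : ({i | y i ≠ 0} : Finset (Fin m → F)).card = 2 := le_antisymm h1 h
    obtain ⟨a, b, hab, hs⟩ := Finset.card_eq_two.mp hcard
    have hvmem : v ∈ ({i | y i ≠ 0} : Finset (Fin m → F)) := by simpa using hv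
    rw [hs] at hvmem
    simp only [Finset.mem_insert, Finset.mem_singleton] at hvmem
    rcases hvmem with rfl | rfl
    · exact ⟨b, Ne.symm hab, hs⟩
    · exact ⟨a, hab, by rw [hs]; exact Finset.pair_comm a v⟩
  obtain ⟨w, hwv, hfil⟩ := hfil
  have hw : y w ≠ 0 := by
    have : w ∈ ({i | y i ≠ 0} : Finset (Fin m → F)) := by
      rw [hfil]; simp
    simpa using this
  have hsum2 : y v + y w = 0 := by
    have : ∑ u, y u = y v + y w := by
      rw [← Finset.sum_filter_ne_zero]
      rw [show (Finset.univ.filter fun i => y i ≠ 0) = {v, w} from hfil]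
      exact Finset.sum_pair (Ne.symm hwv)
    rw [this] at hsum; exact hsum
  have hmom2 : ∀ j, y v * v j + y w * w j = 0 := by
    intro j
    have hsums : ∑ u, y u * u j = y v * v j + y w * w j := by
      rw [← Finset.sum_filter_of_ne (p := fun i => y i ≠ 0) (fun u _ hu hyu => hu (by rw [hyu, zero_mul]))]
      rw [show (Finset.univ.filter fun i => y i ≠ 0) = {v, w} from hfil]
      exact Finset.sum_pair (Ne.symm hwv)
    rw [← hsums]
    exact hmom j
  have hveqw : v = w := by
    funext j
    have h1 := hmom2 j
    have h2 : y w = -y v := eq_neg_of_add_eq_zero_right hsum2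
    have h3 : y v * (v j - w j) = 0 := by rw [h2] at h1; linear_combination h1
    rcases mul_eq_zero.mp h3 with h | h
    · exact absurd h hv
    · exact sub_eq_zero.mp h
  exact hwv hveqw.symm

lemma hd_eq_norm_sub (x y : (Fin m → F) → F) : hammingDist x y = hammingNorm (x - y) := by
  rw [hammingDist_comm, hammingDist_eq_hammingNorm, neg_add_eq_sub]

lemma norm_sub_le (a b : (Fin m → F) → F) :
    hammingNorm (a - b) ≤ hammingNorm a + hammingNorm b := by
  calc hammingNorm (a - b) = hammingDist a b := (hd_eq_norm_sub a b).symm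
    _ ≤ hammingDist a 0 + hammingDist 0 b := hammingDist_triangle a 0 b
    _ = hammingNorm a + hammingNorm b := by
        rw [hammingDist_zero_right, hammingDist_comm, hammingDist_zero_right]

lemma dist_eq {C : Set ((Fin m → F) → F)} (hmem : ∀ z, z ∈ C ↔ synd z = 0)
    (x : (Fin m → F) → F) : distToCode C x = wS (synd x) := by
  have h0C : (0 : (Fin m → F) → F) ∈ C := (hmem 0).mpr synd_zero
  have hne : {d : ℕ | ∃ c ∈ C, hammingDist x c = d}.Nonempty := ⟨_, 0, h0C, rfl⟩
  unfold distToCode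
  apply le_antisymm
  · by_cases hs : (synd x).1 = 0
    · by_cases ht : (synd x).2 = 0
      · have hxC : x ∈ C := (hmem x).mpr (Prod.ext hs ht)
        have := Nat.sInf_le (s := {d : ℕ | ∃ c ∈ C, hammingDist x c = d}) ⟨x, hxC, rfl⟩
        simpa [wS, hs, ht] using this
      · set y := (Pi.single (synd x).2 (1:F) : (Fin m → F) → F)
            - (Pi.single (0 : Fin m → F) (1:F) : (Fin m → F) → F) with hy
        have hyy : synd y = synd x := by
          rw [hy, synd_sub, synd_single, synd_single]
          refine Prod.ext ?_ ?_
          · simpa using hs.symm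
          · simp
        have hcC : x - y ∈ C := (hmem _).mpr (by rw [synd_sub, hyy, sub_self])
        have hdist : hammingDist x (x - y) = hammingNorm y := by
          rw [hd_eq_norm_sub, sub_sub_cancel]
        have hny : hammingNorm y ≤ 2 := by
          refine (norm_sub_le _ _).trans ?_
          have h1 := norm_single (m := m) (v := (synd x).2) (one_ne_zero (α := F))
          have h2 := norm_single (m := m) (v := (0 : Fin m → F)) (one_ne_zero (α := F))
          omega
        have hle := Nat.sInf_le (s := {d : ℕ | ∃ c ∈ C, hammingDist x c = d}) ⟨x - y, hcC, rfl⟩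
        rw [hdist] at hle
        have : wS (synd x) = 2 := by simp [wS, hs, ht]
        omega
    · set y := (Pi.single ((synd x).1⁻¹ • (synd x).2) (synd x).1 : (Fin m → F) → F) with hy
      have hyy : synd y = synd x := by
        rw [hy, synd_single]
        refine Prod.ext rfl ?_
        simp only [smul_smul, mul_inv_cancel₀ hs, one_smul]
      have hcC : x - y ∈ C := (hmem _).mpr (by rw [synd_sub, hyy, sub_self])
      have hdist : hammingDist x (x - y) = hammingNorm y := by
        rw [hd_eq_norm_sub, sub_sub_cancel]
      have hny : hammingNorm y = 1 := norm_single hs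
      have hle := Nat.sInf_le (s := {d : ℕ | ∃ c ∈ C, hammingDist x c = d}) ⟨x - y, hcC, rfl⟩
      rw [hdist, hny] at hle
      have : wS (synd x) = 1 := by simp [wS, hs]
      omega
  · obtain ⟨c, hcC, hcd⟩ := Nat.sInf_mem hne
    rw [← hcd, hd_eq_norm_sub]
    have hsy : synd (x - c) = synd x := by rw [synd_sub, (hmem c).mp hcC, sub_zero]
    by_cases hs : (synd x).1 = 0
    · by_cases ht : (synd x).2 = 0
      · simp [wS, hs, ht]
      · have : wS (synd x) = 2 := by simp [wS, hs, ht]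
        rw [this]
        by_contra hlt
        push_neg at hlt
        have hz : x - c = 0 := eq_zero_of_norm_le_one (by omega)
          ((congrArg Prod.fst hsy).trans hs)
        rw [hz] at hsy
        exact ht ((congrArg Prod.snd hsy.symm).trans (congrArg Prod.snd synd_zero))
    · have : wS (synd x) = 1 := by simp [wS, hs]
      rw [this]
      by_contra hlt
      push_neg at hlt
      have hz : x - c = 0 := hammingNorm_eq_zero.mp (by omega)
      rw [hz] at hsy
      exact hs ((congrArg Prod.fst hsy.symm).trans (congrArg Prod.fst synd_zero))


lemma hd_add_single (x : (Fin m → F) → F) {v : Fin m → F} {a : F} (ha : a ≠ 0) :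
    hammingDist x (x + Pi.single v a) = 1 := by
  rw [hd_eq_norm_sub]
  have h1 : x - (x + Pi.single v a) = (Pi.single v (-a) : (Fin m → F) → F) := by
    funext w
    simp [Pi.single_apply]
    split <;> ring
  rw [h1]
  exact norm_single (neg_ne_zero.mpr ha)

lemma card_nbr (x : (Fin m → F) → F) (P : ((Fin m → F) → F) → Prop) :
    Nat.card {y : (Fin m → F) → F | hammingDist x y = 1 ∧ P y} =
    Nat.card {p : (Fin m → F) × F // p.2 ≠ 0 ∧ P (x + Pi.single p.1 p.2)} := by
  refine (Nat.card_congr (Equiv.ofBijective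
    (fun p : {p : (Fin m → F) × F // p.2 ≠ 0 ∧ P (x + Pi.single p.1 p.2)} =>
      (⟨x + Pi.single p.1.1 p.1.2, hd_add_single x p.2.1, p.2.2⟩ :
        {y : (Fin m → F) → F | hammingDist x y = 1 ∧ P y})) ⟨?_, ?_⟩)).symm
  · rintro ⟨⟨v, a⟩, ha, hPa⟩ ⟨⟨w, b⟩, hb, hPb⟩ h
    simp only [Subtype.mk.injEq] at h
    have hsingle : (Pi.single v a : (Fin m → F) → F) = Pi.single w b := by
      have := add_left_cancel h
      exact this
    have hvw : v = w := by
      by_contra hne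
      have := congrFun hsingle v
      rw [Pi.single_eq_same, Pi.single_eq_of_ne hne] at this
      exact ha this
    subst hvw
    have hab : a = b := by
      have := congrFun hsingle v
      rwa [Pi.single_eq_same, Pi.single_eq_same] at this
    subst hab
    rfl
  · rintro ⟨y, hy1, hy2⟩
    have hy1' : (Finset.univ.filter fun i => (x - y) i ≠ 0).card = 1 := by
      have h := hy1
      rw [hd_eq_norm_sub] at h
      exact h
    obtain ⟨v, hv⟩ := Finset.card_eq_one.mp hy1'
    have hvmem : (x - y) v ≠ 0 := by
      have : v ∈ Finset.univ.filter fun i => (x - y) i ≠ 0 := by rw [hv]; simp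
      simpa using this
    have ha : y v - x v ≠ 0 := fun h => hvmem (by
      have : x v - y v = 0 := by
        have := neg_eq_zero.mpr h
        linear_combination this
      simpa using this)
    have hyx : y = x + Pi.single v (y v - x v) := by
      funext w
      by_cases hw : w = v
      · subst hw
        simp
      · have : w ∉ Finset.univ.filter fun i => (x - y) i ≠ 0 := by
          rw [hv]; simpa using hw
        simp only [Finset.mem_filter, Finset.mem_univ, true_and, not_not] at this
        have hxy : x w = y w := by
          have := sub_eq_zero.mp (by simpa using this)
          exact this
        simp [Pi.single_eq_of_ne hw, hxy]
    exact ⟨⟨(v, y v - x v), ha, hyx ▸ hy2⟩, Subtype.ext hyx.symm⟩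

lemma card_pair_snd_ne (b : F) :
    Nat.card {p : (Fin m → F) × F // p.2 ≠ 0} =
      Fintype.card F ^ m * (Fintype.card F - 1) := by
  have e : {p : (Fin m → F) × F // p.2 ≠ 0} ≃ (Fin m → F) × {a : F // a ≠ 0} :=
    { toFun := fun p => (p.1.1, ⟨p.1.2, p.2⟩)
      invFun := fun q => ⟨(q.1, q.2.1), q.2.2⟩
      left_inv := fun p => rfl
      right_inv := fun q => rfl }
  rw [Nat.card_congr e, Nat.card_prod, Nat.card_eq_fintype_card, Nat.card_eq_fintype_card]
  congr 1
  · rw [Fintype.card_fun, Fintype.card_fin]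
  · rw [Fintype.card_subtype_compl (fun a : F => a = 0), Fintype.card_subtype_eq]

lemma card_pair_eq_ne (b : F) (u : Fin m → F) :
    Nat.card {p : (Fin m → F) × F // p.2 = b ∧ p.1 ≠ u} = Fintype.card F ^ m - 1 := by
  have e : {p : (Fin m → F) × F // p.2 = b ∧ p.1 ≠ u} ≃ {v : Fin m → F // v ≠ u} :=
    { toFun := fun p => ⟨p.1.1, p.2.2⟩
      invFun := fun v => ⟨(v.1, b), by exact ⟨rfl, v.2⟩⟩
      left_inv := fun p => by
        obtain ⟨⟨v, a⟩, h1, h2⟩ := p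
        subst h1
        rfl
      right_inv := fun v => rfl }
  rw [Nat.card_congr e, Nat.card_eq_fintype_card,
    Fintype.card_subtype_compl (fun v : Fin m → F => v = u), Fintype.card_subtype_eq,
    Fintype.card_fun, Fintype.card_fin]

lemma card_pair_eq_eq (b : F) (u : Fin m → F) :
    Nat.card {p : (Fin m → F) × F // p.2 = b ∧ p.1 = u} = 1 := by
  haveI : Unique {p : (Fin m → F) × F // p.2 = b ∧ p.1 = u} :=
    { default := ⟨(u, b), rfl, rfl⟩
      uniq := fun p => by
        obtain ⟨⟨v, a⟩, h1, h2⟩ := p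
        subst h1; subst h2; rfl }
  exact Nat.card_unique


lemma wS_eq_one_iff (p : F × (Fin m → F)) : wS p = 1 ↔ p.1 ≠ 0 := by
  unfold wS
  split
  · split <;> simp_all
  · simp_all

lemma wS_eq_two_iff (p : F × (Fin m → F)) : wS p = 2 ↔ p.1 = 0 ∧ p.2 ≠ 0 := by
  unfold wS
  split
  · split <;> simp_all
  · simp_all

variable {C : Set ((Fin m → F) → F)}

lemma countA0 (hmem : ∀ z, z ∈ C ↔ synd z = 0) (x : (Fin m → F) → F) (hx : synd x = 0) :
    Nat.card {y : (Fin m → F) → F | hammingDist x y = 1 ∧ distToCode C y = 0 + 1} =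
      Fintype.card F ^ m * (Fintype.card F - 1) := by
  rw [card_nbr]
  rw [Nat.card_congr (Equiv.subtypeEquivRight
    (q := fun p : (Fin m → F) × F => p.2 ≠ 0) ?_)]
  · exact card_pair_snd_ne 0
  · intro p
    constructor
    · exact fun h => h.1
    · intro h
      refine ⟨h, ?_⟩
      rw [dist_eq hmem, synd_add, hx, zero_add, synd_single]
      simpa [wS_eq_one_iff] using h

lemma countB0 (x : (Fin m → F) → F) :
    Nat.card {y : (Fin m → F) → F | hammingDist x y = 1 ∧ distToCode C y + 1 = 0} = 0 := by
  rw [show {y : (Fin m → F) → F | hammingDist x y = 1 ∧ distToCode C y + 1 = 0}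
      = (∅ : Set ((Fin m → F) → F)) from
    Set.eq_empty_iff_forall_notMem.mpr (by rintro y ⟨-, h⟩; omega)]
  simp

lemma countA1 (hmem : ∀ z, z ∈ C ↔ synd z = 0) (x : (Fin m → F) → F)
    (hs : (synd x).1 ≠ 0) :
    Nat.card {y : (Fin m → F) → F | hammingDist x y = 1 ∧ distToCode C y = 1 + 1} =
      Fintype.card F ^ m - 1 := by
  rw [card_nbr]
  rw [Nat.card_congr (Equiv.subtypeEquivRight
    (q := fun p : (Fin m → F) × F =>
      p.2 = -(synd x).1 ∧ p.1 ≠ (synd x).1⁻¹ • (synd x).2) ?_)]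
  · exact card_pair_eq_ne _ _
  · rintro ⟨v, a⟩
    simp only [dist_eq hmem, synd_add, synd_single]
    rw [wS_eq_two_iff]
    constructor
    · rintro ⟨ha, h1, h2⟩
      have ha' : a = -(synd x).1 := by
        have : (synd x).1 + a = 0 := h1
        linear_combination this
      refine ⟨ha', ?_⟩
      rintro rfl
      apply h2
      have : (synd x).2 + a • (synd x).1⁻¹ • (synd x).2 = 0 := by
        rw [ha', smul_smul]
        rw [show -(synd x).1 * (synd x).1⁻¹ = -1 by
          field_simp]
        simp
      exact this
    · rintro ⟨rfl, hv⟩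
      refine ⟨neg_ne_zero.mpr hs, by simp, ?_⟩
      intro h0
      apply hv
      have h0' : (synd x).2 + (-(synd x).1) • v = 0 := h0
      have : (synd x).2 = (synd x).1 • v := by
        have := eq_neg_of_add_eq_zero_left h0'
        rw [this]; simp
      rw [this, smul_smul, inv_mul_cancel₀ hs, one_smul]

lemma countB1 (hmem : ∀ z, z ∈ C ↔ synd z = 0) (x : (Fin m → F) → F)
    (hs : (synd x).1 ≠ 0) :
    Nat.card {y : (Fin m → F) → F | hammingDist x y = 1 ∧ distToCode C y + 1 = 1} = 1 := by
  rw [card_nbr]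
  rw [Nat.card_congr (Equiv.subtypeEquivRight
    (q := fun p : (Fin m → F) × F =>
      p.2 = -(synd x).1 ∧ p.1 = (synd x).1⁻¹ • (synd x).2) ?_)]
  · exact card_pair_eq_eq _ _
  · rintro ⟨v, a⟩
    simp only [dist_eq hmem, synd_add, synd_single]
    constructor
    · rintro ⟨ha, h⟩
      have h0 : wS (synd x + (a, a • v)) = 0 := by omega
      rw [wS_eq_zero_iff] at h0
      have h1 : (synd x).1 + a = 0 := congrArg Prod.fst h0
      have h2 : (synd x).2 + a • v = 0 := congrArg Prod.snd h0
      have ha' : a = -(synd x).1 := by linear_combination h1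
      refine ⟨ha', ?_⟩
      subst ha'
      have : (synd x).2 = (synd x).1 • v := by
        have := eq_neg_of_add_eq_zero_left h2
        rw [this]; simp
      rw [this, smul_smul, inv_mul_cancel₀ hs, one_smul]
    · rintro ⟨rfl, rfl⟩
      refine ⟨neg_ne_zero.mpr hs, ?_⟩
      have h0 : synd x + (-(synd x).1, (-(synd x).1) • (synd x).1⁻¹ • (synd x).2) = 0 := by
        refine Prod.ext ?_ ?_
        · simp
        · show (synd x).2 + (-(synd x).1) • (synd x).1⁻¹ • (synd x).2 = 0
          rw [smul_smul, show -(synd x).1 * (synd x).1⁻¹ = -1 by field_simp]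
          simp
      rw [h0, wS_zero]

lemma countA2 (hmem : ∀ z, z ∈ C ↔ synd z = 0) (x : (Fin m → F) → F) :
    Nat.card {y : (Fin m → F) → F | hammingDist x y = 1 ∧ distToCode C y = 2 + 1} = 0 := by
  rw [show {y : (Fin m → F) → F | hammingDist x y = 1 ∧ distToCode C y = 2 + 1}
      = (∅ : Set ((Fin m → F) → F)) from
    Set.eq_empty_iff_forall_notMem.mpr (by
      rintro y ⟨-, h⟩
      rw [dist_eq hmem] at h
      have := wS_le_two (synd y)
      omega)]
  simp

lemma countB2 (hmem : ∀ z, z ∈ C ↔ synd z = 0) (x : (Fin m → F) → F)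
    (hs : (synd x).1 = 0) :
    Nat.card {y : (Fin m → F) → F | hammingDist x y = 1 ∧ distToCode C y + 1 = 2} =
      Fintype.card F ^ m * (Fintype.card F - 1) := by
  rw [card_nbr]
  rw [Nat.card_congr (Equiv.subtypeEquivRight
    (q := fun p : (Fin m → F) × F => p.2 ≠ 0) ?_)]
  · exact card_pair_snd_ne 0
  · rintro ⟨v, a⟩
    simp only [dist_eq hmem, synd_add, synd_single]
    constructor
    · exact fun h => h.1
    · intro h
      refine ⟨h, ?_⟩
      have : wS (synd x + (a, a • v)) = 1 := by
        rw [wS_eq_one_iff]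
        show (synd x).1 + a ≠ 0
        rw [hs, zero_add]
        exact h
      omega

end DMC

/-- the difference-matrix code of length `n = q^m` (coordinates indexed by the
vectors of `𝔽_q^m`) is a `[n, n-m-1, 3]_q` code, completely regular with covering radius 2,
with antipodal dual and intersection array `(n(q-1), n-1; 1, n(q-1))`. -/
theorem difference_matrix_code
    {F : Type*} [Field F] [Fintype F] [DecidableEq F] {m : ℕ}
    (hq : 3 ≤ Fintype.card F) (hm : 1 ≤ m)
    (C : Submodule F ((Fin m → F) → F))
    (hC : ∀ x : (Fin m → F) → F, x ∈ C ↔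
      ((∑ v : Fin m → F, x v) = 0 ∧ ∀ j : Fin m, (∑ v : Fin m → F, x v * v j) = 0)) :
    Module.finrank F C = Fintype.card F ^ m - m - 1 ∧
    minDist (C : Set ((Fin m → F) → F)) = 3 ∧
    IsCompletelyRegular (C : Set ((Fin m → F) → F)) ∧
    coveringRadius (C : Set ((Fin m → F) → F)) = 2 ∧
    IsAntipodal (dualSet (C : Set ((Fin m → F) → F))) ∧
    ∀ b c : ℕ → ℕ, HasIntersectionNumbers (C : Set ((Fin m → F) → F)) b c →
      b 0 = Fintype.card F ^ m * (Fintype.card F - 1) ∧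
      b 1 = Fintype.card F ^ m - 1 ∧
      c 1 = 1 ∧
      c 2 = Fintype.card F ^ m * (Fintype.card F - 1) := by
  classical
  have hmem : ∀ z, z ∈ (C : Set ((Fin m → F) → F)) ↔ DMC.synd z = 0 := by
    intro z
    rw [SetLike.mem_coe, hC]
    constructor
    · rintro ⟨h1, h2⟩; exact Prod.ext h1 (funext h2)
    · intro h; exact ⟨congrArg Prod.fst h, fun j => congrFun (congrArg Prod.snd h) j⟩
  -- distinguished index and vectors
  have i0 : Fin m := ⟨0, hm⟩
  set t : Fin m → F := fun _ => (1 : F) with ht_def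
  have ht0 : t ≠ 0 := by
    intro h
    have := congrFun h i0
    simp [ht_def] at this
  -- rank
  have hrank : Module.finrank F ↥C = Fintype.card F ^ m - m - 1 := by
    let S : ((Fin m → F) → F) →ₗ[F] F × (Fin m → F) :=
      { toFun := DMC.synd
        map_add' := DMC.synd_add
        map_smul' := DMC.synd_smul }
    have hker : C = LinearMap.ker S := by
      ext z
      rw [LinearMap.mem_ker, show z ∈ C ↔ z ∈ (C : Set ((Fin m → F) → F)) from Iff.rfl,
        hmem z]
      rfl
    have hsurj : Function.Surjective S := by
      rintro ⟨s, u⟩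
      refine ⟨Pi.single (0 : Fin m → F) (s - 1) + Pi.single u (1 : F), ?_⟩
      show DMC.synd _ = _
      rw [DMC.synd_add, DMC.synd_single, DMC.synd_single]
      refine Prod.ext ?_ ?_
      · show (s - 1) + 1 = s
        ring
      · show (s - 1) • (0 : Fin m → F) + (1 : F) • u = u
        simp
    have h1 := LinearMap.finrank_range_add_finrank_ker S
    rw [LinearMap.range_eq_top.mpr hsurj, finrank_top, ← hker] at h1
    have h2 : Module.finrank F (F × (Fin m → F)) = 1 + m := by
      rw [Module.finrank_prod, Module.finrank_self, Module.finrank_pi, Fintype.card_fin]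
    have h3 : Module.finrank F ((Fin m → F) → F) = Fintype.card F ^ m := by
      rw [Module.finrank_pi, Fintype.card_fun, Fintype.card_fin]
    rw [h2, h3] at h1
    omega
  -- a nonzero scalar different from 1
  obtain ⟨lam, hlam0, hlam1⟩ : ∃ lam : F, lam ≠ 0 ∧ lam ≠ 1 := by
    by_contra h
    push_neg at h
    have hsub : (Finset.univ : Finset F) ⊆ {0, 1} := by
      intro a _
      rcases eq_or_ne a 0 with rfl | ha
      · simp
      · simp [h a ha]
    have hle := Finset.card_le_card hsub
    have h2 : ({0, 1} : Finset F).card ≤ 2 :=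
      (Finset.card_insert_le _ _).trans (by simp)
    rw [Finset.card_univ] at hle
    omega
  -- the weight-3 codeword
  set z₃ : (Fin m → F) → F :=
    Pi.single (0 : Fin m → F) (lam - 1) + Pi.single t (-lam) + Pi.single (lam • t) 1
      with hz3_def
  have h0t : (0 : Fin m → F) ≠ t := by
    intro h
    have := congrFun h i0
    simp [ht_def] at this
  have h0l : (0 : Fin m → F) ≠ lam • t := by
    intro h
    have := congrFun h i0
    simp [ht_def] at this
    exact hlam0 this.symm
  have htl : t ≠ lam • t := by
    intro h
    have := congrFun h i0
    simp [ht_def] at this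
    exact hlam1 this.symm
  have hz3C : z₃ ∈ (C : Set ((Fin m → F) → F)) := by
    rw [hmem, hz3_def, DMC.synd_add, DMC.synd_add, DMC.synd_single, DMC.synd_single,
      DMC.synd_single]
    refine Prod.ext ?_ ?_
    · show (lam - 1) + (-lam) + 1 = 0
      ring
    · show (lam - 1) • (0 : Fin m → F) + (-lam) • t + (1 : F) • (lam • t) = 0
      funext j
      simp only [Pi.add_apply, Pi.smul_apply, Pi.zero_apply, smul_eq_mul]
      ring
  have hz3val : ∀ w, z₃ w =
      (if w = (0 : Fin m → F) then lam - 1 else 0) + (if w = t then -lam else 0)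
        + (if w = lam • t then 1 else 0) := by
    intro w
    simp [hz3_def, Pi.single_apply]
  have hz3norm : hammingNorm z₃ = 3 := by
    unfold hammingNorm
    have hfil : (Finset.univ.filter fun w => z₃ w ≠ 0) =
        {(0 : Fin m → F), t, lam • t} := by
      ext w
      simp only [Finset.mem_filter, Finset.mem_univ, true_and, Finset.mem_insert,
        Finset.mem_singleton]
      constructor
      · intro hw
        by_contra hcon
        push_neg at hcon
        obtain ⟨h1, h2, h3⟩ := hcon
        exact hw (by rw [hz3val, if_neg h1, if_neg h2, if_neg h3]; ring)
      · rintro (rfl | rfl | rfl)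
        · rw [hz3val, if_pos rfl, if_neg h0t, if_neg h0l]
          simpa using sub_ne_zero_of_ne hlam1
        · rw [hz3val, if_neg (Ne.symm h0t), if_pos rfl, if_neg htl]
          simpa using hlam0
        · rw [hz3val, if_neg (Ne.symm h0l), if_neg (Ne.symm htl), if_pos rfl]
          simp
    rw [hfil, Finset.card_insert_of_notMem (by simp [h0t, h0l]),
      Finset.card_insert_of_notMem (by simp [htl]), Finset.card_singleton]
  have hz3ne : z₃ ≠ 0 := by
    intro h
    rw [h, hammingNorm_zero] at hz3norm
    omega
  -- minimum distance
  have hmin : minDist (C : Set ((Fin m → F) → F)) = 3 := by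
    have h0C : (0 : (Fin m → F) → F) ∈ (C : Set ((Fin m → F) → F)) :=
      (hmem 0).mpr DMC.synd_zero
    have h3mem : 3 ∈ {d : ℕ | ∃ x ∈ (C : Set ((Fin m → F) → F)),
        ∃ y ∈ (C : Set ((Fin m → F) → F)), x ≠ y ∧ hammingDist x y = d} :=
      ⟨z₃, hz3C, 0, h0C, hz3ne, by rw [hammingDist_zero_right]; exact hz3norm⟩
    unfold minDist
    apply le_antisymm (Nat.sInf_le h3mem)
    obtain ⟨x, hx, y, hy, hne, hd⟩ := Nat.sInf_mem ⟨3, h3mem⟩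
    rw [← hd, DMC.hd_eq_norm_sub]
    by_contra hlt
    push_neg at hlt
    have hxyC : x - y ∈ (C : Set ((Fin m → F) → F)) := by
      rw [SetLike.mem_coe] at hx hy ⊢
      exact sub_mem hx hy
    have : x - y = 0 := DMC.eq_zero_of_norm_le_two (by omega) ((hmem _).mp hxyC)
    exact hne (sub_eq_zero.mp this)
  -- the distance-two vector
  set x₂ : (Fin m → F) → F := Pi.single t (1 : F) + Pi.single (0 : Fin m → F) (-1 : F)
    with hx2_def
  have hx2synd : DMC.synd x₂ = ((0 : F), t) := by
    rw [hx2_def, DMC.synd_add, DMC.synd_single, DMC.synd_single]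
    refine Prod.ext ?_ ?_
    · show (1 : F) + (-1) = 0
      ring
    · show (1 : F) • t + (-1 : F) • (0 : Fin m → F) = t
      simp
  have hx2dist : distToCode (C : Set ((Fin m → F) → F)) x₂ = 2 := by
    rw [DMC.dist_eq hmem, hx2synd, DMC.wS_eq_two_iff]
    exact ⟨rfl, ht0⟩
  -- complete regularity
  have hCR : HasIntersectionNumbers (C : Set ((Fin m → F) → F))
      (fun l => if l = 0 then Fintype.card F ^ m * (Fintype.card F - 1)
        else if l = 1 then Fintype.card F ^ m - 1 else 0)
      (fun l => if l = 1 then 1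
        else if l = 2 then Fintype.card F ^ m * (Fintype.card F - 1) else 0) := by
    intro l x hx
    rw [DMC.dist_eq hmem] at hx
    match l with
    | 0 =>
      constructor
      · rw [DMC.countA0 hmem x ((DMC.wS_eq_zero_iff _).mp hx)]; rfl
      · rw [DMC.countB0]; rfl
    | 1 =>
      have hs := (DMC.wS_eq_one_iff _).mp hx
      constructor
      · rw [DMC.countA1 hmem x hs]; rfl
      · rw [DMC.countB1 hmem x hs]; rfl
    | 2 =>
      have hs := (DMC.wS_eq_two_iff _).mp hx
      constructor
      · rw [DMC.countA2 hmem x]; rfl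
      · rw [DMC.countB2 hmem x hs.1]; rfl
    | (l + 3) =>
      exact absurd hx (by have := DMC.wS_le_two (DMC.synd x); omega)
  -- covering radius
  have hcov : coveringRadius (C : Set ((Fin m → F) → F)) = 2 := by
    unfold coveringRadius
    apply le_antisymm
    · refine csSup_le ⟨2, x₂, hx2dist⟩ ?_
      rintro d ⟨x, rfl⟩
      rw [DMC.dist_eq hmem]
      exact DMC.wS_le_two _
    · refine le_csSup ⟨2, ?_⟩ ⟨x₂, hx2dist⟩
      rintro d ⟨x, rfl⟩
      rw [DMC.dist_eq hmem]
      exact DMC.wS_le_two _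
  refine ⟨hrank, hmin, ⟨_, _, hCR⟩, hcov, ?_, ?_⟩
  · -- antipodal dual
    refine ⟨fun _ => (1 : F), ?_, ?_⟩
    · intro x hx
      have h1 : ∑ v, x v = 0 := congrArg Prod.fst ((hmem x).mp hx)
      simpa using h1
    · unfold hammingNorm
      rw [show (Finset.univ.filter fun i : Fin m → F => (1 : F) ≠ 0) = Finset.univ from
        Finset.filter_true_of_mem fun _ _ => one_ne_zero]
      exact Finset.card_univ
  · -- intersection numbers
    intro b c hbc
    have h0 := hbc 0 0 (by rw [DMC.dist_eq hmem, DMC.synd_zero, DMC.wS_zero])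
    have hx1dist : distToCode (C : Set ((Fin m → F) → F))
        (Pi.single (0 : Fin m → F) (1 : F)) = 1 := by
      rw [DMC.dist_eq hmem, DMC.synd_single, DMC.wS_eq_one_iff]
      exact one_ne_zero
    have h1 := hbc 1 (Pi.single (0 : Fin m → F) (1 : F)) hx1dist
    have h2 := hbc 2 x₂ hx2dist
    have hs1 : (DMC.synd (Pi.single (0 : Fin m → F) (1 : F))).1 ≠ (0 : F) := by
      rw [DMC.synd_single]
      exact one_ne_zero
    have hs2 : (DMC.synd x₂).1 = (0 : F) := by rw [hx2synd]
    refine ⟨?_, ?_, ?_, ?_⟩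
    · rw [← h0.1, DMC.countA0 hmem 0 DMC.synd_zero]
    · rw [← h1.1, DMC.countA1 hmem _ hs1]
    · rw [← h1.2, DMC.countB1 hmem _ hs1]
    · rw [← h2.2, DMC.countB2 hmem _ hs2]
end

section
/- Let q ≥ 3 be a prime power, let 3 ≤ n ≤ q, and let a_1, …, a_n be n distinct elements of 𝔽_q. Let C be the Latin-square code C = {x ∈ 𝔽_q^n : x_1+⋯+x_n = 0 and a_1x_1+⋯+a_nx_n = 0}. Then C is a linear [n, n−2, 3]_q code, it is completely regular with covering radius 2, its dual C⊥ is antipodal, and its intersection array is (n(q−1), (q−n+1)(n−1); 1, n(n−1)). -/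
open Finset

variable {F : Type*} [Field F] [Fintype F] [DecidableEq F]

set_option linter.unusedSectionVars false
set_option linter.unusedVariables false
set_option maxHeartbeats 1000000

namespace LSq
open Finset
variable {F : Type*} [Field F] [Fintype F] [DecidableEq F] {n : ℕ}

def Sv (x : Fin n → F) : F := ∑ i, x i
def Tv (a x : Fin n → F) : F := ∑ i, a i * x i

lemma Sv_update (x : Fin n → F) (i : Fin n) (v : F) :
    Sv (Function.update x i v) = Sv x + (v - x i) := by
  unfold Sv
  rw [Finset.sum_update_of_mem (mem_univ i), Finset.sdiff_singleton_eq_erase,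
    Finset.sum_erase_eq_sub (mem_univ i)]
  ring

lemma Tv_update (a x : Fin n → F) (i : Fin n) (v : F) :
    Tv a (Function.update x i v) = Tv a x + a i * (v - x i) := by
  have h : (fun j => a j * Function.update x i v j) = Function.update (fun j => a j * x j) i (a i * v) := by
    funext j
    by_cases hj : j = i
    · subst hj; simp
    · simp [Function.update_of_ne hj]
  unfold Tv
  rw [show ∑ j, a j * Function.update x i v j = ∑ j, Function.update (fun j => a j * x j) i (a i * v) j from by rw [h]]
  rw [Finset.sum_update_of_mem (mem_univ i), Finset.sdiff_singleton_eq_erase,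
    Finset.sum_erase_eq_sub (mem_univ i)]
  ring

lemma hammingDist_update (x : Fin n → F) (i : Fin n) (v : F) (hv : v ≠ x i) :
    hammingDist x (Function.update x i v) = 1 := by
  show (univ.filter fun j => x j ≠ Function.update x i v j).card = 1
  have : (univ.filter fun j => x j ≠ Function.update x i v j) = {i} := by
    ext j
    by_cases hj : j = i
    · subst hj; simp [hv.symm]
    · simp [Function.update_of_ne hj, hj]
  rw [this, Finset.card_singleton]

lemma hammingDist_update_le (x : Fin n → F) (i : Fin n) (v : F) :
    hammingDist x (Function.update x i v) ≤ 1 := by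
  by_cases hv : v = x i
  · subst hv; simp
  · rw [hammingDist_update x i v hv]

lemma exists_update_of_hammingDist_one {x y : Fin n → F} (h : hammingDist x y = 1) :
    ∃ i v, v ≠ x i ∧ y = Function.update x i v := by
  have h' : (univ.filter fun j => x j ≠ y j).card = 1 := h
  obtain ⟨i, hi⟩ := Finset.card_eq_one.mp h'
  have hmem : i ∈ univ.filter fun j => x j ≠ y j := hi ▸ Finset.mem_singleton_self i
  refine ⟨i, y i, fun hne => (Finset.mem_filter.mp hmem).2 hne.symm, ?_⟩
  funext j
  by_cases hj : j = i
  · subst hj; simp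
  · have : j ∉ ({i} : Finset (Fin n)) := by simpa using hj
    rw [← hi, Finset.mem_filter] at this
    push_neg at this
    rw [Function.update_of_ne hj, ← this (mem_univ j)]

open Classical in
noncomputable def Dval (a : Fin n → F) (s t : F) : ℕ :=
  if s = 0 ∧ t = 0 then 0 else if ∃ i, t = a i * s then 1 else 2

lemma Dval_le_two (a : Fin n → F) (s t : F) : Dval a s t ≤ 2 := by
  unfold Dval; split_ifs <;> omega

lemma Dval_eq_zero_iff (a : Fin n → F) (s t : F) : Dval a s t = 0 ↔ s = 0 ∧ t = 0 := by
  unfold Dval; split_ifs with h1 h2 <;> simp [h1]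

lemma Dval_eq_one_iff (a : Fin n → F) (s t : F) :
    Dval a s t = 1 ↔ s ≠ 0 ∧ ∃ i, t = a i * s := by
  unfold Dval
  split_ifs with h1 h2
  · simp [h1.1, h1.2]
  · simp only [true_iff]
    refine ⟨fun hs => h1 ⟨hs, ?_⟩, h2⟩
    obtain ⟨i, hi⟩ := h2; rw [hi, hs, mul_zero]
  · simp only [OfNat.ofNat_ne_one, false_iff]
    intro h; exact h2 h.2

lemma Dval_eq_two_iff (hn : 0 < n) (a : Fin n → F) (s t : F) :
    Dval a s t = 2 ↔ ∀ i, t ≠ a i * s := by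
  unfold Dval
  split_ifs with h1 h2
  · simp only [(by omega : (0:ℕ) ≠ 2), false_iff]
    push_neg
    exact ⟨⟨0, hn⟩, by rw [h1.2, h1.1, mul_zero]⟩
  · constructor
    · intro h; exact absurd h (by norm_num)
    · intro h; obtain ⟨i, hi⟩ := h2; exact absurd hi (h i)
  · push_neg at h2
    simp [h2]

variable {a : Fin n → F} {C : Submodule F (Fin n → F)}

lemma distSet_nonempty (x : Fin n → F) :
    {d : ℕ | ∃ c ∈ (C : Set (Fin n → F)), hammingDist x c = d}.Nonempty :=
  ⟨_, 0, C.zero_mem, rfl⟩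

lemma distToCode_le {c : Fin n → F} (hc : c ∈ C) (x : Fin n → F) :
    distToCode (C : Set (Fin n → F)) x ≤ hammingDist x c :=
  Nat.sInf_le ⟨c, hc, rfl⟩

lemma exists_codeword (x : Fin n → F) :
    ∃ c ∈ C, hammingDist x c = distToCode (C : Set (Fin n → F)) x :=
  Nat.sInf_mem (distSet_nonempty x)

lemma distToCode_eq (hn : 2 ≤ n) (ha : Function.Injective a)
    (hC : ∀ x : Fin n → F, x ∈ C ↔ Sv x = 0 ∧ Tv a x = 0) (x : Fin n → F) :
    distToCode (C : Set (Fin n → F)) x = Dval a (Sv x) (Tv a x) := by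
  set s := Sv x with hs_def
  set t := Tv a x with ht_def
  by_cases h0 : s = 0 ∧ t = 0
  · rw [(Dval_eq_zero_iff a s t).mpr h0]
    have hx : x ∈ C := (hC x).mpr h0
    have := distToCode_le hx x
    simpa using this
  · by_cases h1 : ∃ k, t = a k * s
    · obtain ⟨k, hk⟩ := h1
      have hs : s ≠ 0 := fun hs => h0 ⟨hs, by rw [hk, hs, mul_zero]⟩
      rw [(Dval_eq_one_iff a s t).mpr ⟨hs, k, hk⟩]
      have hub : distToCode (C : Set (Fin n → F)) x ≤ 1 := by
        have hmem : Function.update x k (x k - s) ∈ C := by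
          rw [hC]
          constructor
          · rw [Sv_update]; ring
          · rw [Tv_update]; rw [← ht_def, hk]; ring
        have := distToCode_le hmem x
        rwa [hammingDist_update x k (x k - s) (by intro h; apply hs; linear_combination -h)] at this
      have hlb : distToCode (C : Set (Fin n → F)) x ≠ 0 := by
        intro h
        obtain ⟨c, hc, hdc⟩ := exists_codeword (C := C) x
        rw [h] at hdc
        have : x = c := hammingDist_eq_zero.mp hdc
        exact h0 (by rw [hs_def, ht_def, this]; exact (hC c).mp hc)
      omega
    · have h2 : ∀ i, t ≠ a i * s := by push_neg at h1; exact h1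
      rw [(Dval_eq_two_iff (by omega) a s t).mpr h2]
      set i0 : Fin n := ⟨0, by omega⟩
      set i1 : Fin n := ⟨1, by omega⟩
      have h01 : i0 ≠ i1 := by simp [i0, i1, Fin.ext_iff]
      have ha01 : a i0 - a i1 ≠ 0 := sub_ne_zero.mpr (fun h => h01 (ha h))
      set δ0 : F := (a i1 * s - t) / (a i0 - a i1) with hδ0
      set c : Fin n → F := Function.update (Function.update x i0 (x i0 + δ0)) i1
        (Function.update x i0 (x i0 + δ0) i1 + (-s - δ0)) with hc_def
      have hub : distToCode (C : Set (Fin n → F)) x ≤ 2 := by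
        have hmem : c ∈ C := by
          rw [hC]
          constructor
          · rw [hc_def, Sv_update, Sv_update]; ring
          · rw [hc_def, Tv_update, Tv_update]
            rw [Function.update_of_ne h01.symm]
            rw [← ht_def]
            rw [hδ0]
            field_simp
            ring
        calc distToCode (C : Set (Fin n → F)) x ≤ hammingDist x c := distToCode_le hmem x
          _ ≤ hammingDist x (Function.update x i0 (x i0 + δ0)) + hammingDist (Function.update x i0 (x i0 + δ0)) c := hammingDist_triangle _ _ _
          _ ≤ 1 + 1 := add_le_add (hammingDist_update_le _ _ _) (hammingDist_update_le _ _ _)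
      have hlb : 2 ≤ distToCode (C : Set (Fin n → F)) x := by
        obtain ⟨cw, hcw, hdcw⟩ := exists_codeword (C := C) x
        rw [← hdcw]
        by_contra hlt
        push_neg at hlt
        interval_cases hd : hammingDist x cw
        · have : x = cw := hammingDist_eq_zero.mp hd
          exact h0 (by rw [hs_def, ht_def, this]; exact (hC cw).mp hcw)
        · obtain ⟨i, v, hv, rfl⟩ := exists_update_of_hammingDist_one hd
          obtain ⟨hS, hT⟩ := (hC _).mp hcw
          rw [Sv_update] at hS
          rw [Tv_update] at hT
          apply h2 i
          rw [← hs_def] at hS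
          rw [← ht_def] at hT
          have hδ : v - x i = -s := by linear_combination hS
          rw [hδ] at hT
          linear_combination hT
      omega

open Classical in
lemma card_neighbors (x : Fin n → F) (P : (Fin n → F) → Prop) :
    Nat.card {y : Fin n → F | hammingDist x y = 1 ∧ P y} =
      ((univ : Finset (Fin n × F)).filter fun p =>
        p.2 ≠ 0 ∧ P (Function.update x p.1 (x p.1 + p.2))).card := by
  classical
  have hset : {y : Fin n → F | hammingDist x y = 1 ∧ P y} =
      (fun p : Fin n × F => Function.update x p.1 (x p.1 + p.2)) ''
        (((univ : Finset (Fin n × F)).filter fun p =>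
          p.2 ≠ 0 ∧ P (Function.update x p.1 (x p.1 + p.2))) : Finset (Fin n × F)) := by
    ext y
    simp only [Set.mem_setOf_eq, Set.mem_image, Finset.mem_coe, Finset.mem_filter,
      Finset.mem_univ, true_and]
    constructor
    · rintro ⟨h1, hP⟩
      obtain ⟨i, v, hv, rfl⟩ := exists_update_of_hammingDist_one h1
      have hvv : x i + (v - x i) = v := by ring
      exact ⟨(i, v - x i), ⟨sub_ne_zero.mpr hv, by rw [hvv]; exact hP⟩, by rw [hvv]⟩
    · rintro ⟨⟨i, δ⟩, ⟨hδ, hP⟩, rfl⟩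
      refine ⟨hammingDist_update x i _ ?_, hP⟩
      intro h
      exact hδ (by linear_combination h)
  rw [hset, Nat.card_coe_set_eq, Set.ncard_image_of_injOn, Set.ncard_coe_finset]
  intro p hp q hq hpq
  simp only [Finset.coe_filter, Set.mem_setOf_eq] at hp hq
  by_cases hij : p.1 = q.1
  · have := congrFun hpq p.1
    dsimp only at this
    rw [Function.update_self, hij, Function.update_self, ← hij] at this
    have h2 : p.2 = q.2 := by linear_combination this
    exact Prod.ext hij h2
  · have := congrFun hpq p.1
    dsimp only at this
    rw [Function.update_self, Function.update_of_ne hij] at this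
    exact absurd (by linear_combination this : p.2 = 0) hp.2.1

lemma card_filter_prod (P : Fin n × F → Prop) [DecidablePred P] :
    ((univ : Finset (Fin n × F)).filter P).card
      = ∑ i : Fin n, ((univ : Finset F).filter fun δ => P (i, δ)).card := by
  classical
  rw [Finset.card_filter, Fintype.sum_prod_type]
  congr 1
  funext i
  rw [Finset.card_filter]

noncomputable def Bf (a : Fin n → F) (s t : F) (i : Fin n) : Finset F :=
  (univ.erase i).image fun j => (a j * s - t) / (a i - a j)

lemma mem_Bf {a : Fin n → F} (ha : Function.Injective a) (s t : F) {i : Fin n}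
    (hi : a i * s ≠ t) (δ : F) :
    δ ∈ Bf a s t i ↔ ∃ j, t + a i * δ = a j * (s + δ) := by
  unfold Bf
  simp only [Finset.mem_image, Finset.mem_erase, Finset.mem_univ, and_true]
  constructor
  · rintro ⟨j, hj, rfl⟩
    have hij : a i - a j ≠ 0 := sub_ne_zero.mpr fun h => hj (ha h).symm
    refine ⟨j, ?_⟩
    field_simp
    ring
  · rintro ⟨j, hj⟩
    have hji : j ≠ i := by
      rintro rfl
      exact hi (by linear_combination -hj)
    have hij : a i - a j ≠ 0 := sub_ne_zero.mpr fun h => hji (ha h).symm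
    refine ⟨j, hji, ?_⟩
    field_simp
    linear_combination -hj

lemma card_Bf {a : Fin n → F} (ha : Function.Injective a) {s t : F} {i : Fin n}
    (hi : a i * s ≠ t) : (Bf a s t i).card = n - 1 := by
  unfold Bf
  rw [Finset.card_image_of_injOn, Finset.card_erase_of_mem (mem_univ i),
    Finset.card_univ, Fintype.card_fin]
  intro j hj j' hj' h
  have hj1 : j ≠ i := (Finset.mem_erase.mp (by exact_mod_cast hj)).1
  have hj1' : j' ≠ i := (Finset.mem_erase.mp (by exact_mod_cast hj')).1
  have hij : a i - a j ≠ 0 := sub_ne_zero.mpr fun h => hj1 (ha h).symm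
  have hij' : a i - a j' ≠ 0 := sub_ne_zero.mpr fun h => hj1' (ha h).symm
  rw [div_eq_div_iff hij hij'] at h
  have hz : (a i * s - t) * (a j - a j') = 0 := by linear_combination h
  have := (mul_eq_zero.mp hz).resolve_left (sub_ne_zero.mpr hi)
  exact ha (by linear_combination this)

lemma count0b (hn : 0 < n) (a : Fin n → F) {s t : F} (hs : s = 0) (ht : t = 0) :
    ((univ : Finset (Fin n × F)).filter fun p =>
      p.2 ≠ 0 ∧ Dval a (s + p.2) (t + a p.1 * p.2) = 1).card
      = n * (Fintype.card F - 1) := by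
  classical
  subst hs ht
  have heq : ((univ : Finset (Fin n × F)).filter fun p =>
      p.2 ≠ 0 ∧ Dval a (0 + p.2) (0 + a p.1 * p.2) = 1)
      = (univ : Finset (Fin n × F)).filter fun p => p.2 ≠ 0 := by
    ext p
    simp only [Finset.mem_filter, Finset.mem_univ, true_and, and_iff_left_iff_imp]
    intro hδ
    rw [Dval_eq_one_iff]
    exact ⟨by simpa using hδ, p.1, by ring⟩
  rw [heq, card_filter_prod]
  have : ∀ i : Fin n, ((univ : Finset F).filter fun δ => ((i, δ) : Fin n × F).2 ≠ 0).card
      = Fintype.card F - 1 := by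
    intro i
    simp only []
    rw [Finset.filter_ne', Finset.card_erase_of_mem (mem_univ 0), Finset.card_univ]
  rw [Finset.sum_congr rfl fun i _ => this i, Finset.sum_const, Finset.card_univ,
    Fintype.card_fin, smul_eq_mul]

lemma count1c {a : Fin n → F} (ha : Function.Injective a) {s t : F} (hs : s ≠ 0)
    {k : Fin n} (ht : t = a k * s) :
    ((univ : Finset (Fin n × F)).filter fun p =>
      p.2 ≠ 0 ∧ Dval a (s + p.2) (t + a p.1 * p.2) = 0).card = 1 := by
  classical
  have heq : ((univ : Finset (Fin n × F)).filter fun p =>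
      p.2 ≠ 0 ∧ Dval a (s + p.2) (t + a p.1 * p.2) = 0) = {(k, -s)} := by
    ext ⟨i, δ⟩
    simp only [Finset.mem_filter, Finset.mem_univ, true_and, Finset.mem_singleton,
      Dval_eq_zero_iff, Prod.mk.injEq]
    constructor
    · rintro ⟨hδ, h1, h2⟩
      have hδs : δ = -s := by linear_combination h1
      subst hδs
      have : a i * s = a k * s := by linear_combination -h2 + ht
      exact ⟨ha (mul_right_cancel₀ hs this), rfl⟩
    · rintro ⟨rfl, rfl⟩
      exact ⟨neg_ne_zero.mpr hs, by ring, by rw [ht]; ring⟩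
  rw [heq, Finset.card_singleton]

lemma count1b (hn : 3 ≤ n) (hnq : n ≤ Fintype.card F) {a : Fin n → F}
    (ha : Function.Injective a) {s t : F} (hs : s ≠ 0) {k : Fin n} (ht : t = a k * s) :
    ((univ : Finset (Fin n × F)).filter fun p =>
      p.2 ≠ 0 ∧ Dval a (s + p.2) (t + a p.1 * p.2) = 2).card
      = (Fintype.card F - n + 1) * (n - 1) := by
  classical
  rw [card_filter_prod]
  have hfk : ((univ : Finset F).filter fun δ =>
      (((k, δ) : Fin n × F).2 ≠ 0 ∧ Dval a (s + δ) (t + a k * δ) = 2)).card = 0 := by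
    rw [Finset.card_eq_zero, Finset.filter_eq_empty_iff]
    rintro δ - ⟨hδ, hD⟩
    rw [Dval_eq_two_iff (by omega)] at hD
    exact hD k (by rw [ht]; ring)
  have hfi : ∀ i : Fin n, i ≠ k → ((univ : Finset F).filter fun δ =>
      (((i, δ) : Fin n × F).2 ≠ 0 ∧ Dval a (s + δ) (t + a i * δ) = 2)).card
      = Fintype.card F - n + 1 := by
    intro i hik
    have hi : a i * s ≠ t := by
      rw [ht]
      intro h
      exact hik (ha (mul_right_cancel₀ hs h))
    have heq : ((univ : Finset F).filter fun δ =>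
        (((i, δ) : Fin n × F).2 ≠ 0 ∧ Dval a (s + δ) (t + a i * δ) = 2))
        = univ \ Bf a s t i := by
      ext δ
      simp only [Finset.mem_filter, Finset.mem_univ, true_and, Finset.mem_sdiff]
      rw [mem_Bf ha s t hi]
      constructor
      · rintro ⟨hδ, hD⟩
        rw [Dval_eq_two_iff (by omega)] at hD
        rintro ⟨j, hj⟩
        exact hD j hj
      · intro hB
        push_neg at hB
        have hδ : δ ≠ 0 := by
          rintro rfl
          exact hB k (by rw [ht]; ring)
        refine ⟨hδ, ?_⟩
        rw [Dval_eq_two_iff (by omega)]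
        exact hB
    rw [heq, Finset.card_sdiff_of_subset (Finset.subset_univ _), Finset.card_univ, card_Bf ha hi]
    omega
  rw [← Finset.sum_erase_add _ _ (mem_univ k)]
  dsimp only [] at hfk
  rw [hfk, add_zero]
  rw [Finset.sum_congr rfl fun i hi => hfi i (Finset.mem_erase.mp hi).1,
    Finset.sum_const, Finset.card_erase_of_mem (mem_univ k), Finset.card_univ,
    Fintype.card_fin, smul_eq_mul, mul_comm]

lemma count2c (hn : 0 < n) {a : Fin n → F} (ha : Function.Injective a) {s t : F}
    (h2 : ∀ j, t ≠ a j * s) :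
    ((univ : Finset (Fin n × F)).filter fun p =>
      p.2 ≠ 0 ∧ Dval a (s + p.2) (t + a p.1 * p.2) = 1).card = n * (n - 1) := by
  classical
  rw [card_filter_prod]
  have hfi : ∀ i : Fin n, ((univ : Finset F).filter fun δ =>
      (((i, δ) : Fin n × F).2 ≠ 0 ∧ Dval a (s + δ) (t + a i * δ) = 1)).card = n - 1 := by
    intro i
    have hi : a i * s ≠ t := fun h => h2 i h.symm
    have heq : ((univ : Finset F).filter fun δ =>
        (((i, δ) : Fin n × F).2 ≠ 0 ∧ Dval a (s + δ) (t + a i * δ) = 1))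
        = Bf a s t i := by
      ext δ
      simp only [Finset.mem_filter, Finset.mem_univ, true_and]
      rw [mem_Bf ha s t hi, Dval_eq_one_iff]
      constructor
      · rintro ⟨hδ, hsd, j, hj⟩
        exact ⟨j, by linear_combination hj⟩
      · rintro ⟨j, hj⟩
        have hδ : δ ≠ 0 := by
          rintro rfl
          exact h2 j (by linear_combination hj)
        have hsd : s + δ ≠ 0 := by
          intro h
          have hδs : δ = -s := by linear_combination h
          subst hδs
          exact h2 i (by linear_combination hj)
        exact ⟨hδ, hsd, j, by linear_combination hj⟩
    rw [heq, card_Bf ha hi]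
  rw [Finset.sum_congr rfl fun i _ => hfi i, Finset.sum_const, Finset.card_univ,
    Fintype.card_fin, smul_eq_mul]

lemma card_neighbors_Dval (a : Fin n → F) (x : Fin n → F) (m : ℕ) :
    Nat.card {y : Fin n → F | hammingDist x y = 1 ∧ Dval a (Sv y) (Tv a y) = m} =
      ((univ : Finset (Fin n × F)).filter fun p =>
        p.2 ≠ 0 ∧ Dval a (Sv x + p.2) (Tv a x + a p.1 * p.2) = m).card := by
  rw [card_neighbors x (fun y => Dval a (Sv y) (Tv a y) = m)]
  congr 1
  ext p
  simp only [Finset.mem_filter, Finset.mem_univ, true_and]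
  rw [Sv_update, Tv_update, add_sub_cancel_left]

variable {a : Fin n → F} {C : Submodule F (Fin n → F)}

lemma masterB (hn : 3 ≤ n) (hnq : n ≤ Fintype.card F) (ha : Function.Injective a)
    (hC : ∀ x : Fin n → F, x ∈ C ↔ Sv x = 0 ∧ Tv a x = 0)
    (l : ℕ) (x : Fin n → F) (hx : distToCode (C : Set (Fin n → F)) x = l) :
    Nat.card {y : Fin n → F | hammingDist x y = 1 ∧ distToCode (C : Set (Fin n → F)) y = l + 1}
      = if l = 0 then n * (Fintype.card F - 1)
        else if l = 1 then (Fintype.card F - n + 1) * (n - 1) else 0 := by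
  classical
  have hn2 : 2 ≤ n := by omega
  rw [distToCode_eq hn2 ha hC] at hx
  have hrw : {y : Fin n → F | hammingDist x y = 1 ∧ distToCode (C : Set (Fin n → F)) y = l + 1}
      = {y : Fin n → F | hammingDist x y = 1 ∧ Dval a (Sv y) (Tv a y) = l + 1} := by
    ext y
    rw [Set.mem_setOf_eq, Set.mem_setOf_eq, distToCode_eq hn2 ha hC]
  rw [hrw, card_neighbors_Dval]
  have hl : l ≤ 2 := hx ▸ Dval_le_two a _ _
  interval_cases l
  · obtain ⟨hs, ht⟩ := (Dval_eq_zero_iff a _ _).mp hx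
    simp only [if_pos rfl]
    exact count0b (by omega) a hs ht
  · obtain ⟨hs, k, ht⟩ := (Dval_eq_one_iff a _ _).mp hx
    simp only [if_neg one_ne_zero, if_pos rfl]
    exact count1b hn hnq ha hs ht
  · simp only [if_neg (by omega : (2:ℕ) ≠ 0), if_neg (by omega : (2:ℕ) ≠ 1)]
    rw [Finset.card_eq_zero, Finset.filter_eq_empty_iff]
    rintro p - ⟨-, hD⟩
    exact absurd (hD ▸ Dval_le_two a (Sv x + p.2) (Tv a x + a p.1 * p.2)) (by omega)

lemma masterC (hn : 3 ≤ n) (hnq : n ≤ Fintype.card F) (ha : Function.Injective a)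
    (hC : ∀ x : Fin n → F, x ∈ C ↔ Sv x = 0 ∧ Tv a x = 0)
    (l : ℕ) (x : Fin n → F) (hx : distToCode (C : Set (Fin n → F)) x = l) :
    Nat.card {y : Fin n → F | hammingDist x y = 1 ∧ distToCode (C : Set (Fin n → F)) y + 1 = l}
      = if l = 1 then 1 else if l = 2 then n * (n - 1) else 0 := by
  classical
  have hn2 : 2 ≤ n := by omega
  rw [distToCode_eq hn2 ha hC] at hx
  have hl : l ≤ 2 := hx ▸ Dval_le_two a _ _
  interval_cases l
  · have hrw : {y : Fin n → F | hammingDist x y = 1 ∧ distToCode (C : Set (Fin n → F)) y + 1 = 0}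
        = (∅ : Set (Fin n → F)) := by
      ext y; simp
    rw [hrw]
    simp
  · obtain ⟨hs, k, ht⟩ := (Dval_eq_one_iff a _ _).mp hx
    have hrw : {y : Fin n → F | hammingDist x y = 1 ∧ distToCode (C : Set (Fin n → F)) y + 1 = 1}
        = {y : Fin n → F | hammingDist x y = 1 ∧ Dval a (Sv y) (Tv a y) = 0} := by
      ext y
      rw [Set.mem_setOf_eq, Set.mem_setOf_eq, distToCode_eq hn2 ha hC]
      exact and_congr_right fun _ => by omega
    rw [hrw, card_neighbors_Dval]
    simp only [if_pos rfl]
    exact count1c ha hs ht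
  · have h2 : ∀ j, Tv a x ≠ a j * Sv x := (Dval_eq_two_iff (by omega) a _ _).mp hx
    have hrw : {y : Fin n → F | hammingDist x y = 1 ∧ distToCode (C : Set (Fin n → F)) y + 1 = 2}
        = {y : Fin n → F | hammingDist x y = 1 ∧ Dval a (Sv y) (Tv a y) = 1} := by
      ext y
      rw [Set.mem_setOf_eq, Set.mem_setOf_eq, distToCode_eq hn2 ha hC]
      exact and_congr_right fun _ => by omega
    rw [hrw, card_neighbors_Dval]
    simp only [if_neg (by omega : (2:ℕ) ≠ 1), if_pos rfl]
    exact count2c (by omega) ha h2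

lemma Sv_zero : Sv (0 : Fin n → F) = 0 := by simp [Sv]
lemma Tv_zero (a : Fin n → F) : Tv a 0 = 0 := by simp [Tv]

lemma dist_zero (hn : 3 ≤ n) (ha : Function.Injective a)
    (hC : ∀ x : Fin n → F, x ∈ C ↔ Sv x = 0 ∧ Tv a x = 0) :
    distToCode (C : Set (Fin n → F)) 0 = 0 := by
  rw [distToCode_eq (by omega) ha hC, Sv_zero, Tv_zero]
  exact (Dval_eq_zero_iff a 0 0).mpr ⟨rfl, rfl⟩

lemma dist_w1 (hn : 3 ≤ n) (ha : Function.Injective a)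
    (hC : ∀ x : Fin n → F, x ∈ C ↔ Sv x = 0 ∧ Tv a x = 0) :
    distToCode (C : Set (Fin n → F))
      (Function.update (0 : Fin n → F) ⟨0, by omega⟩ 1) = 1 := by
  rw [distToCode_eq (by omega) ha hC, Sv_update, Tv_update, Sv_zero, Tv_zero]
  simp only [Pi.zero_apply, sub_zero, zero_add, mul_one]
  exact (Dval_eq_one_iff a 1 _).mpr ⟨one_ne_zero, ⟨0, by omega⟩, by ring⟩

lemma dist_w2 (hn : 3 ≤ n) (ha : Function.Injective a)
    (hC : ∀ x : Fin n → F, x ∈ C ↔ Sv x = 0 ∧ Tv a x = 0) :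
    distToCode (C : Set (Fin n → F))
      (Function.update (Function.update (0 : Fin n → F) ⟨0, by omega⟩ 1) ⟨1, by omega⟩ (-1)) = 2 := by
  have h01 : (⟨0, by omega⟩ : Fin n) ≠ ⟨1, by omega⟩ := by simp [Fin.ext_iff]
  rw [distToCode_eq (by omega) ha hC, Sv_update, Tv_update, Sv_update, Tv_update, Sv_zero, Tv_zero]
  rw [Function.update_of_ne h01.symm]
  simp only [Pi.zero_apply, sub_zero, zero_add, mul_one]
  have hs : (1 : F) + -1 = 0 := by ring
  rw [hs]
  apply (Dval_eq_two_iff (by omega) a _ _).mpr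
  intro j
  rw [mul_zero]
  intro h
  have : a ⟨0, by omega⟩ = a ⟨1, by omega⟩ := by linear_combination h
  exact h01 (ha this)

lemma three_le_norm (ha : Function.Injective a)
    (hC : ∀ x : Fin n → F, x ∈ C ↔ Sv x = 0 ∧ Tv a x = 0)
    {z : Fin n → F} (hz : z ∈ C) (hz0 : z ≠ 0) : 3 ≤ hammingNorm z := by
  obtain ⟨hS, hT⟩ := (hC z).mp hz
  by_contra hlt
  push_neg at hlt
  set sup := univ.filter (fun j => z j ≠ 0) with hsup
  have hSsum : Sv z = ∑ j ∈ sup, z j :=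
    (Finset.sum_filter_of_ne (fun j _ h => h)).symm
  have hTsum : Tv a z = ∑ j ∈ sup, a j * z j := by
    rw [hsup]
    symm
    apply Finset.sum_filter_of_ne
    intro j _ h h0
    exact h (by rw [h0, mul_zero])
  have hcard : sup.card ≤ 2 := by
    have : hammingNorm z = sup.card := rfl
    omega
  interval_cases hc : sup.card
  · rw [Finset.card_eq_zero] at hc
    apply hz0
    funext j
    by_contra hj
    have : j ∈ sup := Finset.mem_filter.mpr ⟨mem_univ j, hj⟩
    rw [hc] at this
    exact absurd this (Finset.notMem_empty j)
  · obtain ⟨i, hi⟩ := Finset.card_eq_one.mp hc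
    have hmem : i ∈ sup := by rw [hi]; exact Finset.mem_singleton_self i
    have hzi : z i ≠ 0 := (Finset.mem_filter.mp hmem).2
    rw [hSsum, hi, Finset.sum_singleton] at hS
    exact hzi hS
  · obtain ⟨i, j, hij, hset⟩ := Finset.card_eq_two.mp hc
    have hmemi : i ∈ sup := by rw [hset]; exact Finset.mem_insert_self i {j}
    have hzi : z i ≠ 0 := (Finset.mem_filter.mp hmemi).2
    rw [hSsum, hset, Finset.sum_pair hij] at hS
    rw [hTsum, hset, Finset.sum_pair hij] at hT
    have hzero : (a i - a j) * z i = 0 := by linear_combination hT - a j * hS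
    have := (mul_eq_zero.mp hzero).resolve_right hzi
    exact hij (ha (by linear_combination this))

lemma w3_spec (hn : 3 ≤ n) (ha : Function.Injective a)
    (hC : ∀ x : Fin n → F, x ∈ C ↔ Sv x = 0 ∧ Tv a x = 0) :
    ∃ w : Fin n → F, w ∈ C ∧ w ≠ 0 ∧ hammingDist w 0 = 3 := by
  set i0 : Fin n := ⟨0, by omega⟩
  set i1 : Fin n := ⟨1, by omega⟩
  set i2 : Fin n := ⟨2, by omega⟩
  have h01 : i0 ≠ i1 := by simp [i0, i1, Fin.ext_iff]
  have h02 : i0 ≠ i2 := by simp [i0, i2, Fin.ext_iff]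
  have h12 : i1 ≠ i2 := by simp [i1, i2, Fin.ext_iff]
  set w : Fin n → F := Function.update (Function.update
    (Function.update (0 : Fin n → F) i0 (a i1 - a i2)) i1 (a i2 - a i0)) i2 (a i0 - a i1) with hw
  have hwi2 : w i2 = a i0 - a i1 := by rw [hw, Function.update_self]
  have hwi1 : w i1 = a i2 - a i0 := by
    rw [hw, Function.update_of_ne h12, Function.update_self]
  have hwi0 : w i0 = a i1 - a i2 := by
    rw [hw, Function.update_of_ne h02, Function.update_of_ne h01, Function.update_self]
  have hwo : ∀ j, j ≠ i0 → j ≠ i1 → j ≠ i2 → w j = 0 := by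
    intro j hj0 hj1 hj2
    rw [hw, Function.update_of_ne hj2, Function.update_of_ne hj1, Function.update_of_ne hj0]
    rfl
  have hdist : hammingDist w 0 = 3 := by
    have hfil : (univ.filter fun j => w j ≠ (0 : Fin n → F) j) = {i0, i1, i2} := by
      ext j
      simp only [Finset.mem_filter, Finset.mem_univ, true_and, Pi.zero_apply,
        Finset.mem_insert, Finset.mem_singleton]
      constructor
      · intro hj
        by_contra hcon
        push_neg at hcon
        exact hj (hwo j hcon.1 hcon.2.1 hcon.2.2)
      · rintro (rfl | rfl | rfl)
        · rw [hwi0]; exact sub_ne_zero.mpr fun h => h12 (ha h)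
        · rw [hwi1]; exact sub_ne_zero.mpr fun h => h02 (ha h).symm
        · rw [hwi2]; exact sub_ne_zero.mpr fun h => h01 (ha h)
    show (univ.filter fun j => w j ≠ (0 : Fin n → F) j).card = 3
    rw [hfil]
    rw [Finset.card_insert_of_notMem (by simp [h01, h02]),
      Finset.card_insert_of_notMem (by simp [h12]), Finset.card_singleton]
  refine ⟨w, ?_, ?_, hdist⟩
  · rw [hC]
    constructor
    · rw [hw, Sv_update, Sv_update, Sv_update, Sv_zero]
      rw [Function.update_of_ne h12.symm, Function.update_of_ne h02.symm,
        Function.update_of_ne h01.symm]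
      simp only [Pi.zero_apply]
      ring
    · rw [hw, Tv_update, Tv_update, Tv_update, Tv_zero]
      rw [Function.update_of_ne h12.symm, Function.update_of_ne h02.symm,
        Function.update_of_ne h01.symm]
      simp only [Pi.zero_apply]
      ring
  · intro h
    rw [h] at hdist
    simp at hdist

lemma finrank_C (hn : 3 ≤ n) (ha : Function.Injective a)
    (hC : ∀ x : Fin n → F, x ∈ C ↔ Sv x = 0 ∧ Tv a x = 0) :
    Module.finrank F C = n - 2 := by
  set L : (Fin n → F) →ₗ[F] F × F :=
    { toFun := fun x => (Sv x, Tv a x)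
      map_add' := fun x y => by
        unfold Sv Tv
        simp only [Pi.add_apply, Prod.mk_add_mk, Prod.mk.injEq]
        exact ⟨Finset.sum_add_distrib, by
          rw [← Finset.sum_add_distrib]
          exact Finset.sum_congr rfl fun i _ => by ring⟩
      map_smul' := fun c x => by
        unfold Sv Tv
        simp only [Pi.smul_apply, smul_eq_mul, RingHom.id_apply, Prod.smul_mk, Prod.mk.injEq]
        exact ⟨by rw [Finset.mul_sum], by
          rw [Finset.mul_sum]
          exact Finset.sum_congr rfl fun i _ => by ring⟩ } with hL
  have hker : C = LinearMap.ker L := by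
    ext x
    rw [hC, LinearMap.mem_ker]
    show _ ↔ (Sv x, Tv a x) = 0
    rw [Prod.ext_iff]
    rfl
  have hsurj : Function.Surjective L := by
    rintro ⟨u, v⟩
    set i0 : Fin n := ⟨0, by omega⟩
    set i1 : Fin n := ⟨1, by omega⟩
    have h01 : i0 ≠ i1 := by simp [i0, i1, Fin.ext_iff]
    have ha01 : a i0 - a i1 ≠ 0 := sub_ne_zero.mpr fun h => h01 (ha h)
    set x0 : F := (v - a i1 * u) / (a i0 - a i1) with hx0
    refine ⟨Function.update (Function.update 0 i0 x0) i1 (u - x0), ?_⟩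
    show (Sv _, Tv a _) = (u, v)
    rw [Sv_update, Tv_update, Sv_update, Tv_update, Sv_zero, Tv_zero,
      Function.update_of_ne h01.symm]
    simp only [Pi.zero_apply, sub_zero, zero_add]
    rw [Prod.mk.injEq]
    constructor
    · ring
    · rw [hx0]
      field_simp
      ring
  have hrange : LinearMap.range L = ⊤ := LinearMap.range_eq_top.mpr hsurj
  have h := LinearMap.finrank_range_add_finrank_ker L
  rw [hrange, finrank_top, Module.finrank_pi, Fintype.card_fin] at h
  have h2 : Module.finrank F (F × F) = 2 := by
    rw [Module.finrank_prod, Module.finrank_self]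
  rw [h2] at h
  have : Module.finrank F C = Module.finrank F (LinearMap.ker L) := by rw [hker]
  omega

end LSq

/-- the Latin-square code `{x : Σxᵢ = 0, Σaᵢxᵢ = 0}` (with `a₁,…,a_n` distinct,
`3 ≤ n ≤ q`) is a `[n, n-2, 3]_q` code, completely regular with covering radius 2, with
antipodal dual and intersection array `(n(q-1), (q-n+1)(n-1); 1, n(n-1))`. -/
theorem latin_square_code
    {F : Type*} [Field F] [Fintype F] [DecidableEq F] {n : ℕ}
    (hq : 3 ≤ Fintype.card F) (hn : 3 ≤ n) (hnq : n ≤ Fintype.card F)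
    (a : Fin n → F) (ha : Function.Injective a)
    (C : Submodule F (Fin n → F))
    (hC : ∀ x : Fin n → F, x ∈ C ↔
      ((∑ i, x i) = 0 ∧ (∑ i, a i * x i) = 0)) :
    Module.finrank F C = n - 2 ∧
    minDist (C : Set (Fin n → F)) = 3 ∧
    IsCompletelyRegular (C : Set (Fin n → F)) ∧
    coveringRadius (C : Set (Fin n → F)) = 2 ∧
    IsAntipodal (dualSet (C : Set (Fin n → F))) ∧
    ∀ b c : ℕ → ℕ, HasIntersectionNumbers (C : Set (Fin n → F)) b c →
      b 0 = n * (Fintype.card F - 1) ∧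
      b 1 = (Fintype.card F - n + 1) * (n - 1) ∧
      c 1 = 1 ∧
      c 2 = n * (n - 1) := by
  classical
  have hC' : ∀ x : Fin n → F, x ∈ C ↔ LSq.Sv x = 0 ∧ LSq.Tv a x = 0 := hC
  have hn2 : 2 ≤ n := by omega
  have hbdd : ∀ d ∈ {d : ℕ | ∃ x : Fin n → F, distToCode (C : Set (Fin n → F)) x = d},
      d ≤ 2 := by
    rintro d ⟨x, rfl⟩
    rw [LSq.distToCode_eq hn2 ha hC']
    exact LSq.Dval_le_two a _ _
  refine ⟨LSq.finrank_C hn ha hC', ?_, ?_, ?_, ?_, ?_⟩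
  · -- minDist = 3
    unfold minDist
    obtain ⟨w, hw, hw0, hwd⟩ := LSq.w3_spec hn ha hC'
    have hmem : (3:ℕ) ∈ {d : ℕ | ∃ x ∈ (C : Set (Fin n → F)), ∃ y ∈ (C : Set (Fin n → F)),
        x ≠ y ∧ hammingDist x y = d} := ⟨w, hw, 0, C.zero_mem, hw0, hwd⟩
    apply le_antisymm (Nat.sInf_le hmem)
    apply le_csInf ⟨3, hmem⟩
    rintro d ⟨x, hx, y, hy, hxy, rfl⟩
    rw [hammingDist_eq_hammingNorm]
    exact LSq.three_le_norm ha hC' (by rw [neg_add_eq_sub]; exact C.sub_mem hy hx) (by rw [neg_add_eq_sub]; exact sub_ne_zero.mpr hxy.symm)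
  · -- completely regular
    exact ⟨fun l => if l = 0 then n * (Fintype.card F - 1)
        else if l = 1 then (Fintype.card F - n + 1) * (n - 1) else 0,
      fun l => if l = 1 then 1 else if l = 2 then n * (n - 1) else 0,
      fun l x hx => ⟨LSq.masterB hn hnq ha hC' l x hx, LSq.masterC hn hnq ha hC' l x hx⟩⟩
  · -- covering radius
    unfold coveringRadius
    apply le_antisymm
    · exact csSup_le ⟨2, _, LSq.dist_w2 hn ha hC'⟩ hbdd
    · exact le_csSup ⟨2, hbdd⟩ ⟨_, LSq.dist_w2 hn ha hC'⟩
  · -- antipodal dual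
    refine ⟨fun _ => 1, fun x hx => ?_, ?_⟩
    · simp only [mul_one]
      exact ((hC x).mp hx).1
    · show (Finset.univ.filter fun i : Fin n => (1:F) ≠ 0).card = Fintype.card (Fin n)
      rw [Finset.filter_true_of_mem (fun _ _ => one_ne_zero), Finset.card_univ]
  · -- intersection numbers
    intro b c hbc
    have h0 := (hbc 0 0 (LSq.dist_zero hn ha hC')).1
    have h1 := hbc 1 _ (LSq.dist_w1 hn ha hC')
    have h2 := (hbc 2 _ (LSq.dist_w2 hn ha hC')).2
    refine ⟨?_, ?_, ?_, ?_⟩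
    · rw [← h0, LSq.masterB hn hnq ha hC' 0 0 (LSq.dist_zero hn ha hC')]
      simp
    · rw [← h1.1, LSq.masterB hn hnq ha hC' 1 _ (LSq.dist_w1 hn ha hC')]
      simp
    · rw [← h1.2, LSq.masterC hn hnq ha hC' 1 _ (LSq.dist_w1 hn ha hC')]
      simp
    · rw [← h2, LSq.masterC hn hnq ha hC' 2 _ (LSq.dist_w2 hn ha hC')]
      simp
end

section
/- Let F ⊆ K be finite fields (K an extension field of F via a ring homomorphism ι : F → K), let H be an r × n matrix over F, let C = {x ∈ F^n : Hx = 0}, and let C' = {x ∈ K^n : ι(H)x = 0} be the lifted code, where ι(H) is the entrywise image of H in K. Then C is self-dual (C = C⊥ in F^n) if and only if C' is self-dual (C' = (C')⊥ in K^n). -/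
open Finset

variable {F : Type*} [Field F] [Fintype F] [DecidableEq F]

open Matrix LinearMap Module

section DotForm
variable {E : Type*} [Field E] {r n : ℕ}

/-- The dot-product bilinear form on `Fin n → E`. -/
noncomputable def dotB (E : Type*) [Field E] (n : ℕ) : LinearMap.BilinForm E (Fin n → E) :=
  LinearMap.mk₂ E (fun x y => x ⬝ᵥ y)
    (fun x x' y => add_dotProduct x x' y)
    (fun a x y => smul_dotProduct a x y)
    (fun x y y' => dotProduct_add x y y')
    (fun a x y => dotProduct_smul a x y)

@[simp] lemma dotB_apply (x y : Fin n → E) : dotB E n x y = x ⬝ᵥ y := rfl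

lemma dotB_nondeg : (dotB E n).Nondegenerate := by
  refine ⟨fun x hx => ?_, fun x hx => ?_⟩ <;>
  · funext i
    simpa using hx (Pi.single i 1)

lemma dotB_refl : (dotB E n).IsRefl := by
  intro x y h
  simpa [dotProduct_comm] using h

lemma orth_ker (M : Matrix (Fin r) (Fin n) E) :
    (dotB E n).orthogonal (LinearMap.ker M.mulVecLin) = LinearMap.range Mᵀ.mulVecLin := by
  have hle : LinearMap.range Mᵀ.mulVecLin ≤ (dotB E n).orthogonal (LinearMap.ker M.mulVecLin) := by
    rintro _ ⟨v, rfl⟩ x hx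
    have hx0 : M.mulVec x = 0 := hx
    show x ⬝ᵥ Mᵀ.mulVec v = 0
    rw [dotProduct_mulVec, vecMul_transpose, hx0, zero_dotProduct]
  have h1 : M.rank + finrank E (LinearMap.ker M.mulVecLin) = n := by
    have := LinearMap.finrank_range_add_finrank_ker M.mulVecLin
    simpa [Matrix.rank] using this
  have h2 : finrank E (LinearMap.range Mᵀ.mulVecLin) = M.rank := by
    rw [← Matrix.rank_transpose M]; rfl
  have h3 : finrank E ((dotB E n).orthogonal (LinearMap.ker M.mulVecLin)) =
      n - finrank E (LinearMap.ker M.mulVecLin) := by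
    rw [LinearMap.BilinForm.finrank_orthogonal dotB_nondeg]
    simp
  refine (Submodule.eq_of_le_of_finrank_le hle ?_).symm
  rw [h2, h3]
  omega

end DotForm

section Char
variable {E : Type*} [Field E] {r n : ℕ}

lemma mulVecLin_eq_zero_iff {M : Matrix (Fin r) (Fin n) E} : M.mulVecLin = 0 ↔ M = 0 := by
  constructor
  · intro h
    ext i j
    have := congrFun (LinearMap.congr_fun h (Pi.single j 1)) i
    simpa [Matrix.mulVecLin_apply, Matrix.mulVec_single] using this
  · rintro rfl; simp

lemma selfdual_char (M : Matrix (Fin r) (Fin n) E) :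
    (LinearMap.ker M.mulVecLin = LinearMap.range Mᵀ.mulVecLin) ↔
      (M * Mᵀ = 0 ∧ 2 * M.rank = n) := by
  have h1 : M.rank + finrank E (LinearMap.ker M.mulVecLin) = n := by
    have := LinearMap.finrank_range_add_finrank_ker M.mulVecLin
    simpa [Matrix.rank] using this
  have h2 : finrank E (LinearMap.range Mᵀ.mulVecLin) = M.rank := by
    rw [← Matrix.rank_transpose M]; rfl
  constructor
  · intro h
    have hMT : M * Mᵀ = 0 := by
      rw [← mulVecLin_eq_zero_iff, Matrix.mulVecLin_mul]
      refine LinearMap.ext fun v => ?_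
      have hv : Mᵀ.mulVecLin v ∈ LinearMap.ker M.mulVecLin := by
        rw [h]; exact ⟨v, rfl⟩
      simpa using hv
    refine ⟨hMT, ?_⟩
    have h4 : finrank E (LinearMap.ker M.mulVecLin) = M.rank := by
      rw [h, h2]
    omega
  · rintro ⟨hMT, hrank⟩
    have hle : LinearMap.range Mᵀ.mulVecLin ≤ LinearMap.ker M.mulVecLin := by
      rintro _ ⟨v, rfl⟩
      simp only [LinearMap.mem_ker, Matrix.mulVecLin_apply, Matrix.mulVec_mulVec, hMT,
        Matrix.zero_mulVec]
    refine (Submodule.eq_of_le_of_finrank_le hle ?_).symm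
    rw [h2]; omega

end Char

section RankTransfer
variable {F K : Type*} [Field F] [Field K] {r n : ℕ}

lemma exists_PQ (M : Matrix (Fin r) (Fin n) F) :
    ∃ (P : Matrix (Fin M.rank) (Fin r) F) (Q : Matrix (Fin n) (Fin M.rank) F),
      P * M * Q = 1 := by
  set f := M.mulVecLin with hf
  have hW : finrank F (LinearMap.range f) = M.rank := rfl
  have hfin : finrank F (Fin M.rank → F) = finrank F (LinearMap.range f) := by
    simp [hW]
  let e : LinearMap.range f ≃ₗ[F] (Fin M.rank → F) :=
    (LinearEquiv.ofFinrankEq _ _ hfin).symm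
  let g : (Fin M.rank → F) →ₗ[F] (Fin r → F) :=
    (LinearMap.range f).subtype ∘ₗ (e.symm : (Fin M.rank → F) →ₗ[F] LinearMap.range f)
  let f' : (Fin n → F) →ₗ[F] (Fin M.rank → F) :=
    (e : LinearMap.range f →ₗ[F] (Fin M.rank → F)) ∘ₗ f.rangeRestrict
  have hcomp : g ∘ₗ f' = f := by
    ext x
    simp [g, f', f]
  have hginj : LinearMap.ker g = ⊥ :=
    LinearMap.ker_eq_bot.2 ((Submodule.injective_subtype _).comp e.symm.injective)
  have hfsurj : LinearMap.range f' = ⊤ := by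
    rw [LinearMap.range_eq_top]
    exact e.surjective.comp f.surjective_rangeRestrict
  obtain ⟨gl, hgl⟩ := g.exists_leftInverse_of_injective hginj
  obtain ⟨fr, hfr⟩ := f'.exists_rightInverse_of_surjective hfsurj
  refine ⟨LinearMap.toMatrix' gl, LinearMap.toMatrix' fr, ?_⟩
  have hM : LinearMap.toMatrix' f = M := by
    ext i j
    simp [f, LinearMap.toMatrix'_apply, Matrix.mulVecLin_apply, Matrix.mulVec,
      dotProduct, mul_ite, Finset.sum_ite_eq', Pi.single_apply]
  have hcompall : gl ∘ₗ (f ∘ₗ fr) = LinearMap.id := by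
    rw [← hcomp, LinearMap.comp_assoc fr f' g, hfr, LinearMap.comp_id, hgl]
  have h1 : LinearMap.toMatrix' gl * (LinearMap.toMatrix' f * LinearMap.toMatrix' fr) = 1 := by
    rw [← LinearMap.toMatrix'_comp, ← LinearMap.toMatrix'_comp, hcompall,
      LinearMap.toMatrix'_id]
  rw [hM] at h1
  rw [Matrix.mul_assoc]
  exact h1

/-- the entrywise-map semilinear map on vectors -/
def piMapSL (ι : F →+* K) (m : ℕ) : (Fin m → F) →ₛₗ[ι] (Fin m → K) where
  toFun v := fun i => ι (v i)
  map_add' u v := by funext i; simp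
  map_smul' a v := by funext i; simp [Pi.smul_apply, smul_eq_mul]

lemma mem_span_image {m : ℕ} (ι : F →+* K) {s : Set (Fin m → F)} {x : Fin m → F}
    (hx : x ∈ Submodule.span F s) :
    piMapSL ι m x ∈ Submodule.span K (piMapSL ι m '' s) := by
  induction hx using Submodule.span_induction with
  | mem y hy => exact Submodule.subset_span ⟨y, hy, rfl⟩
  | zero => simp
  | add y z _ _ hy hz => rw [map_add]; exact Submodule.add_mem _ hy hz
  | smul a y _ hy =>
      rw [LinearMap.map_smulₛₗ]
      exact Submodule.smul_mem _ _ hy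

lemma matRank_map_le (ι : F →+* K) (M : Matrix (Fin r) (Fin n) F) :
    (M.map ι).rank ≤ M.rank := by
  classical
  rw [Matrix.rank_eq_finrank_span_cols]
  set W : Submodule F (Fin r → F) := Submodule.span F (Set.range Mᵀ) with hWdef
  have hWrank : finrank F W = M.rank := (Matrix.rank_eq_finrank_span_cols M).symm
  let b := Module.finBasis F W
  let v : Fin (finrank F W) → (Fin r → K) := fun i => piMapSL ι r (b i : Fin r → F)
  have hcols : ∀ j, (M.map ι)ᵀ j ∈ Submodule.span K (Set.range v) := by
    intro j
    have hj : Mᵀ j ∈ W := Submodule.subset_span ⟨j, rfl⟩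
    have hWs : (Mᵀ j) ∈ Submodule.span F (Set.range (fun i => (b i : Fin r → F))) := by
      have hspan := congrArg (Submodule.map W.subtype) b.span_eq
      rw [Submodule.map_span, Submodule.map_top, Submodule.range_subtype] at hspan
      rw [← Set.range_comp] at hspan
      rw [← hspan] at hj
      exact hj
    have := mem_span_image ι hWs
    have himg : piMapSL ι r '' Set.range (fun i => (b i : Fin r → F)) = Set.range v := by
      rw [← Set.range_comp]; rfl
    rw [himg] at this
    have hcol : (M.map ι)ᵀ j = piMapSL ι r (Mᵀ j) := by
      funext i; rfl
    rw [hcol]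
    exact this
  have hle : Submodule.span K (Set.range (M.map ι)ᵀ) ≤ Submodule.span K (Set.range v) := by
    rw [Submodule.span_le]
    rintro _ ⟨j, rfl⟩
    exact hcols j
  calc finrank K (Submodule.span K (Set.range (M.map ι)ᵀ))
      ≤ finrank K (Submodule.span K (Set.range v)) := Submodule.finrank_mono hle
    _ ≤ finrank F W := by
        rw [← Set.image_univ, ← Finset.coe_univ, ← Finset.coe_image]
        exact le_trans (finrank_span_finset_le_card _)
          (le_trans (Finset.card_image_le) (by simp))
    _ = M.rank := hWrank

lemma rank_map_eq' (ι : F →+* K) (M : Matrix (Fin r) (Fin n) F) :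
    (M.map ι).rank = M.rank := by
  refine le_antisymm (matRank_map_le ι M) ?_
  obtain ⟨P, Q, hPQ⟩ := exists_PQ M
  have hmap : (P.map ι) * (M.map ι) * (Q.map ι) = 1 := by
    rw [← Matrix.map_mul, ← Matrix.map_mul, hPQ, Matrix.map_one ι (map_zero ι) (map_one ι)]
  have h1 : ((P.map ι) * (M.map ι) * (Q.map ι)).rank = M.rank := by
    rw [hmap, Matrix.rank_one, Fintype.card_fin]
  calc M.rank = ((P.map ι) * (M.map ι) * (Q.map ι)).rank := h1.symm
    _ ≤ ((P.map ι) * (M.map ι)).rank := Matrix.rank_mul_le_left _ _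
    _ ≤ (M.map ι).rank := Matrix.rank_mul_le_right _ _

end RankTransfer

section Glue
variable {E : Type*} [Field E] [Fintype E] [DecidableEq E] {r n : ℕ}

lemma selfdual_iff (M : Matrix (Fin r) (Fin n) E) :
    ({x : Fin n → E | M.mulVec x = 0} = dualSet {x : Fin n → E | M.mulVec x = 0}) ↔
      (M * Mᵀ = 0 ∧ 2 * M.rank = n) := by
  have hset : {x : Fin n → E | M.mulVec x = 0} =
      ↑(LinearMap.ker M.mulVecLin) := by
    ext x; simp [Matrix.mulVecLin_apply]
  have hdual : dualSet (↑(LinearMap.ker M.mulVecLin) : Set (Fin n → E)) =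
      ↑((dotB E n).orthogonal (LinearMap.ker M.mulVecLin)) := by
    ext y
    simp [dualSet, LinearMap.BilinForm.mem_orthogonal_iff, LinearMap.BilinForm.IsOrtho,
      dotProduct]
  rw [hset, hdual, SetLike.coe_set_eq, orth_ker, selfdual_char]

end Glue

/-- a code which is the kernel of a matrix `H` over `F` is self-dual iff the
lifted code (the kernel of `H` over an extension field `K`) is self-dual. -/
theorem lifted_code_self_dual
    {F K : Type*} [Field F] [Fintype F] [DecidableEq F]
    [Field K] [Fintype K] [DecidableEq K] (ι : F →+* K)
    {r n : ℕ} (H : Matrix (Fin r) (Fin n) F) :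
    ({x : Fin n → F | H.mulVec x = 0} = dualSet {x : Fin n → F | H.mulVec x = 0}) ↔
      ({x : Fin n → K | (H.map ι).mulVec x = 0} =
        dualSet {x : Fin n → K | (H.map ι).mulVec x = 0}) := by
  rw [selfdual_iff, selfdual_iff, rank_map_eq' ι H]
  have hmul : (H.map ι) * (H.map ι)ᵀ = (H * Hᵀ).map ι := by
    rw [← Matrix.transpose_map, ← Matrix.map_mul]
  constructor
  · rintro ⟨h1, h2⟩
    refine ⟨?_, h2⟩
    rw [hmul, h1]
    ext i j
    simp
  · rintro ⟨h1, h2⟩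
    refine ⟨?_, h2⟩
    rw [hmul] at h1
    ext i j
    have := congrFun (congrFun h1 i) j
    simp only [Matrix.map_apply, Matrix.zero_apply] at this
    simpa using ι.injective (by simpa using this)
end

section
/- Let q ≥ 4 be a prime power and let ξ_i, ξ_j be two distinct elements of 𝔽_q \ {0,1} satisfying ξ_i + ξ_j + 1 = 0. Let C = {x ∈ 𝔽_q^4 : x_1+x_2+x_3+x_4 = 0 and x_2 + ξ_i·x_3 + ξ_j·x_4 = 0}. Then C is a linear antipodal [4,2,3]_q code which is completely regular with covering radius ρ = 2 and intersection array (4(q−1), 3(q−3); 1, 12); the same holds for its dual C⊥, which is the code spanned by the vectors (1,1,1,1) and (0,1,ξ_i,ξ_j). Furthermore, if q = 2^r ≥ 4, then C = C⊥, i.e., C is self-dual. -/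
open Finset

variable {F : Type*} [Field F] [Fintype F] [DecidableEq F]

open Finset Function

set_option linter.unusedSectionVars false

section Generic

variable {F : Type*} [Field F] [Fintype F] [DecidableEq F]

/-- MDS interpolation property: any values at two distinct coordinates extend to a unique
codeword. -/
def MDS4 (D : Set (Fin 4 → F)) : Prop :=
  ∀ i j : Fin 4, i ≠ j → ∀ u v : F, ∃! c, c ∈ D ∧ c i = u ∧ c j = v

variable {D : Set (Fin 4 → F)}

lemma mds_unique (hP : MDS4 D) {i j : Fin 4} (hij : i ≠ j) {c c' : Fin 4 → F}
    (hc : c ∈ D) (hc' : c' ∈ D) (h1 : c i = c' i) (h2 : c j = c' j) : c = c' := by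
  obtain ⟨w, -, hu⟩ := hP i j hij (c' i) (c' j)
  rw [hu c ⟨hc, h1, h2⟩, hu c' ⟨hc', rfl, rfl⟩]

lemma mds_exists (hP : MDS4 D) {i j : Fin 4} (hij : i ≠ j) (u v : F) :
    ∃ c ∈ D, c i = u ∧ c j = v := by
  obtain ⟨c, ⟨hc, h1, h2⟩, -⟩ := hP i j hij u v
  exact ⟨c, hc, h1, h2⟩

/-- pigeonhole: distance ≤ 2 in `Fin 4` means agreement at two distinct coordinates -/
lemma agree_two {x y : Fin 4 → F} (h : hammingDist x y ≤ 2) :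
    ∃ i j : Fin 4, i ≠ j ∧ x i = y i ∧ x j = y j := by
  classical
  have htot := card_filter_add_card_filter_not (s := (univ : Finset (Fin 4)))
    (p := fun i => x i ≠ y i)
  simp only [card_univ, Fintype.card_fin] at htot
  have hd : hammingDist x y = (univ.filter (fun i => x i ≠ y i)).card := rfl
  have hcard : 1 < (univ.filter (fun i => ¬ x i ≠ y i)).card := by omega
  obtain ⟨i, hi, j, hj, hne⟩ := Finset.one_lt_card.mp hcard
  simp only [mem_filter, mem_univ, true_and, not_not] at hi hj
  exact ⟨i, j, hne, hi, hj⟩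

lemma mds_dist_ge {x y : Fin 4 → F} (hP : MDS4 D) (hx : x ∈ D) (hy : y ∈ D) (hne : x ≠ y) :
    3 ≤ hammingDist x y := by
  by_contra h
  obtain ⟨i, j, hij, h1, h2⟩ := agree_two (by omega : hammingDist x y ≤ 2)
  exact hne (mds_unique hP hij hx hy h1 h2)

lemma distToCode_le (c : Fin 4 → F) (hc : c ∈ D) (x : Fin 4 → F) :
    distToCode D x ≤ hammingDist x c :=
  Nat.sInf_le ⟨c, hc, rfl⟩

lemma distToCode_exists (hD : D.Nonempty) (x : Fin 4 → F) :
    ∃ c ∈ D, hammingDist x c = distToCode D x := by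
  obtain ⟨c, hc⟩ := hD
  have : {d : ℕ | ∃ c ∈ D, hammingDist x c = d}.Nonempty := ⟨_, c, hc, rfl⟩
  obtain ⟨c', hc', hd⟩ := Nat.sInf_mem this
  exact ⟨c', hc', hd⟩

lemma distToCode_eq_zero_iff (hD : D.Nonempty) (x : Fin 4 → F) :
    distToCode D x = 0 ↔ x ∈ D := by
  constructor
  · intro h
    obtain ⟨c, hc, hd⟩ := distToCode_exists hD x
    rw [h, hammingDist_eq_zero] at hd
    rwa [hd]
  · intro h
    exact le_antisymm (by simpa using distToCode_le x h x) (Nat.zero_le _)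

/-- agreement at two coordinates gives distance ≤ 2 -/
lemma dist_le_two_of_agree {x y : Fin 4 → F} {i j : Fin 4} (hij : i ≠ j)
    (h1 : x i = y i) (h2 : x j = y j) : hammingDist x y ≤ 2 := by
  classical
  have hsub : ({k | x k ≠ y k} : Finset (Fin 4)) ⊆ ({i, j}ᶜ : Finset (Fin 4)) := by
    intro k hk
    simp only [Finset.mem_filter] at hk
    simp only [Finset.mem_compl, Finset.mem_insert, Finset.mem_singleton]
    rintro (rfl | rfl)
    exacts [hk.2 h1, hk.2 h2]
  calc hammingDist x y ≤ ({i, j}ᶜ : Finset (Fin 4)).card := Finset.card_le_card hsub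
  _ = 4 - ({i, j} : Finset (Fin 4)).card := by rw [Finset.card_compl]; simp
  _ ≤ 2 := by rw [Finset.card_insert_of_notMem (by simpa using hij), Finset.card_singleton]

lemma mds_distToCode_le_two (hP : MDS4 D) (x : Fin 4 → F) : distToCode D x ≤ 2 := by
  obtain ⟨c, hc, h0, h1⟩ := mds_exists hP (by decide : (0:Fin 4) ≠ 1) (x 0) (x 1)
  exact le_trans (distToCode_le c hc x)
    (dist_le_two_of_agree (by decide) h0.symm h1.symm)

end Generic
section Generic2

open Finset Function

set_option linter.unusedSectionVars false

variable {F : Type*} [Field F] [Fintype F] [DecidableEq F]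

lemma dist_update {x : Fin 4 → F} {i : Fin 4} {v : F} (hv : v ≠ x i) :
    hammingDist x (update x i v) = 1 := by
  have : (univ.filter (fun k => x k ≠ update x i v k)) = {i} := by
    ext k
    simp only [mem_filter, mem_univ, true_and, Finset.mem_singleton]
    rcases eq_or_ne k i with rfl | hk
    · simp [update_self, Ne.symm hv]
    · simp [update_of_ne hk, hk]
  show (univ.filter (fun k => x k ≠ update x i v k)).card = 1
  rw [this, Finset.card_singleton]

lemma eq_update_of_dist_one {x y : Fin 4 → F} (h : hammingDist x y = 1) :
    ∃ i : Fin 4, y i ≠ x i ∧ y = update x i (y i) := by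
  have h1 : (univ.filter (fun k => x k ≠ y k)).card = 1 := h
  obtain ⟨i0, hi⟩ := Finset.card_eq_one.mp h1
  set i := i0 with hi0
  have hmem : ∀ k, x k ≠ y k ↔ k = i := by
    intro k
    constructor
    · intro hk
      have : k ∈ univ.filter (fun k => x k ≠ y k) := by simp [hk]
      rw [hi] at this; simpa using this
    · rintro rfl
      have : i ∈ univ.filter (fun k => x k ≠ y k) := by rw [hi]; simp
      simpa using this
  refine ⟨i, Ne.symm ((hmem i).mpr rfl), ?_⟩
  funext k
  rcases eq_or_ne k i with rfl | hk
  · rw [hi0, update_self]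
  · rw [update_of_ne hk]
    by_contra hne
    exact hk ((hmem k).mp (Ne.symm hne))

/-- Counting neighbours satisfying a predicate, as a `Finset` count over (coordinate, value)
pairs. -/
lemma card_neighbours (x : Fin 4 → F) (P : (Fin 4 → F) → Prop) [DecidablePred P] :
    Nat.card {y : Fin 4 → F | hammingDist x y = 1 ∧ P y} =
      ((univ : Finset (Fin 4 × F)).filter
        (fun p => p.2 ≠ x p.1 ∧ P (update x p.1 p.2))).card := by
  classical
  have hset : {y : Fin 4 → F | hammingDist x y = 1 ∧ P y} =
      ↑(((univ : Finset (Fin 4 × F)).filter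
        (fun p => p.2 ≠ x p.1 ∧ P (update x p.1 p.2))).image
          (fun p => update x p.1 p.2)) := by
    ext y
    simp only [Set.mem_setOf_eq, Finset.coe_image, Set.mem_image, Finset.mem_coe,
      mem_filter, mem_univ, true_and]
    constructor
    · rintro ⟨hd, hP⟩
      obtain ⟨i, hne, hupd⟩ := eq_update_of_dist_one hd
      exact ⟨(i, y i), ⟨hne, by rw [← hupd]; exact hP⟩, hupd.symm⟩
    · rintro ⟨⟨i, v⟩, ⟨hne, hP⟩, rfl⟩
      exact ⟨dist_update hne, hP⟩
  rw [hset, Nat.card_coe_set_eq, Set.ncard_coe_finset]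
  rw [Finset.card_image_of_injOn]
  intro p hp q hq heq
  simp only [mem_coe, mem_filter, mem_univ, true_and] at hp hq
  have heq' : update x p.1 p.2 = update x q.1 q.2 := heq
  have h1 : update x p.1 p.2 p.1 = update x q.1 q.2 p.1 := congrFun heq' _
  rcases eq_or_ne p.1 q.1 with he | hne
  · have : p.2 = q.2 := by
      rw [update_self] at h1
      rw [he, update_self] at h1
      exact h1
    exact Prod.ext he this
  · exfalso
    rw [update_self, update_of_ne hne] at h1
    exact hp.1 h1

end Generic2
section Generic3

open Finset Function

set_option linter.unusedSectionVars false

variable {F : Type*} [Field F] [Fintype F] [DecidableEq F]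
variable {D : Set (Fin 4 → F)}

lemma dist_le_one_of_agree {x y : Fin 4 → F} {i : Fin 4} (h : ∀ k, k ≠ i → x k = y k) :
    hammingDist x y ≤ 1 := by
  have hsub : (univ.filter (fun k => x k ≠ y k)) ⊆ {i} := by
    intro k hk
    simp only [mem_filter, mem_univ, true_and] at hk
    simp only [Finset.mem_singleton]
    by_contra hne
    exact hk (h k hne)
  simpa [hammingDist] using Finset.card_le_card hsub

lemma dist_le_three_of_agree {x y : Fin 4 → F} {i : Fin 4} (h : x i = y i) :
    hammingDist x y ≤ 3 := by
  have hsub : (univ.filter (fun k => x k ≠ y k)) ⊆ univ.erase i := by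
    intro k hk
    simp only [mem_filter, mem_univ, true_and] at hk
    refine Finset.mem_erase.mpr ⟨?_, mem_univ k⟩
    rintro rfl; exact hk h
  have := Finset.card_le_card hsub
  simpa [hammingDist, Finset.card_erase_of_mem] using this

lemma exists_update_of_dist_le_one {x y : Fin 4 → F} (h : hammingDist x y ≤ 1) :
    ∃ m : Fin 4, ∀ k, k ≠ m → x k = y k := by
  interval_cases hd : hammingDist x y
  · exact ⟨0, fun k _ => congrFun (hammingDist_eq_zero.mp hd) k⟩
  · obtain ⟨m, -, hupd⟩ := eq_update_of_dist_one hd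
    exact ⟨m, fun k hk => by rw [hupd, update_of_ne hk]⟩

lemma exists_other : ∀ p j : Fin 4, p ≠ j → ∃ m1 m2 : Fin 4, m1 ≠ m2 ∧ m1 ≠ p ∧ m1 ≠ j ∧
    m2 ≠ p ∧ m2 ≠ j ∧ ∀ k : Fin 4, k = p ∨ k = j ∨ k = m1 ∨ k = m2 := by decide

lemma exists_fourth : ∀ a b c : Fin 4, a ≠ b → a ≠ c → b ≠ c →
    ∃ k : Fin 4, k ≠ a ∧ k ≠ b ∧ k ≠ c := by decide

lemma card_pairs_ne (x : Fin 4 → F) :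
    ((univ : Finset (Fin 4 × F)).filter (fun p => p.2 ≠ x p.1)).card =
      4 * (Fintype.card F - 1) := by
  have htot := card_filter_add_card_filter_not (s := (univ : Finset (Fin 4 × F)))
    (p := fun p => p.2 = x p.1)
  have himg : ((univ : Finset (Fin 4 × F)).filter (fun p => p.2 = x p.1)) =
      (univ : Finset (Fin 4)).image (fun i => (i, x i)) := by
    ext p
    simp only [mem_filter, mem_univ, true_and, Finset.mem_image]
    constructor
    · intro h; exact ⟨p.1, by rw [← h]⟩
    · rintro ⟨i, rfl⟩; rfl
  have hcard4 : ((univ : Finset (Fin 4 × F)).filter (fun p => p.2 = x p.1)).card = 4 := by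
    rw [himg, Finset.card_image_of_injective _ (fun a b hab => (Prod.ext_iff.mp hab).1),
      card_univ, Fintype.card_fin]
  have huniv : (univ : Finset (Fin 4 × F)).card = 4 * Fintype.card F := by
    rw [card_univ, Fintype.card_prod, Fintype.card_fin]
  have hpos : 1 ≤ Fintype.card F := Fintype.card_pos
  have heq : ((univ : Finset (Fin 4 × F)).filter (fun p => ¬ p.2 = x p.1)).card =
      (univ.filter (fun p : Fin 4 × F => p.2 ≠ x p.1)).card := rfl
  omega

lemma card_pairs_eq_sum (Q : Fin 4 × F → Prop) [DecidablePred Q] :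
    ((univ : Finset (Fin 4 × F)).filter Q).card =
      ∑ j : Fin 4, ((univ : Finset F).filter (fun v => Q (j, v))).card := by
  rw [Finset.card_eq_sum_card_fiberwise
    (f := Prod.fst) (t := (univ : Finset (Fin 4))) (fun p _ => mem_univ _)]
  refine Finset.sum_congr rfl fun j _ => ?_
  have himg : ((univ : Finset (Fin 4 × F)).filter Q).filter (fun p => p.1 = j) =
      ((univ : Finset F).filter (fun v => Q (j, v))).image (fun v => (j, v)) := by
    ext p
    simp only [mem_filter, mem_univ, true_and, Finset.mem_image]
    constructor
    · rintro ⟨hQ, h1⟩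
      refine ⟨p.2, ?_, ?_⟩
      · have hp : (j, p.2) = p := by rw [← h1]
        rwa [hp]
      · rw [← h1]
    · rintro ⟨v, hv, rfl⟩
      exact ⟨hv, rfl⟩
  rw [himg, Finset.card_image_of_injective _ (fun a b h => (Prod.ext_iff.mp h).2)]

lemma nearest_unique (hP : MDS4 D) {x c c' : Fin 4 → F} (hc : c ∈ D) (hc' : c' ∈ D)
    (h1 : hammingDist x c ≤ 1) (h2 : hammingDist x c' ≤ 1) : c = c' := by
  by_contra hne
  have h3 := mds_dist_ge hP hc hc' hne
  have := hammingDist_triangle_left c c' x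
  omega

lemma two_le_dist_of_far {x : Fin 4 → F} (hx : distToCode D x = 2) :
    ∀ c ∈ D, 2 ≤ hammingDist x c := by
  intro c hc
  have := distToCode_le c hc x
  omega

end Generic3
section Generic4

open Finset Function

set_option linter.unusedSectionVars false
set_option maxHeartbeats 1000000

variable {F : Type*} [Field F] [Fintype F] [DecidableEq F]
variable {D : Set (Fin 4 → F)}

lemma count_b0 (hP : MDS4 D) {x : Fin 4 → F} (hx : x ∈ D) :
    Nat.card {y : Fin 4 → F | hammingDist x y = 1 ∧ distToCode D y = 1} =
      4 * (Fintype.card F - 1) := by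
  classical
  rw [card_neighbours, ← card_pairs_ne x]
  congr 1
  apply Finset.filter_congr
  intro p _
  simp only [and_iff_left_iff_imp]
  intro hne
  have hd1 : hammingDist x (update x p.1 p.2) = 1 := dist_update hne
  have hle : distToCode D (update x p.1 p.2) ≤ 1 := by
    have := distToCode_le x hx (update x p.1 p.2)
    rwa [hammingDist_comm, hd1] at this
  have hne0 : update x p.1 p.2 ∉ D := by
    intro hmem
    have hxy : x ≠ update x p.1 p.2 := by
      intro h
      have h2 := congrFun h p.1
      rw [update_self] at h2
      exact hne h2.symm
    have := mds_dist_ge hP hx hmem hxy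
    omega
  have h0 := (distToCode_eq_zero_iff ⟨x, hx⟩ (update x p.1 p.2)).not
  have : distToCode D (update x p.1 p.2) ≠ 0 := by
    intro h; exact hne0 ((distToCode_eq_zero_iff ⟨x, hx⟩ _).mp h)
  omega

lemma count_c1 (hP : MDS4 D) (hD0 : (0 : Fin 4 → F) ∈ D) {x : Fin 4 → F}
    (hx : distToCode D x = 1) :
    Nat.card {y : Fin 4 → F | hammingDist x y = 1 ∧ distToCode D y = 0} = 1 := by
  have hne : D.Nonempty := ⟨0, hD0⟩
  obtain ⟨c0, hc0, hd0⟩ := distToCode_exists hne x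
  rw [hx] at hd0
  have hset : {y : Fin 4 → F | hammingDist x y = 1 ∧ distToCode D y = 0} = {c0} := by
    ext y
    simp only [Set.mem_setOf_eq, Set.mem_singleton_iff]
    constructor
    · rintro ⟨h1, h0⟩
      have hyD := (distToCode_eq_zero_iff hne y).mp h0
      exact nearest_unique hP hyD hc0 (le_of_eq h1) (le_of_eq hd0)
    · rintro rfl
      exact ⟨hd0, (distToCode_eq_zero_iff hne _).mpr hc0⟩
  rw [hset]
  simp [Nat.card_coe_set_eq]

lemma count_b1 (hP : MDS4 D) (hD0 : (0 : Fin 4 → F) ∈ D) {x : Fin 4 → F}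
    (hx : distToCode D x = 1) :
    Nat.card {y : Fin 4 → F | hammingDist x y = 1 ∧ distToCode D y = 2} =
      3 * (Fintype.card F - 3) := by
  classical
  have hne : D.Nonempty := ⟨0, hD0⟩
  obtain ⟨c0, hc0, hd0⟩ := distToCode_exists hne x
  rw [hx] at hd0
  have hxD : x ∉ D := by
    intro h
    rw [(distToCode_eq_zero_iff hne x).mpr h] at hx
    exact one_ne_zero hx.symm
  obtain ⟨p, hcp, hcupd⟩ := eq_update_of_dist_one hd0
  have hc0k : ∀ k, k ≠ p → c0 k = x k := fun k hk => by rw [hcupd, update_of_ne hk]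
  have hnear : ∀ c ∈ D, hammingDist x c ≤ 1 → c = c0 := fun c hc h =>
    nearest_unique hP hc hc0 h (le_of_eq hd0)
  rw [card_neighbours, card_pairs_eq_sum]
  have hfiber : ∀ j : Fin 4,
      ((univ : Finset F).filter
        (fun v => v ≠ x j ∧ distToCode D (update x j v) = 2)).card =
      if j = p then 0 else Fintype.card F - 3 := by
    intro j
    rcases eq_or_ne j p with rfl | hjp
    · rw [if_pos rfl, Finset.card_eq_zero, Finset.filter_eq_empty_iff]
      rintro v - ⟨hv, h2⟩
      have hagree : ∀ k, k ≠ j → update x j v k = c0 k := fun k hk => by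
        rw [update_of_ne hk, (hc0k k hk).symm]
      have h1 : hammingDist (update x j v) c0 ≤ 1 := dist_le_one_of_agree hagree
      have := distToCode_le c0 hc0 (update x j v)
      omega
    · rw [if_neg hjp]
      obtain ⟨m1, m2, h12, h1p, h1j, h2p, h2j, hcov⟩ := exists_other p j (Ne.symm hjp)
      have hu : ∀ v : F, ∃ c, c ∈ D ∧ c p = x p ∧ c j = v := fun v => by
        obtain ⟨c, hc, h1, h2⟩ := mds_exists hP (show p ≠ j from Ne.symm hjp) (x p) v
        exact ⟨c, hc, h1, h2⟩
      have huD : ∀ v, (hu v).choose ∈ D := fun v => (hu v).choose_spec.1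
      have hup : ∀ v, (hu v).choose p = x p := fun v => (hu v).choose_spec.2.1
      have huj : ∀ v, (hu v).choose j = v := fun v => (hu v).choose_spec.2.2
      have huinj : ∀ m : Fin 4, m ≠ p →
          Function.Injective (fun v => (hu v).choose m) := by
        intro m hmp v v' h
        have heq : (hu v).choose = (hu v').choose :=
          mds_unique hP (show p ≠ m from Ne.symm hmp) (huD v) (huD v')
            (by rw [hup, hup]) h
        rw [← huj v, heq, huj]
      have husurj : ∀ m : Fin 4, m ≠ p → ∃ v, (hu v).choose m = x m := fun m hmp =>
        (Finite.injective_iff_surjective.mp (huinj m hmp)) (x m)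
      obtain ⟨v1, hv1⟩ := husurj m1 h1p
      obtain ⟨v2, hv2⟩ := husurj m2 h2p
      -- key contradiction helper: u v cannot agree with x in three coordinates
      have hkey : ∀ v (m : Fin 4), (∀ k, k ≠ m → x k = (hu v).choose k) → False := by
        intro v m hagree
        have h1 : hammingDist x (hu v).choose ≤ 1 := dist_le_one_of_agree hagree
        have := hnear _ (huD v) h1
        rw [← this] at hcp
        exact hcp (hup v)
      have hv1j : v1 ≠ x j := by
        intro h
        refine hkey v1 m2 fun k hk => ?_
        rcases hcov k with rfl | rfl | rfl | rfl
        · exact (hup v1).symm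
        · rw [huj, h]
        · exact hv1.symm
        · exact absurd rfl hk
      have hv2j : v2 ≠ x j := by
        intro h
        refine hkey v2 m1 fun k hk => ?_
        rcases hcov k with rfl | rfl | rfl | rfl
        · exact (hup v2).symm
        · rw [huj, h]
        · exact absurd rfl hk
        · exact hv2.symm
      have hv12 : v1 ≠ v2 := by
        intro h
        refine hkey v1 j fun k hk => ?_
        rcases hcov k with rfl | rfl | rfl | rfl
        · exact (hup v1).symm
        · exact absurd rfl hk
        · exact hv1.symm
        · rw [h]; exact hv2.symm
      have hseteq : ((univ : Finset F).filter
          (fun v => v ≠ x j ∧ distToCode D (update x j v) = 2)) =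
          univ \ {x j, v1, v2} := by
        ext v
        simp only [mem_filter, mem_univ, true_and, Finset.mem_sdiff, Finset.mem_insert,
          Finset.mem_singleton, not_or]
        constructor
        · rintro ⟨hvx, h2⟩
          refine ⟨hvx, ?_, ?_⟩
          · rintro rfl
            have hagree : ∀ k, k ≠ m2 → update x j v k = (hu v).choose k := by
              intro k hk
              rcases hcov k with rfl | rfl | rfl | rfl
              · rw [update_of_ne (Ne.symm hjp), hup]
              · rw [update_self, huj]
              · rw [update_of_ne h1j, hv1]
              · exact absurd rfl hk
            have h1 : hammingDist (update x j v) (hu v).choose ≤ 1 :=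
              dist_le_one_of_agree hagree
            have := distToCode_le _ (huD v) (update x j v)
            omega
          · rintro rfl
            have hagree : ∀ k, k ≠ m1 → update x j v k = (hu v).choose k := by
              intro k hk
              rcases hcov k with rfl | rfl | rfl | rfl
              · rw [update_of_ne (Ne.symm hjp), hup]
              · rw [update_self, huj]
              · exact absurd rfl hk
              · rw [update_of_ne h2j, hv2]
            have h1 : hammingDist (update x j v) (hu v).choose ≤ 1 :=
              dist_le_one_of_agree hagree
            have := distToCode_le _ (huD v) (update x j v)
            omega
        · rintro ⟨h1, h2, h3⟩
          refine ⟨h1, ?_⟩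
          have hle2 := mds_distToCode_le_two hP (update x j v)
          rcases Nat.lt_or_ge (distToCode D (update x j v)) 2 with hlt | hge
          · exfalso
            obtain ⟨c, hc, hdc⟩ := distToCode_exists hne (update x j v)
            have hdc1 : hammingDist (update x j v) c ≤ 1 := by omega
            obtain ⟨m, hm⟩ := exists_update_of_dist_le_one hdc1
            have hcy : ∀ k, k ≠ m → c k = update x j v k := fun k hk => (hm k hk).symm
            rcases hcov m with rfl | rfl | rfl | rfl
            · -- m = p : c = c0, then v = x j
              have hcm1 : c m1 = x m1 := by rw [hcy m1 h1p, update_of_ne h1j]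
              have hcm2 : c m2 = x m2 := by rw [hcy m2 h2p, update_of_ne h2j]
              have : c = c0 := mds_unique hP h12 hc hc0
                (by rw [hcm1, hc0k m1 h1p]) (by rw [hcm2, hc0k m2 h2p])
              have hcj : c j = v := by rw [hcy j hjp, update_self]
              rw [this, hc0k j hjp] at hcj
              exact h1 hcj.symm
            · -- m = j : c within 1 of x, so c = c0, but c0 p ≠ x p
              have hagree : ∀ k, k ≠ m → x k = c k := by
                intro k hk
                rw [hcy k hk, update_of_ne hk]
              have := hnear c hc (dist_le_one_of_agree hagree)
              rw [this] at hcy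
              have := hcy p (Ne.symm hjp)
              rw [update_of_ne (Ne.symm hjp)] at this
              exact hcp this
            · -- m = m1 : c = u v and u v m2 = x m2 hence v = v2
              have hcp' : c p = x p := by rw [hcy p (Ne.symm h1p), update_of_ne (Ne.symm hjp)]
              have hcj : c j = v := by rw [hcy j (Ne.symm h1j), update_self]
              have hceq : c = (hu v).choose := mds_unique hP (show p ≠ j from Ne.symm hjp)
                hc (huD v) (by rw [hcp', hup]) (by rw [hcj, huj])
              have hcm2 : c m2 = x m2 := by rw [hcy m2 (Ne.symm h12), update_of_ne h2j]
              rw [hceq] at hcm2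
              exact h3 (huinj m2 h2p (show (hu v).choose m2 = (hu v2).choose m2 by rw [hcm2, hv2]))
            · -- m = m2 : v = v1
              have hcp' : c p = x p := by rw [hcy p (Ne.symm h2p), update_of_ne (Ne.symm hjp)]
              have hcj : c j = v := by rw [hcy j (Ne.symm h2j), update_self]
              have hceq : c = (hu v).choose := mds_unique hP (show p ≠ j from Ne.symm hjp)
                hc (huD v) (by rw [hcp', hup]) (by rw [hcj, huj])
              have hcm1 : c m1 = x m1 := by rw [hcy m1 h12, update_of_ne h1j]
              rw [hceq] at hcm1
              exact h2 (huinj m1 h1p (show (hu v).choose m1 = (hu v1).choose m1 by rw [hcm1, hv1]))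
          · omega
      rw [hseteq, Finset.card_sdiff_of_subset (Finset.subset_univ _), card_univ]
      have hc3 : ({x j, v1, v2} : Finset F).card = 3 := by
        rw [Finset.card_insert_of_notMem (by
          simp only [Finset.mem_insert, Finset.mem_singleton, not_or]
          exact ⟨Ne.symm hv1j, Ne.symm hv2j⟩),
          Finset.card_insert_of_notMem (by simpa using hv12), Finset.card_singleton]
      rw [hc3]
  calc ∑ j : Fin 4, ((univ : Finset F).filter
        (fun v => v ≠ x j ∧ distToCode D (update x j v) = 2)).card
      = ∑ j : Fin 4, (if j = p then 0 else Fintype.card F - 3) :=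
        Finset.sum_congr rfl fun j _ => hfiber j
    _ = 3 * (Fintype.card F - 3) := by
        fin_cases p <;> simp [Fin.sum_univ_four] <;> omega

end Generic4
section Generic5

open Finset Function

set_option linter.unusedSectionVars false
set_option maxHeartbeats 1000000

variable {F : Type*} [Field F] [Fintype F] [DecidableEq F]
variable {D : Set (Fin 4 → F)}

lemma count_c2 (hP : MDS4 D) (hD0 : (0 : Fin 4 → F) ∈ D) {x : Fin 4 → F}
    (hx : distToCode D x = 2) :
    Nat.card {y : Fin 4 → F | hammingDist x y = 1 ∧ distToCode D y = 1} = 12 := by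
  classical
  have hne : D.Nonempty := ⟨0, hD0⟩
  have hfar := two_le_dist_of_far hx
  rw [card_neighbours, card_pairs_eq_sum]
  have hfiber : ∀ j : Fin 4,
      ((univ : Finset F).filter
        (fun v => v ≠ x j ∧ distToCode D (update x j v) = 1)).card = 3 := by
    intro j
    have hw : ∀ m : Fin 4, m ≠ j → ∃ w, w ∈ D ∧ ∀ k, k ≠ j → k ≠ m → w k = x k := by
      intro m hm
      obtain ⟨m1, m2, h12, h1m, h1j, h2m, h2j, hcov⟩ := exists_other m j hm
      obtain ⟨w, hwD, hw1, hw2⟩ := mds_exists hP h12 (x m1) (x m2)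
      refine ⟨w, hwD, fun k hkj hkm => ?_⟩
      rcases hcov k with rfl | rfl | rfl | rfl
      · exact absurd rfl hkm
      · exact absurd rfl hkj
      · exact hw1
      · exact hw2
    have hWD : ∀ m (hm : m ≠ j), (hw m hm).choose ∈ D := fun m hm => (hw m hm).choose_spec.1
    have hWa : ∀ m (hm : m ≠ j), ∀ k, k ≠ j → k ≠ m → (hw m hm).choose k = x k :=
      fun m hm => (hw m hm).choose_spec.2
    have hWj : ∀ m (hm : m ≠ j), (hw m hm).choose j ≠ x j := by
      intro m hm h
      have hd : hammingDist x (hw m hm).choose ≤ 1 := by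
        refine dist_le_one_of_agree (i := m) fun k hk => ?_
        rcases eq_or_ne k j with rfl | hkj
        · exact h.symm
        · exact (hWa m hm k hkj hk).symm
      have := hfar _ (hWD m hm)
      omega
    have hWm : ∀ m (hm : m ≠ j), (hw m hm).choose m ≠ x m := by
      intro m hm h
      have hd : hammingDist x (hw m hm).choose ≤ 1 := by
        refine dist_le_one_of_agree (i := j) fun k hk => ?_
        rcases eq_or_ne k m with rfl | hkm
        · exact h.symm
        · exact (hWa m hm k hk hkm).symm
      have := hfar _ (hWD m hm)
      omega
    have hWinj : ∀ m m' (hm : m ≠ j) (hm' : m' ≠ j), m ≠ m' →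
        (hw m hm).choose j ≠ (hw m' hm').choose j := by
      intro m m' hm hm' hmm heq
      obtain ⟨k, hk1, hk2, hk3⟩ := exists_fourth j m m' (Ne.symm hm) (Ne.symm hm') hmm
      have heqw : (hw m hm).choose = (hw m' hm').choose :=
        mds_unique hP (show j ≠ k from Ne.symm hk1) (hWD m hm) (hWD m' hm') heq
          (by rw [hWa m hm k hk1 hk2, hWa m' hm' k hk1 hk3])
      refine hWm m' hm' ?_
      rw [← heqw, hWa m hm m' hm' (Ne.symm hmm)]
    -- the W values as a function on all of Fin 4
    set Wj : Fin 4 → F := fun m => if hm : m ≠ j then (hw m hm).choose j else 0 with hWj_def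
    have hseteq : ((univ : Finset F).filter
        (fun v => v ≠ x j ∧ distToCode D (update x j v) = 1)) =
        (univ.erase j).image Wj := by
      ext v
      simp only [mem_filter, mem_univ, true_and, Finset.mem_image, Finset.mem_erase]
      constructor
      · rintro ⟨hv, h1⟩
        obtain ⟨c, hc, hdc⟩ := distToCode_exists hne (update x j v)
        rw [h1] at hdc
        obtain ⟨m, hcm, hcupd⟩ := eq_update_of_dist_one hdc
        have hcy : ∀ k, k ≠ m → c k = update x j v k := fun k hk => by
          rw [hcupd, update_of_ne hk]
        have hmj : m ≠ j := by
          rintro rfl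
          have hd : hammingDist x c ≤ 1 := by
            refine dist_le_one_of_agree (i := m) fun k hk => ?_
            rw [hcy k hk, update_of_ne hk]
          have := hfar c hc
          omega
        refine ⟨m, ⟨hmj, trivial⟩, ?_⟩
        have hceq : c = (hw m hmj).choose := by
          obtain ⟨m1, m2, h12, h1m, h1j, h2m, h2j, hcov⟩ := exists_other m j hmj
          refine mds_unique hP h12 hc (hWD m hmj) ?_ ?_
          · rw [hcy m1 h1m, update_of_ne h1j, hWa m hmj m1 h1j h1m]
          · rw [hcy m2 h2m, update_of_ne h2j, hWa m hmj m2 h2j h2m]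
        have hcj : c j = v := by rw [hcy j (Ne.symm hmj), update_self]
        rw [hWj_def]
        simp only [dif_pos hmj]
        rw [← hceq, hcj]
      · rintro ⟨m, ⟨hmj, -⟩, rfl⟩
        have hWv : Wj m = (hw m hmj).choose j := by rw [hWj_def]; simp [dif_pos hmj]
        constructor
        · rw [hWv]; exact hWj m hmj
        · have hd1 : hammingDist (update x j (Wj m)) (hw m hmj).choose ≤ 1 := by
            refine dist_le_one_of_agree (i := m) fun k hk => ?_
            rcases eq_or_ne k j with rfl | hkj
            · rw [update_self, hWv]
            · rw [update_of_ne hkj, (hWa m hmj k hkj hk).symm]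
          have hle := distToCode_le _ (hWD m hmj) (update x j (Wj m))
          have hne0 : update x j (Wj m) ∉ D := by
            intro hmem
            have hdx : hammingDist x (update x j (Wj m)) = 1 :=
              dist_update (by rw [hWv]; exact hWj m hmj)
            have := hfar _ hmem
            omega
          have h0 : distToCode D (update x j (Wj m)) ≠ 0 := by
            intro h
            exact hne0 ((distToCode_eq_zero_iff hne _).mp h)
          omega
    rw [hseteq, Finset.card_image_of_injOn, Finset.card_erase_of_mem (mem_univ j),
      card_univ, Fintype.card_fin]
    intro m hm m' hm' h
    simp only [Finset.coe_erase, Set.mem_diff, Set.mem_singleton_iff, Finset.coe_univ,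
      Set.mem_univ, true_and] at hm hm'
    by_contra hmm
    refine hWinj m m' hm hm' hmm ?_
    have h1 : Wj m = (hw m hm).choose j := by rw [hWj_def]; simp [dif_pos hm]
    have h2 : Wj m' = (hw m' hm').choose j := by rw [hWj_def]; simp [dif_pos hm']
    rw [← h1, ← h2, h]
  calc ∑ j : Fin 4, ((univ : Finset F).filter
        (fun v => v ≠ x j ∧ distToCode D (update x j v) = 1)).card
      = ∑ _j : Fin 4, 3 := Finset.sum_congr rfl fun j _ => hfiber j
    _ = 12 := by simp

end Generic5
section Generic6

open Finset Function

set_option linter.unusedSectionVars false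
set_option maxHeartbeats 1000000

variable {F : Type*} [Field F] [Fintype F] [DecidableEq F]
variable {D : Set (Fin 4 → F)}

lemma exists_dist_one (hP : MDS4 D) (hD0 : (0 : Fin 4 → F) ∈ D) :
    ∃ x : Fin 4 → F, distToCode D x = 1 := by
  refine ⟨update (0 : Fin 4 → F) 0 1, ?_⟩
  have hd : hammingDist (0 : Fin 4 → F) (update (0 : Fin 4 → F) 0 1) = 1 :=
    dist_update (show (1 : F) ≠ (0 : Fin 4 → F) 0 by simp)
  have hle : distToCode D (update (0 : Fin 4 → F) 0 1) ≤ 1 := by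
    have := distToCode_le (0 : Fin 4 → F) hD0 (update (0 : Fin 4 → F) 0 1)
    rwa [hammingDist_comm, hd] at this
  have hnmem : update (0 : Fin 4 → F) 0 1 ∉ D := by
    intro hmem
    have heq : update (0 : Fin 4 → F) 0 1 = 0 := by
      refine mds_unique hP (show (1 : Fin 4) ≠ 2 by decide) hmem hD0 ?_ ?_
      · rw [update_of_ne (by decide)]
      · rw [update_of_ne (by decide)]
    have h2 := congrFun heq 0
    rw [update_self] at h2
    simp at h2
  have h0 : distToCode D (update (0 : Fin 4 → F) 0 1) ≠ 0 := fun h =>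
    hnmem ((distToCode_eq_zero_iff ⟨0, hD0⟩ _).mp h)
  omega

lemma exists_dist_two (hP : MDS4 D) (hD0 : (0 : Fin 4 → F) ∈ D)
    (hq : 4 ≤ Fintype.card F) : ∃ x : Fin 4 → F, distToCode D x = 2 := by
  classical
  set DF := (Set.toFinite D).toFinset with hDF_def
  have hDF : ∀ c, c ∈ DF ↔ c ∈ D := fun c => Set.Finite.mem_toFinset _
  set B := DF.biUnion (fun c => insert c
    (((univ : Finset (Fin 4 × F)).filter (fun p => p.2 ≠ c p.1)).image
      (fun p => update c p.1 p.2))) with hB_def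
  have hBcard : B.card ≤ DF.card * (4 * (Fintype.card F - 1) + 1) := by
    refine le_trans (Finset.card_biUnion_le) ?_
    refine le_trans (Finset.sum_le_card_nsmul _ _ (4 * (Fintype.card F - 1) + 1) ?_) ?_
    · intro c _
      refine le_trans (Finset.card_insert_le _ _) ?_
      have := Finset.card_image_le (s := ((univ : Finset (Fin 4 × F)).filter
        (fun p => p.2 ≠ c p.1))) (f := fun p => update c p.1 p.2)
      rw [card_pairs_ne c] at this
      omega
    · simp [smul_eq_mul]
  have hDFcard : DF.card ≤ Fintype.card F ^ 2 := by
    have h1 : DF.card ≤ (univ : Finset (F × F)).card := by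
      refine Finset.card_le_card_of_injOn (fun c => (c 0, c 1)) (fun c _ => mem_univ _) ?_
      intro c hc c' hc' h
      rw [Finset.mem_coe, hDF] at hc hc'
      exact mds_unique hP (show (0 : Fin 4) ≠ 1 by decide) hc hc'
        (Prod.ext_iff.mp h).1 (Prod.ext_iff.mp h).2
    rwa [card_univ, Fintype.card_prod, ← sq] at h1
  have hq1 : 1 ≤ Fintype.card F := Fintype.card_pos
  have hlt : B.card < Fintype.card (Fin 4 → F) := by
    rw [Fintype.card_fun, Fintype.card_fin]
    have h2 : DF.card * (4 * (Fintype.card F - 1) + 1) ≤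
        Fintype.card F ^ 2 * (4 * Fintype.card F - 3) := by
      have : 4 * (Fintype.card F - 1) + 1 = 4 * Fintype.card F - 3 := by omega
      rw [this]
      exact Nat.mul_le_mul_right _ hDFcard
    have h3 : Fintype.card F ^ 2 * (4 * Fintype.card F - 3) < Fintype.card F ^ 4 := by
      have hmul : 4 * Fintype.card F ≤ Fintype.card F * Fintype.card F :=
        Nat.mul_le_mul_right _ hq
      have hsq : Fintype.card F ^ 2 = Fintype.card F * Fintype.card F := sq (Fintype.card F)
      have h4 : 4 * Fintype.card F - 3 < Fintype.card F ^ 2 := by omega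
      calc Fintype.card F ^ 2 * (4 * Fintype.card F - 3)
          < Fintype.card F ^ 2 * Fintype.card F ^ 2 :=
            (Nat.mul_lt_mul_left (by positivity)).mpr h4
      _ = Fintype.card F ^ 4 := by ring
    omega
  obtain ⟨x, hx⟩ : ∃ x : Fin 4 → F, x ∉ B := by
    by_contra h
    push_neg at h
    have hsub : (univ : Finset (Fin 4 → F)) ⊆ B := fun y _ => h y
    have := Finset.card_le_card hsub
    rw [card_univ] at this
    omega
  refine ⟨x, ?_⟩
  have hle2 := mds_distToCode_le_two hP x
  rcases Nat.lt_or_ge (distToCode D x) 2 with hlt2 | hge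
  · exfalso
    obtain ⟨c, hc, hdc⟩ := distToCode_exists ⟨0, hD0⟩ x
    have hdc1 : hammingDist x c ≤ 1 := by omega
    apply hx
    rw [hB_def]
    rw [Finset.mem_biUnion]
    refine ⟨c, (hDF c).mpr hc, ?_⟩
    interval_cases hd : hammingDist x c
    · rw [hammingDist_eq_zero] at hd
      rw [hd]
      exact Finset.mem_insert_self _ _
    · rw [hammingDist_comm] at hd
      obtain ⟨i, hne, hupd⟩ := eq_update_of_dist_one hd
      refine Finset.mem_insert_of_mem ?_
      rw [Finset.mem_image]
      exact ⟨(i, x i), by simp [hne], hupd.symm⟩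
  · omega

lemma mds_minDist (hP : MDS4 D) (hD0 : (0 : Fin 4 → F) ∈ D) : minDist D = 3 := by
  obtain ⟨c, hc, h0, h1⟩ := mds_exists hP (show (0 : Fin 4) ≠ 1 by decide) (0 : F) 1
  have hcne : c ≠ 0 := by
    intro h
    rw [h] at h1
    simp at h1
  have hge := mds_dist_ge hP hD0 hc (Ne.symm hcne)
  have hle : hammingDist (0 : Fin 4 → F) c ≤ 3 :=
    dist_le_three_of_agree (i := 0) (by simpa using h0.symm)
  refine le_antisymm (Nat.sInf_le ⟨0, hD0, c, hc, Ne.symm hcne, by omega⟩) ?_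
  refine le_csInf ⟨hammingDist (0 : Fin 4 → F) c, 0, hD0, c, hc, Ne.symm hcne, rfl⟩ ?_
  rintro d ⟨u, hu, w, hw, huw, rfl⟩
  exact mds_dist_ge hP hu hw huw

lemma mds_antipodal (hP : MDS4 D) (hD0 : (0 : Fin 4 → F) ∈ D)
    (hq : 4 ≤ Fintype.card F) : IsAntipodal D := by
  classical
  set DF := (Set.toFinite D).toFinset with hDF_def
  have hDF : ∀ c, c ∈ DF ↔ c ∈ D := fun c => Set.Finite.mem_toFinset _
  have hq2 : Fintype.card F ^ 2 ≤ DF.card := by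
    have hgex : ∀ uv : F × F, ∃ c, c ∈ D ∧ c 0 = uv.1 ∧ c 1 = uv.2 := by
      intro uv
      obtain ⟨c, hc, h1, h2⟩ := mds_exists hP (show (0 : Fin 4) ≠ 1 by decide) uv.1 uv.2
      exact ⟨c, hc, h1, h2⟩
    choose g hgD hg0 hg1 using hgex
    have h1 : (univ : Finset (F × F)).card ≤ DF.card := by
      refine Finset.card_le_card_of_injOn g (fun uv _ => (hDF _).mpr (hgD uv)) ?_
      intro uv _ uv' _ h
      have e0 : uv.1 = uv'.1 := by rw [← hg0 uv, ← hg0 uv', h]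
      have e1 : uv.2 = uv'.2 := by rw [← hg1 uv, ← hg1 uv', h]
      exact Prod.ext e0 e1
    rwa [card_univ, Fintype.card_prod, ← sq] at h1
  have hσ : ∀ i : Fin 4, ∃ s : Fin 4, s ≠ i := by decide
  choose σ hσne using hσ
  set Z := DF.filter (fun c => ∃ i, c i = 0) with hZ_def
  have hZsub : Z ⊆ insert 0 ((univ : Finset (Fin 4)).biUnion
      fun i => DF.filter (fun c => c i = 0 ∧ c ≠ 0)) := by
    intro c hc
    rw [hZ_def, Finset.mem_filter] at hc
    obtain ⟨hcD, i, hi⟩ := hc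
    rcases eq_or_ne c 0 with rfl | hcne
    · exact Finset.mem_insert_self _ _
    · refine Finset.mem_insert_of_mem ?_
      rw [Finset.mem_biUnion]
      exact ⟨i, mem_univ i, Finset.mem_filter.mpr ⟨hcD, hi, hcne⟩⟩
  have hzero_card : ((univ : Finset F).filter (fun v => v ≠ 0)).card =
      Fintype.card F - 1 := by
    have : (univ : Finset F).filter (fun v => v ≠ 0) = univ.erase 0 := by
      ext v; simp [Finset.mem_erase, And.comm]
    rw [this, Finset.card_erase_of_mem (mem_univ _), card_univ]
  have hfib : ∀ i : Fin 4, (DF.filter (fun c => c i = 0 ∧ c ≠ 0)).card ≤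
      Fintype.card F - 1 := by
    intro i
    rw [← hzero_card]
    refine Finset.card_le_card_of_injOn (fun c => c (σ i)) ?_ ?_
    · intro c hc
      rw [Finset.mem_coe, Finset.mem_filter] at hc
      obtain ⟨hcD, hci, hcne⟩ := hc
      simp only [mem_coe, mem_filter, mem_univ, true_and]
      intro h
      exact hcne (mds_unique hP (hσne i) ((hDF c).mp hcD) hD0 (by simpa using h)
        (by simpa using hci))
    · intro c hc c' hc' h
      simp only [Finset.mem_coe, Finset.mem_filter] at hc hc'
      exact mds_unique hP (Ne.symm (hσne i)) ((hDF c).mp hc.1) ((hDF c').mp hc'.1)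
        (by rw [hc.2.1, hc'.2.1]) h
  have hZcard : Z.card ≤ 1 + 4 * (Fintype.card F - 1) := by
    refine le_trans (Finset.card_le_card hZsub) ?_
    refine le_trans (Finset.card_insert_le _ _) ?_
    have hbu := Finset.card_biUnion_le (s := (univ : Finset (Fin 4)))
      (t := fun i => DF.filter (fun c => c i = 0 ∧ c ≠ 0))
    have hsum : ∑ i : Fin 4, (DF.filter (fun c => c i = 0 ∧ c ≠ 0)).card ≤
        4 * (Fintype.card F - 1) := by
      calc ∑ i : Fin 4, (DF.filter (fun c => c i = 0 ∧ c ≠ 0)).card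
          ≤ ∑ _i : Fin 4, (Fintype.card F - 1) :=
            Finset.sum_le_sum fun i _ => hfib i
        _ = 4 * (Fintype.card F - 1) := by simp [mul_comm]
    rw [Nat.add_comm]
    exact Nat.add_le_add_left (le_trans hbu hsum) 1
  have hZlt : Z.card < DF.card := by
    have hmul : 4 * Fintype.card F ≤ Fintype.card F * Fintype.card F :=
      Nat.mul_le_mul_right _ hq
    have hsq : Fintype.card F ^ 2 = Fintype.card F * Fintype.card F := sq (Fintype.card F)
    have h1 : 1 + 4 * (Fintype.card F - 1) < Fintype.card F ^ 2 := by omega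
    exact lt_of_le_of_lt hZcard (lt_of_lt_of_le h1 hq2)
  have hne : (DF \ Z).Nonempty := by
    rw [← Finset.card_pos, Finset.card_sdiff_of_subset (Finset.filter_subset _ _)]
    exact Nat.sub_pos_of_lt hZlt
  obtain ⟨c, hc⟩ := hne
  rw [Finset.mem_sdiff] at hc
  obtain ⟨hcDF, hcZ⟩ := hc
  have hall : ∀ i, c i ≠ 0 := by
    intro i hi
    exact hcZ (Finset.mem_filter.mpr ⟨hcDF, i, hi⟩)
  refine ⟨c, (hDF c).mp hcDF, ?_⟩
  have : (univ : Finset (Fin 4)).filter (fun i => c i ≠ 0) = univ :=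
    Finset.filter_true_of_mem fun i _ => hall i
  show ((univ : Finset (Fin 4)).filter (fun i => c i ≠ 0)).card = _
  rw [this, card_univ]

lemma mds_covering (hP : MDS4 D) (hD0 : (0 : Fin 4 → F) ∈ D)
    (hq : 4 ≤ Fintype.card F) : coveringRadius D = 2 := by
  obtain ⟨x2, hx2⟩ := exists_dist_two hP hD0 hq
  have hbdd : BddAbove {d : ℕ | ∃ x : Fin 4 → F, distToCode D x = d} := by
    refine ⟨2, ?_⟩
    rintro d ⟨x, rfl⟩
    exact mds_distToCode_le_two hP x
  refine le_antisymm (csSup_le ⟨2, x2, hx2⟩ ?_) (le_csSup hbdd ⟨x2, hx2⟩)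
  rintro d ⟨x, rfl⟩
  exact mds_distToCode_le_two hP x

lemma mds_hin (hP : MDS4 D) (hD0 : (0 : Fin 4 → F) ∈ D)
    (hq : 4 ≤ Fintype.card F) :
    HasIntersectionNumbers D
      (fun l => if l = 0 then 4 * (Fintype.card F - 1)
        else if l = 1 then 3 * (Fintype.card F - 3) else 0)
      (fun l => if l = 1 then 1 else if l = 2 then 12 else 0) := by
  intro l x hx
  have hle2 : l ≤ 2 := hx ▸ mds_distToCode_le_two hP x
  have hne : D.Nonempty := ⟨0, hD0⟩
  interval_cases l
  · constructor
    · exact count_b0 hP ((distToCode_eq_zero_iff hne x).mp hx)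
    · have hempty : {y : Fin 4 → F | hammingDist x y = 1 ∧ distToCode D y + 1 = 0} = ∅ := by
        ext y; simp
      rw [hempty]
      simp
  · constructor
    · exact count_b1 hP hD0 hx
    · have hsets : {y : Fin 4 → F | hammingDist x y = 1 ∧ distToCode D y + 1 = 1} =
          {y : Fin 4 → F | hammingDist x y = 1 ∧ distToCode D y = 0} := by
        ext y
        constructor
        · rintro ⟨h1, h2⟩; exact ⟨h1, by omega⟩
        · rintro ⟨h1, h2⟩; exact ⟨h1, by omega⟩
      rw [hsets]
      exact count_c1 hP hD0 hx
  · constructor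
    · have hempty : {y : Fin 4 → F | hammingDist x y = 1 ∧ distToCode D y = 2 + 1} = ∅ := by
        ext y
        simp only [Set.mem_setOf_eq, Set.mem_empty_iff_false, iff_false, not_and]
        intro _
        have := mds_distToCode_le_two hP y
        omega
      rw [hempty]
      simp
    · have hsets : {y : Fin 4 → F | hammingDist x y = 1 ∧ distToCode D y + 1 = 2} =
          {y : Fin 4 → F | hammingDist x y = 1 ∧ distToCode D y = 1} := by
        ext y
        constructor
        · rintro ⟨h1, h2⟩; exact ⟨h1, by omega⟩
        · rintro ⟨h1, h2⟩; exact ⟨h1, by omega⟩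
      rw [hsets]
      exact count_c2 hP hD0 hx

theorem mds_package (hP : MDS4 D) (hD0 : (0 : Fin 4 → F) ∈ D)
    (hq : 4 ≤ Fintype.card F) :
    minDist D = 3 ∧ IsAntipodal D ∧ IsCompletelyRegular D ∧ coveringRadius D = 2 ∧
    ∀ b c : ℕ → ℕ, HasIntersectionNumbers D b c →
      b 0 = 4 * (Fintype.card F - 1) ∧ b 1 = 3 * (Fintype.card F - 3) ∧
      c 1 = 1 ∧ c 2 = 12 := by
  have hne : D.Nonempty := ⟨0, hD0⟩
  refine ⟨mds_minDist hP hD0, mds_antipodal hP hD0 hq,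
    ⟨_, _, mds_hin hP hD0 hq⟩, mds_covering hP hD0 hq, ?_⟩
  intro b c h
  obtain ⟨x1, hx1⟩ := exists_dist_one hP hD0
  obtain ⟨x2, hx2⟩ := exists_dist_two hP hD0 hq
  have h0 := h 0 0 ((distToCode_eq_zero_iff hne 0).mpr hD0)
  have h1 := h 1 x1 hx1
  have h2 := h 2 x2 hx2
  refine ⟨?_, ?_, ?_, ?_⟩
  · rw [← h0.1]
    exact count_b0 hP hD0
  · rw [← h1.1]
    exact count_b1 hP hD0 hx1
  · rw [← h1.2]
    have := count_c1 hP hD0 hx1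
    have hsets : {y : Fin 4 → F | hammingDist x1 y = 1 ∧ distToCode D y + 1 = 1} =
        {y : Fin 4 → F | hammingDist x1 y = 1 ∧ distToCode D y = 0} := by
      ext y
      constructor
      · rintro ⟨ha, hb⟩; exact ⟨ha, by omega⟩
      · rintro ⟨ha, hb⟩; exact ⟨ha, by omega⟩
    rw [hsets, this]
  · rw [← h2.2]
    have := count_c2 hP hD0 hx2
    have hsets : {y : Fin 4 → F | hammingDist x2 y = 1 ∧ distToCode D y + 1 = 2} =
        {y : Fin 4 → F | hammingDist x2 y = 1 ∧ distToCode D y = 1} := by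
      ext y
      constructor
      · rintro ⟨ha, hb⟩; exact ⟨ha, by omega⟩
      · rintro ⟨ha, hb⟩; exact ⟨ha, by omega⟩
    rw [hsets, this]

end Generic6
section Inst

open Finset Function

set_option linter.unusedSectionVars false
set_option maxHeartbeats 1000000

variable {F : Type*} [Field F] [Fintype F] [DecidableEq F]

/-- Build the MDS property from uniqueness (two zero coordinates force zero), closure
under subtraction, and existence of interpolation at one fixed pair of coordinates. -/
lemma MDS4_of {D : Set (Fin 4 → F)} (h0 : (0 : Fin 4 → F) ∈ D)
    (huniq : ∀ x ∈ D, ∀ i j : Fin 4, i ≠ j → x i = 0 → x j = 0 → x = 0)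
    (hsub : ∀ x ∈ D, ∀ y ∈ D, x - y ∈ D)
    {i0 j0 : Fin 4} (hi0j0 : i0 ≠ j0)
    (hex : ∀ u v : F, ∃ c ∈ D, c i0 = u ∧ c j0 = v) : MDS4 D := by
  have huniq' : ∀ i j : Fin 4, i ≠ j → ∀ c ∈ D, ∀ c' ∈ D,
      c i = c' i → c j = c' j → c = c' := by
    intro i j hij c hc c' hc' h1 h2
    have hd := hsub c hc c' hc'
    have := huniq _ hd i j hij (by simp [sub_eq_zero, h1]) (by simp [sub_eq_zero, h2])
    exact sub_eq_zero.mp this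
  intro i j hij u v
  -- map (a, b) ↦ (w(a,b) i, w(a,b) j) is injective, hence surjective
  have hw : ∀ ab : F × F, ∃ c, c ∈ D ∧ c i0 = ab.1 ∧ c j0 = ab.2 := by
    intro ab
    obtain ⟨c, hc, h1, h2⟩ := hex ab.1 ab.2
    exact ⟨c, hc, h1, h2⟩
  choose w hwD hwi hwj using hw
  have hginj : Function.Injective (fun ab => (w ab i, w ab j)) := by
    intro ab ab' h
    have h1 : w ab i = w ab' i := (Prod.ext_iff.mp h).1
    have h2 : w ab j = w ab' j := (Prod.ext_iff.mp h).2
    have := huniq' i j hij _ (hwD ab) _ (hwD ab') h1 h2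
    have e1 : ab.1 = ab'.1 := by rw [← hwi ab, this, hwi ab']
    have e2 : ab.2 = ab'.2 := by rw [← hwj ab, this, hwj ab']
    exact Prod.ext e1 e2
  obtain ⟨ab, hab⟩ := Finite.injective_iff_surjective.mp hginj (u, v)
  have hab' : (w ab i, w ab j) = (u, v) := hab
  have habi : w ab i = u := (Prod.ext_iff.mp hab').1
  have habj : w ab j = v := (Prod.ext_iff.mp hab').2
  refine ⟨w ab, ⟨hwD ab, habi, habj⟩, ?_⟩
  rintro c ⟨hc, h1, h2⟩
  exact huniq' i j hij c hc _ (hwD ab) (by rw [h1, habi]) (by rw [h2, habj])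

lemma finrank_span_pair {v w : Fin 4 → F}
    (h : ∀ s t : F, s • v + t • w = 0 → s = 0 ∧ t = 0) :
    Module.finrank F (Submodule.span F ({v, w} : Set (Fin 4 → F))) = 2 := by
  have hli : LinearIndependent F ![v, w] := LinearIndependent.pair_iff.mpr h
  have hr : Set.range ![v, w] = {v, w} := by
    ext z
    simp only [Set.mem_range, Set.mem_insert_iff, Set.mem_singleton_iff]
    constructor
    · rintro ⟨k, rfl⟩
      rcases Fin.exists_fin_two.mp ⟨k, rfl⟩ with h | h
      · fin_cases k
        · left; rfl
        · right; rfl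
      · fin_cases k
        · left; rfl
        · right; rfl
    · rintro (rfl | rfl)
      · exact ⟨0, rfl⟩
      · exact ⟨1, rfl⟩
  rw [← hr, finrank_span_eq_card hli, Fintype.card_fin]

end Inst
section Final

open Finset Function

set_option linter.unusedSectionVars false
set_option maxHeartbeats 1600000

variable {F : Type*} [Field F] [Fintype F] [DecidableEq F]

lemma funext4 {x y : Fin 4 → F} (h0 : x 0 = y 0) (h1 : x 1 = y 1) (h2 : x 2 = y 2)
    (h3 : x 3 = y 3) : x = y := by
  funext k
  fin_cases k
  exacts [h0, h1, h2, h3]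

lemma pair_cases : ∀ i j : Fin 4, i ≠ j →
    (i = 0 ∧ j = 1) ∨ (i = 1 ∧ j = 0) ∨ (i = 0 ∧ j = 2) ∨ (i = 2 ∧ j = 0) ∨
    (i = 0 ∧ j = 3) ∨ (i = 3 ∧ j = 0) ∨ (i = 1 ∧ j = 2) ∨ (i = 2 ∧ j = 1) ∨
    (i = 1 ∧ j = 3) ∨ (i = 3 ∧ j = 1) ∨ (i = 2 ∧ j = 3) ∨ (i = 3 ∧ j = 2) := by
  decide

theorem antipodal_4_2_3_code'
    (hq : 4 ≤ Fintype.card F) (ξi ξj : F) (hij : ξi ≠ ξj)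
    (hi0 : ξi ≠ 0) (hi1 : ξi ≠ 1) (hj0 : ξj ≠ 0) (hj1 : ξj ≠ 1)
    (hsum : ξi + ξj + 1 = 0)
    (C : Submodule F (Fin 4 → F))
    (hC : ∀ x : Fin 4 → F, x ∈ C ↔
      (x 0 + x 1 + x 2 + x 3 = 0 ∧ x 1 + ξi * x 2 + ξj * x 3 = 0)) :
    (Module.finrank F C = 2 ∧
      minDist (C : Set (Fin 4 → F)) = 3 ∧
      IsAntipodal (C : Set (Fin 4 → F)) ∧
      IsCompletelyRegular (C : Set (Fin 4 → F)) ∧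
      coveringRadius (C : Set (Fin 4 → F)) = 2 ∧
      ∀ b c : ℕ → ℕ, HasIntersectionNumbers (C : Set (Fin 4 → F)) b c →
        b 0 = 4 * (Fintype.card F - 1) ∧ b 1 = 3 * (Fintype.card F - 3) ∧
        c 1 = 1 ∧ c 2 = 12) ∧
    (dualSet (C : Set (Fin 4 → F)) =
      (Submodule.span F {(![1, 1, 1, 1] : Fin 4 → F), ![0, 1, ξi, ξj]} :
        Submodule F (Fin 4 → F))) ∧
    (Module.finrank F
        (Submodule.span F {(![1, 1, 1, 1] : Fin 4 → F), ![0, 1, ξi, ξj]}) = 2 ∧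
      minDist (dualSet (C : Set (Fin 4 → F))) = 3 ∧
      IsAntipodal (dualSet (C : Set (Fin 4 → F))) ∧
      IsCompletelyRegular (dualSet (C : Set (Fin 4 → F))) ∧
      coveringRadius (dualSet (C : Set (Fin 4 → F))) = 2 ∧
      ∀ b c : ℕ → ℕ, HasIntersectionNumbers (dualSet (C : Set (Fin 4 → F))) b c →
        b 0 = 4 * (Fintype.card F - 1) ∧ b 1 = 3 * (Fintype.card F - 3) ∧
        c 1 = 1 ∧ c 2 = 12) ∧
    ((∃ r : ℕ, Fintype.card F = 2 ^ r) →
      (C : Set (Fin 4 → F)) = dualSet (C : Set (Fin 4 → F))) := by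
  have hδ : ξi - ξj ≠ 0 := sub_ne_zero.mpr hij
  have hi1' : ξi - 1 ≠ 0 := sub_ne_zero.mpr hi1
  have hj1' : ξj - 1 ≠ 0 := sub_ne_zero.mpr hj1
  -- uniqueness for C
  have hfinC : ∀ x ∈ C, x 2 = 0 → x 3 = 0 → x = 0 := by
    intro x hx h2 h3
    obtain ⟨e0, e1⟩ := (hC x).mp hx
    have hx1 : x 1 = 0 := by linear_combination e1 - ξi * h2 - ξj * h3
    have hx0 : x 0 = 0 := by linear_combination e0 - hx1 - h2 - h3
    exact funext4 hx0 hx1 h2 h3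
  have huniqC : ∀ x ∈ (C : Set (Fin 4 → F)), ∀ i j : Fin 4, i ≠ j →
      x i = 0 → x j = 0 → x = 0 := by
    intro x hx i j hij' h1 h2
    rw [SetLike.mem_coe] at hx
    obtain ⟨e0, e1⟩ := (hC x).mp hx
    -- helpers for the six essential pairs
    have case01 : x 0 = 0 → x 1 = 0 → x = 0 := by
      intro ha hb
      have hc2 : (ξi - ξj) * x 2 = 0 := by
        linear_combination e1 - ξj * e0 + ξj * ha - (1 - ξj) * hb
      have hc2' : x 2 = 0 := (mul_eq_zero.mp hc2).resolve_left hδ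
      have hc3 : (ξi - ξj) * x 3 = 0 := by
        linear_combination ξi * e0 - e1 - ξi * ha - (ξi - 1) * hb
      exact hfinC x hx hc2' ((mul_eq_zero.mp hc3).resolve_left hδ)
    have case02 : x 0 = 0 → x 2 = 0 → x = 0 := by
      intro ha hb
      have hc3 : (ξj - 1) * x 3 = 0 := by
        linear_combination e1 - e0 + ha - (ξi - 1) * hb
      exact hfinC x hx hb ((mul_eq_zero.mp hc3).resolve_left hj1')
    have case03 : x 0 = 0 → x 3 = 0 → x = 0 := by
      intro ha hb
      have hc2 : (ξi - 1) * x 2 = 0 := by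
        linear_combination e1 - e0 + ha - (ξj - 1) * hb
      exact hfinC x hx ((mul_eq_zero.mp hc2).resolve_left hi1') hb
    have case12 : x 1 = 0 → x 2 = 0 → x = 0 := by
      intro ha hb
      have hc3 : ξj * x 3 = 0 := by linear_combination e1 - ha - ξi * hb
      exact hfinC x hx hb ((mul_eq_zero.mp hc3).resolve_left hj0)
    have case13 : x 1 = 0 → x 3 = 0 → x = 0 := by
      intro ha hb
      have hc2 : ξi * x 2 = 0 := by linear_combination e1 - ha - ξj * hb
      exact hfinC x hx ((mul_eq_zero.mp hc2).resolve_left hi0) hb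
    rcases pair_cases i j hij' with ⟨rfl, rfl⟩ | ⟨rfl, rfl⟩ | ⟨rfl, rfl⟩ | ⟨rfl, rfl⟩ |
      ⟨rfl, rfl⟩ | ⟨rfl, rfl⟩ | ⟨rfl, rfl⟩ | ⟨rfl, rfl⟩ | ⟨rfl, rfl⟩ | ⟨rfl, rfl⟩ |
      ⟨rfl, rfl⟩ | ⟨rfl, rfl⟩
    · exact case01 h1 h2
    · exact case01 h2 h1
    · exact case02 h1 h2
    · exact case02 h2 h1
    · exact case03 h1 h2
    · exact case03 h2 h1
    · exact case12 h1 h2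
    · exact case12 h2 h1
    · exact case13 h1 h2
    · exact case13 h2 h1
    · exact hfinC x hx h1 h2
    · exact hfinC x hx h2 h1
  -- interpolation at coordinates (2,3) for C
  have hexC : ∀ u v : F, ∃ c ∈ (C : Set (Fin 4 → F)), c 2 = u ∧ c 3 = v := by
    intro u v
    refine ⟨![(ξi - 1) * u + (ξj - 1) * v, -(ξi * u + ξj * v), u, v], ?_, by simp, by simp⟩
    rw [SetLike.mem_coe, hC]
    constructor
    · simp only [Matrix.cons_val_zero, Matrix.cons_val_one, Matrix.head_cons,
        Matrix.cons_val_two, Matrix.cons_val_three, Matrix.tail_cons]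
      ring
    · simp only [Matrix.cons_val_zero, Matrix.cons_val_one, Matrix.head_cons,
        Matrix.cons_val_two, Matrix.cons_val_three, Matrix.tail_cons]
      ring
  have hPC : MDS4 (C : Set (Fin 4 → F)) :=
    MDS4_of (Submodule.zero_mem C) huniqC
      (fun x hx y hy => Submodule.sub_mem C hx hy) (show (2 : Fin 4) ≠ 3 by decide) hexC
  -- two explicit codewords of C
  set g1c : Fin 4 → F := ![ξi - 1, -ξi, 1, 0] with hg1c_def
  set g2c : Fin 4 → F := ![ξj - 1, -ξj, 0, 1] with hg2c_def
  have hg1 : g1c ∈ C := by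
    rw [hC]
    constructor
    · simp only [hg1c_def, Matrix.cons_val_zero, Matrix.cons_val_one, Matrix.head_cons,
        Matrix.cons_val_two, Matrix.cons_val_three, Matrix.tail_cons]
      ring
    · simp only [hg1c_def, Matrix.cons_val_zero, Matrix.cons_val_one, Matrix.head_cons,
        Matrix.cons_val_two, Matrix.cons_val_three, Matrix.tail_cons]
      ring
  have hg2 : g2c ∈ C := by
    rw [hC]
    constructor
    · simp only [hg2c_def, Matrix.cons_val_zero, Matrix.cons_val_one, Matrix.head_cons,
        Matrix.cons_val_two, Matrix.cons_val_three, Matrix.tail_cons]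
      ring
    · simp only [hg2c_def, Matrix.cons_val_zero, Matrix.cons_val_one, Matrix.head_cons,
        Matrix.cons_val_two, Matrix.cons_val_three, Matrix.tail_cons]
      ring
  set v1 : Fin 4 → F := ![1, 1, 1, 1] with hv1_def
  set v2 : Fin 4 → F := ![0, 1, ξi, ξj] with hv2_def
  -- expanded orthogonality equations for y ∈ dualSet C
  have hE : ∀ y ∈ dualSet (C : Set (Fin 4 → F)),
      ((ξi - 1) * y 0 + (-ξi) * y 1 + 1 * y 2 + 0 * y 3 = 0) ∧
      ((ξj - 1) * y 0 + (-ξj) * y 1 + 0 * y 2 + 1 * y 3 = 0) := by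
    intro y hy
    have E1 := hy g1c hg1
    have E2 := hy g2c hg2
    rw [Fin.sum_univ_four] at E1 E2
    simp only [hg1c_def, hg2c_def, Matrix.cons_val_zero, Matrix.cons_val_one,
      Matrix.head_cons, Matrix.cons_val_two, Matrix.cons_val_three,
      Matrix.tail_cons] at E1 E2
    exact ⟨E1, E2⟩
  -- dual description
  have hdual : dualSet (C : Set (Fin 4 → F)) =
      (Submodule.span F ({v1, v2} : Set (Fin 4 → F)) : Set (Fin 4 → F)) := by
    ext y
    constructor
    · intro hy
      obtain ⟨E1, E2⟩ := hE y hy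
      rw [SetLike.mem_coe, Submodule.mem_span_pair]
      refine ⟨y 0, y 1 - y 0, ?_⟩
      refine funext4 ?_ ?_ ?_ ?_ <;>
        simp only [hv1_def, hv2_def, Pi.add_apply, Pi.smul_apply, smul_eq_mul,
          Matrix.cons_val_zero, Matrix.cons_val_one, Matrix.head_cons,
          Matrix.cons_val_two, Matrix.cons_val_three, Matrix.tail_cons]
      · ring
      · ring
      · linear_combination -E1
      · linear_combination -E2
    · intro hy
      rw [SetLike.mem_coe, Submodule.mem_span_pair] at hy
      obtain ⟨a, b, rfl⟩ := hy
      intro x hx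
      rw [SetLike.mem_coe] at hx
      obtain ⟨e0, e1⟩ := (hC x).mp hx
      rw [Fin.sum_univ_four]
      simp only [hv1_def, hv2_def, Pi.add_apply, Pi.smul_apply, smul_eq_mul,
        Matrix.cons_val_zero, Matrix.cons_val_one, Matrix.head_cons,
        Matrix.cons_val_two, Matrix.cons_val_three, Matrix.tail_cons]
      linear_combination a * e0 + b * e1
  -- C as a span
  have hCspan : C = Submodule.span F ({g1c, g2c} : Set (Fin 4 → F)) := by
    refine le_antisymm ?_ ?_
    · intro x hx
      obtain ⟨e0, e1⟩ := (hC x).mp hx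
      rw [Submodule.mem_span_pair]
      refine ⟨x 2, x 3, ?_⟩
      refine funext4 ?_ ?_ ?_ ?_ <;>
        simp only [hg1c_def, hg2c_def, Pi.add_apply, Pi.smul_apply, smul_eq_mul,
          Matrix.cons_val_zero, Matrix.cons_val_one, Matrix.head_cons,
          Matrix.cons_val_two, Matrix.cons_val_three, Matrix.tail_cons]
      · linear_combination e1 - e0
      · linear_combination -e1
      · ring
      · ring
    · rw [Submodule.span_le]
      rintro z (rfl | rfl)
      · exact hg1
      · exact hg2
  have hfrC : Module.finrank F C = 2 := by
    rw [hCspan]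
    refine finrank_span_pair ?_
    intro s t hst
    have h2 := congrFun hst 2
    have h3 := congrFun hst 3
    simp only [hg1c_def, hg2c_def, Pi.add_apply, Pi.smul_apply, smul_eq_mul,
      Matrix.cons_val_two, Matrix.cons_val_three, Matrix.tail_cons, Matrix.head_cons,
      Pi.zero_apply, mul_one, mul_zero, add_zero, zero_add] at h2 h3
    exact ⟨h2, h3⟩
  have hfrD : Module.finrank F
      (Submodule.span F ({v1, v2} : Set (Fin 4 → F))) = 2 := by
    refine finrank_span_pair ?_
    intro s t hst
    have h0 := congrFun hst 0
    have h1 := congrFun hst 1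
    simp only [hv1_def, hv2_def, Pi.add_apply, Pi.smul_apply, smul_eq_mul,
      Matrix.cons_val_zero, Matrix.cons_val_one, Matrix.head_cons,
      Pi.zero_apply, mul_one, mul_zero, add_zero, zero_add] at h0 h1
    constructor
    · exact h0
    · rw [h0] at h1
      simpa using h1
  -- MDS property for the dual
  have h0dual : (0 : Fin 4 → F) ∈ dualSet (C : Set (Fin 4 → F)) := by
    intro x hx
    simp
  have huniqD : ∀ y ∈ dualSet (C : Set (Fin 4 → F)), ∀ i j : Fin 4, i ≠ j →
      y i = 0 → y j = 0 → y = 0 := by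
    intro y hy i j hij' h1 h2
    obtain ⟨E1, E2⟩ := hE y hy
    have case01 : y 0 = 0 → y 1 = 0 → y = 0 := by
      intro ha hb
      have hc2 : y 2 = 0 := by linear_combination E1 - (ξi - 1) * ha + ξi * hb
      have hc3 : y 3 = 0 := by linear_combination E2 - (ξj - 1) * ha + ξj * hb
      exact funext4 ha hb hc2 hc3
    have case02 : y 0 = 0 → y 2 = 0 → y = 0 := by
      intro ha hb
      have hc1 : ξi * y 1 = 0 := by linear_combination -E1 + (ξi - 1) * ha + hb
      have hc1' : y 1 = 0 := (mul_eq_zero.mp hc1).resolve_left hi0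
      exact case01 ha hc1'
    have case03 : y 0 = 0 → y 3 = 0 → y = 0 := by
      intro ha hb
      have hc1 : ξj * y 1 = 0 := by linear_combination -E2 + (ξj - 1) * ha + hb
      exact case01 ha ((mul_eq_zero.mp hc1).resolve_left hj0)
    have case12 : y 1 = 0 → y 2 = 0 → y = 0 := by
      intro ha hb
      have hc0 : (ξi - 1) * y 0 = 0 := by linear_combination E1 + ξi * ha - hb
      exact case01 ((mul_eq_zero.mp hc0).resolve_left hi1') ha
    have case13 : y 1 = 0 → y 3 = 0 → y = 0 := by
      intro ha hb
      have hc0 : (ξj - 1) * y 0 = 0 := by linear_combination E2 + ξj * ha - hb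
      exact case01 ((mul_eq_zero.mp hc0).resolve_left hj1') ha
    have case23 : y 2 = 0 → y 3 = 0 → y = 0 := by
      intro ha hb
      have hc : (ξi - ξj) * (y 0 - y 1) = 0 := by
        linear_combination E1 - E2 - ha + hb
      have hc' : y 0 = y 1 := sub_eq_zero.mp ((mul_eq_zero.mp hc).resolve_left hδ)
      have ha0 : y 0 = 0 := by linear_combination -E1 + ha + ξi * hc'
      have hb0 : y 1 = 0 := by rw [← hc']; exact ha0
      exact funext4 ha0 hb0 ha hb
    rcases pair_cases i j hij' with ⟨rfl, rfl⟩ | ⟨rfl, rfl⟩ | ⟨rfl, rfl⟩ | ⟨rfl, rfl⟩ |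
      ⟨rfl, rfl⟩ | ⟨rfl, rfl⟩ | ⟨rfl, rfl⟩ | ⟨rfl, rfl⟩ | ⟨rfl, rfl⟩ | ⟨rfl, rfl⟩ |
      ⟨rfl, rfl⟩ | ⟨rfl, rfl⟩
    · exact case01 h1 h2
    · exact case01 h2 h1
    · exact case02 h1 h2
    · exact case02 h2 h1
    · exact case03 h1 h2
    · exact case03 h2 h1
    · exact case12 h1 h2
    · exact case12 h2 h1
    · exact case13 h1 h2
    · exact case13 h2 h1
    · exact case23 h1 h2
    · exact case23 h2 h1
  have hsubD : ∀ y ∈ dualSet (C : Set (Fin 4 → F)), ∀ z ∈ dualSet (C : Set (Fin 4 → F)),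
      y - z ∈ dualSet (C : Set (Fin 4 → F)) := by
    intro y hy z hz x hx
    have h1 := hy x hx
    have h2 := hz x hx
    simp only [Pi.sub_apply, mul_sub, Finset.sum_sub_distrib, h1, h2, sub_zero]
  have hexD : ∀ u v : F, ∃ c ∈ dualSet (C : Set (Fin 4 → F)), c 0 = u ∧ c 1 = v := by
    intro u v
    refine ⟨![u, v, ξi * v - (ξi - 1) * u, ξj * v - (ξj - 1) * u], ?_, by simp, by simp⟩
    intro x hx
    rw [SetLike.mem_coe] at hx
    obtain ⟨e0, e1⟩ := (hC x).mp hx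
    rw [Fin.sum_univ_four]
    simp only [Matrix.cons_val_zero, Matrix.cons_val_one, Matrix.head_cons,
      Matrix.cons_val_two, Matrix.cons_val_three, Matrix.tail_cons]
    linear_combination u * e0 + (v - u) * e1
  have hPD : MDS4 (dualSet (C : Set (Fin 4 → F))) :=
    MDS4_of h0dual huniqD hsubD (show (0 : Fin 4) ≠ 1 by decide) hexD
  -- packages
  obtain ⟨hmd1, ha1, hcr1, hcov1, hbc1⟩ := mds_package hPC (Submodule.zero_mem C) hq
  obtain ⟨hmd2, ha2, hcr2, hcov2, hbc2⟩ := mds_package hPD h0dual hq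
  refine ⟨⟨hfrC, hmd1, ha1, hcr1, hcov1, hbc1⟩, hdual, ⟨hfrD, hmd2, ha2, hcr2, hcov2, hbc2⟩, ?_⟩
  -- self-duality in characteristic 2
  rintro ⟨r, hr⟩
  have hr0 : r ≠ 0 := by
    rintro rfl
    rw [pow_zero] at hr
    omega
  have htwo : (2 : F) = 0 := by
    have hcast := FiniteField.cast_card_eq_zero F
    rw [hr] at hcast
    push_cast at hcast
    exact pow_eq_zero_iff hr0 |>.mp hcast
  have hv1C : v1 ∈ C := by
    rw [hC]
    constructor
    · simp only [hv1_def, Matrix.cons_val_zero, Matrix.cons_val_one, Matrix.head_cons,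
        Matrix.cons_val_two, Matrix.cons_val_three, Matrix.tail_cons]
      linear_combination (1 + 1) * htwo
    · simp only [hv1_def, Matrix.cons_val_zero, Matrix.cons_val_one, Matrix.head_cons,
        Matrix.cons_val_two, Matrix.cons_val_three, Matrix.tail_cons]
      linear_combination hsum
  have hv2C : v2 ∈ C := by
    rw [hC]
    constructor
    · simp only [hv2_def, Matrix.cons_val_zero, Matrix.cons_val_one, Matrix.head_cons,
        Matrix.cons_val_two, Matrix.cons_val_three, Matrix.tail_cons]
      linear_combination hsum
    · simp only [hv2_def, Matrix.cons_val_zero, Matrix.cons_val_one, Matrix.head_cons,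
        Matrix.cons_val_two, Matrix.cons_val_three, Matrix.tail_cons]
      linear_combination (ξi + ξj + 1) * hsum - (ξi * ξj + ξi + ξj) * htwo
  have hspan_le : Submodule.span F ({v1, v2} : Set (Fin 4 → F)) ≤ C := by
    rw [Submodule.span_le]
    rintro z (rfl | rfl)
    · exact hv1C
    · exact hv2C
  have hspan_eq : Submodule.span F ({v1, v2} : Set (Fin 4 → F)) = C := by
    apply Submodule.eq_of_le_of_finrank_le hspan_le
    rw [hfrC, hfrD]
  rw [hdual, ← hspan_eq]

end Final

/-- for `q ≥ 4` and distinct `ξᵢ, ξⱼ ∈ 𝔽_q \ {0,1}` with `ξᵢ + ξⱼ + 1 = 0`, the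
code `{x ∈ 𝔽_q⁴ : x₁+x₂+x₃+x₄ = 0, x₂+ξᵢx₃+ξⱼx₄ = 0}` is a linear antipodal `[4,2,3]_q`
completely regular code with covering radius 2 and intersection array `(4(q-1), 3(q-3); 1, 12)`;
the same holds for its dual, which is spanned by `(1,1,1,1)` and `(0,1,ξᵢ,ξⱼ)`; and if
`q = 2^r`, then `C` is self-dual. -/
theorem antipodal_4_2_3_code
    {F : Type*} [Field F] [Fintype F] [DecidableEq F]
    (hq : 4 ≤ Fintype.card F) (ξi ξj : F) (hij : ξi ≠ ξj)
    (hi0 : ξi ≠ 0) (hi1 : ξi ≠ 1) (hj0 : ξj ≠ 0) (hj1 : ξj ≠ 1)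
    (hsum : ξi + ξj + 1 = 0)
    (C : Submodule F (Fin 4 → F))
    (hC : ∀ x : Fin 4 → F, x ∈ C ↔
      (x 0 + x 1 + x 2 + x 3 = 0 ∧ x 1 + ξi * x 2 + ξj * x 3 = 0)) :
    (Module.finrank F C = 2 ∧
      minDist (C : Set (Fin 4 → F)) = 3 ∧
      IsAntipodal (C : Set (Fin 4 → F)) ∧
      IsCompletelyRegular (C : Set (Fin 4 → F)) ∧
      coveringRadius (C : Set (Fin 4 → F)) = 2 ∧
      ∀ b c : ℕ → ℕ, HasIntersectionNumbers (C : Set (Fin 4 → F)) b c →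
        b 0 = 4 * (Fintype.card F - 1) ∧ b 1 = 3 * (Fintype.card F - 3) ∧
        c 1 = 1 ∧ c 2 = 12) ∧
    (dualSet (C : Set (Fin 4 → F)) =
      (Submodule.span F {(![1, 1, 1, 1] : Fin 4 → F), ![0, 1, ξi, ξj]} :
        Submodule F (Fin 4 → F))) ∧
    (Module.finrank F
        (Submodule.span F {(![1, 1, 1, 1] : Fin 4 → F), ![0, 1, ξi, ξj]}) = 2 ∧
      minDist (dualSet (C : Set (Fin 4 → F))) = 3 ∧
      IsAntipodal (dualSet (C : Set (Fin 4 → F))) ∧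
      IsCompletelyRegular (dualSet (C : Set (Fin 4 → F))) ∧
      coveringRadius (dualSet (C : Set (Fin 4 → F))) = 2 ∧
      ∀ b c : ℕ → ℕ, HasIntersectionNumbers (dualSet (C : Set (Fin 4 → F))) b c →
        b 0 = 4 * (Fintype.card F - 1) ∧ b 1 = 3 * (Fintype.card F - 3) ∧
        c 1 = 1 ∧ c 2 = 12) ∧
    ((∃ r : ℕ, Fintype.card F = 2 ^ r) →
      (C : Set (Fin 4 → F)) = dualSet (C : Set (Fin 4 → F))) := by
  exact antipodal_4_2_3_code' hq ξi ξj hij hi0 hi1 hj0 hj1 hsum C hC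
end
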